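/- arXiv:2510.23670 — 8 statements merged into one kernel-verified Lean document; each statement's English description precedes it below -/
import Mathlib

section
/- Let G be a finite simple graph and v a vertex of G. Then σ_1(G) = σ_1(G − v) + σ_1(G − N[v]) + Σ_{u ∈ N(v)} σ_0( G − (N(v) ∪ N(u)) ). -/
open scoped Classical
open Finset

noncomputable section

/-- The number of edges of `G` whose endpoints both lie in `S`. -/
def edgesIn {V : Type*} [Fintype V] (G : SimpleGraph V) (S : Finset V) : ℕ :=
  (G.edgeFinset.filter fun e => ∀ v ∈ e, v ∈ S).card

/-- The finset of `l`-nearly independent vertex sets of `G`: those vertex subsets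
inducing exactly `l` edges. -/
def nearlyIndep {V : Type*} [Fintype V] (G : SimpleGraph V) (l : ℕ) : Finset (Finset V) :=
  Finset.univ.filter fun S => edgesIn G S = l

/-- `σ_l(G)`: the number of `l`-nearly independent vertex sets of `G`. -/
def sigmaNI {V : Type*} [Fintype V] (G : SimpleGraph V) (l : ℕ) : ℕ :=
  (nearlyIndep G l).card

/-- `σ_l(G, k)`: the number of `l`-nearly independent vertex sets of `G` of cardinality `k`. -/
def sigmaNIk {V : Type*} [Fintype V] (G : SimpleGraph V) (l k : ℕ) : ℕ :=
  ((nearlyIndep G l).filter fun S => S.card = k).card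

/-- `S_l(G)`: the sum of the cardinalities of the `l`-nearly independent vertex sets of `G`. -/
def sumNI {V : Type*} [Fintype V] (G : SimpleGraph V) (l : ℕ) : ℕ :=
  ∑ S ∈ nearlyIndep G l, S.card

/-- `av_l(G)`: the average size of an `l`-nearly independent vertex set of `G`
(`0` if there are none). -/
def avNI {V : Type*} [Fintype V] (G : SimpleGraph V) (l : ℕ) : ℚ :=
  if sigmaNI G l = 0 then 0 else (sumNI G l : ℚ) / (sigmaNI G l : ℚ)

/-- `G − A`: the subgraph of `G` induced by the vertices not in `A`. -/
def deleteVerts {V : Type*} (G : SimpleGraph V) (A : Set V) : SimpleGraph ↥(Aᶜ) :=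
  G.induce Aᶜ

/-- For an edge `e = uv`, the set `N(u) ∪ N(v)`. -/
def nbhdUnion {V : Type*} (G : SimpleGraph V) : Sym2 V → Set V :=
  Sym2.lift ⟨fun u v => G.neighborSet u ∪ G.neighborSet v, fun u v => Set.union_comm _ _⟩

lemma edgesIn_empty {V : Type*} [Fintype V] (G : SimpleGraph V) : edgesIn G (∅ : Finset V) = 0 := by
  unfold edgesIn
  rw [Finset.card_eq_zero, Finset.filter_eq_empty_iff]
  intro e he
  induction e with
  | h a b =>
    simp only [not_forall]
    exact ⟨b, by simp⟩

lemma edgesIn_insert {V : Type*} [Fintype V] [DecidableEq V] (G : SimpleGraph V) {v : V} {T : Finset V}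
    (hv : v ∉ T) :
    edgesIn G (insert v T) = edgesIn G T + (T.filter (G.Adj v)).card := by
  unfold edgesIn
  rw [Finset.filter_congr_decidable, Finset.filter_congr_decidable]
  have hset : (G.edgeFinset.filter fun e => ∀ w ∈ e, w ∈ insert v T)
      = (G.edgeFinset.filter fun e => ∀ w ∈ e, w ∈ T)
        ∪ ((T.filter (G.Adj v)).image fun u => s(v,u)) := by
    ext e
    induction e with
    | h a b =>
      simp only [Finset.mem_filter, Finset.mem_union, Finset.mem_image, Sym2.mem_iff,
        Finset.mem_insert, SimpleGraph.mem_edgeFinset, SimpleGraph.mem_edgeSet]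
      constructor
      · rintro ⟨hab, h⟩
        have ha := h a (by simp); have hb := h b (by simp)
        rcases ha with rfl | ha
        · rcases hb with rfl | hb
          · exact absurd hab (G.irrefl)
          · exact Or.inr ⟨b, by simp [hb, hab], rfl⟩
        · rcases hb with rfl | hb
          · exact Or.inr ⟨a, by simp [ha, hab.symm], Sym2.eq_swap⟩
          · exact Or.inl ⟨hab, fun w hw => by rcases hw with rfl | rfl <;> assumption⟩
      · rintro (⟨hab, h⟩ | ⟨u, hu, he⟩)
        · exact ⟨hab, fun w hw => Or.inr (h w hw)⟩
        · obtain ⟨hu1, hu2⟩ := hu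
          rw [Sym2.eq_iff] at he
          rcases he with ⟨hv1, hu3⟩ | ⟨hv1, hu3⟩ <;> subst hv1 <;> subst hu3
          · exact ⟨hu2, fun w hw => by rcases hw with rfl | rfl <;> simp [hu1]⟩
          · exact ⟨hu2.symm, fun w hw => by rcases hw with rfl | rfl <;> simp [hu1]⟩
  have hinj : Function.Injective fun u => s(v,u) := fun a b h => Sym2.congr_right.mp h
  have hdisj : Disjoint (G.edgeFinset.filter fun e => ∀ w ∈ e, w ∈ T)
      ((T.filter (G.Adj v)).image fun u => s(v,u)) := by
    rw [Finset.disjoint_left]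
    intro e he1 he2
    simp only [Finset.mem_filter] at he1
    simp only [Finset.mem_image, Finset.mem_filter] at he2
    obtain ⟨u, hu, rfl⟩ := he2
    exact hv (he1.2 v (by simp))
  rw [hset, Finset.card_union_of_disjoint hdisj, Finset.card_image_of_injective _ hinj]
  congr!

lemma edgesIn_erase {V : Type*} [Fintype V] [DecidableEq V] (G : SimpleGraph V) {v : V}
    {S : Finset V} (hv : v ∈ S) :
    edgesIn G S = edgesIn G (S.erase v) + (S.filter (G.Adj v)).card := by
  conv_lhs => rw [← Finset.insert_erase hv]
  rw [edgesIn_insert G (Finset.notMem_erase v S), Finset.filter_erase,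
    Finset.erase_eq_of_notMem (fun h => G.irrefl (Finset.mem_filter.mp h).2)]

lemma edgesIn_induce {V : Type*} [Fintype V] (G : SimpleGraph V) (A : Set V)
    [Fintype ↥(Aᶜ)] (T : Finset ↥(Aᶜ)) :
    edgesIn (deleteVerts G A) T = edgesIn G (T.map (Function.Embedding.subtype _)) := by
  induction T using Finset.induction with
  | empty => simp [edgesIn_empty]
  | @insert x T hx ih =>
    rw [edgesIn_insert _ hx, Finset.map_insert, edgesIn_insert, ih]
    · congr 1
      rw [Finset.filter_map, Finset.card_map]
      exact congrArg Finset.card (Finset.filter_congr fun y _ => by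
        simp [deleteVerts, Function.Embedding.subtype])
    · intro hmem
      obtain ⟨y, hyT, hyx⟩ := Finset.mem_map.mp hmem
      have : y = x := Subtype.ext hyx
      exact hx (this ▸ hyT)

lemma sigmaNI_deleteVerts {V : Type*} [Fintype V] (G : SimpleGraph V) (A : Set V)
    [Fintype ↥(Aᶜ)] (l : ℕ) :
    sigmaNI (deleteVerts G A) l
      = (Finset.univ.filter fun S : Finset V => (∀ x ∈ S, x ∉ A) ∧ edgesIn G S = l).card := by
  unfold sigmaNI nearlyIndep
  apply Finset.card_bij (fun T _ => T.map (Function.Embedding.subtype _))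
  · intro T hT
    simp only [Finset.mem_filter, Finset.mem_univ, true_and] at hT ⊢
    refine ⟨?_, by rw [← edgesIn_induce]; exact hT⟩
    intro x hxm
    simp only [Finset.mem_map, Function.Embedding.coe_subtype] at hxm
    obtain ⟨y, _, rfl⟩ := hxm
    exact y.2
  · intro T1 h1 T2 h2 h
    exact Finset.map_injective _ h
  · intro S hS
    simp only [Finset.mem_filter, Finset.mem_univ, true_and] at hS
    refine ⟨S.subtype (fun x => x ∈ Aᶜ), ?_, ?_⟩
    · simp only [Finset.mem_filter, Finset.mem_univ, true_and]
      rw [edgesIn_induce, Finset.subtype_map]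
      rw [Finset.filter_true_of_mem (fun x hx => Set.mem_compl (hS.1 x hx))]
      exact hS.2
    · rw [Finset.subtype_map, Finset.filter_true_of_mem (fun x hx => Set.mem_compl (hS.1 x hx))]

/-- Recursion for σ₁ at a vertex `v`. -/
theorem stmt2 {V : Type*} [Fintype V] (G : SimpleGraph V) (v : V) :
    sigmaNI G 1 =
      sigmaNI (deleteVerts G {v}) 1 +
        sigmaNI (deleteVerts G (insert v (G.neighborSet v))) 1 +
        ∑ u ∈ (G.neighborSet v).toFinset,
          sigmaNI (deleteVerts G (G.neighborSet v ∪ G.neighborSet u)) 0 := by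
  classical
  have split1 :
      sigmaNI G 1
        = (Finset.univ.filter fun S : Finset V => edgesIn G S = 1 ∧ v ∉ S).card
          + (Finset.univ.filter fun S : Finset V => edgesIn G S = 1 ∧ v ∈ S).card := by
    unfold sigmaNI nearlyIndep
    rw [← Finset.card_filter_add_card_filter_not
      (s := Finset.univ.filter fun S : Finset V => edgesIn G S = 1) (p := fun S => v ∉ S),
      Finset.filter_filter, Finset.filter_filter]
    congr 1 <;> exact congrArg Finset.card (Finset.filter_congr fun S _ => by tauto)
  have splitB :
      (Finset.univ.filter fun S : Finset V => edgesIn G S = 1 ∧ v ∈ S).card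
        = (Finset.univ.filter fun S : Finset V =>
            edgesIn G S = 1 ∧ v ∈ S ∧ S.filter (G.Adj v) = ∅).card
          + (Finset.univ.filter fun S : Finset V =>
            edgesIn G S = 1 ∧ v ∈ S ∧ S.filter (G.Adj v) ≠ ∅).card := by
    rw [← Finset.card_filter_add_card_filter_not
      (s := Finset.univ.filter fun S : Finset V => edgesIn G S = 1 ∧ v ∈ S)
      (p := fun S => S.filter (G.Adj v) = ∅),
      Finset.filter_filter, Finset.filter_filter]
    congr 1 <;> exact congrArg Finset.card (Finset.filter_congr fun S _ => by tauto)
  have partA :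
      (Finset.univ.filter fun S : Finset V => edgesIn G S = 1 ∧ v ∉ S).card
        = sigmaNI (deleteVerts G {v}) 1 := by
    rw [sigmaNI_deleteVerts]
    refine congrArg Finset.card (Finset.filter_congr fun S _ => ?_)
    constructor
    · rintro ⟨h1, h2⟩
      exact ⟨fun x hx hmem => h2 (by rwa [← Set.mem_singleton_iff.mp hmem]), h1⟩
    · rintro ⟨h1, h2⟩
      exact ⟨h2, fun hv => h1 v hv rfl⟩
  have partB :
      (Finset.univ.filter fun S : Finset V =>
          edgesIn G S = 1 ∧ v ∈ S ∧ S.filter (G.Adj v) = ∅).card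
        = sigmaNI (deleteVerts G (insert v (G.neighborSet v))) 1 := by
    rw [sigmaNI_deleteVerts]
    refine Finset.card_bij' (fun S _ => S.erase v) (fun T _ => insert v T) ?hi ?hj ?li ?ri
    case hi =>
      intro S hS
      simp only [Finset.mem_filter, Finset.mem_univ, true_and] at hS ⊢
      obtain ⟨h1, hvS, hfil⟩ := hS
      constructor
      · intro x hx
        simp only [Set.mem_insert_iff, SimpleGraph.mem_neighborSet]
        push_neg
        refine ⟨Finset.ne_of_mem_erase hx, fun hadj => ?_⟩
        have : x ∈ S.filter (G.Adj v) :=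
          Finset.mem_filter.mpr ⟨Finset.mem_of_mem_erase hx, hadj⟩
        simp [hfil] at this
      · have hkey := edgesIn_erase G hvS
        rw [hfil] at hkey
        simp only [Finset.card_empty, add_zero] at hkey
        omega
    case hj =>
      intro T hT
      simp only [Finset.mem_filter, Finset.mem_univ, true_and] at hT ⊢
      obtain ⟨hforall, hT1⟩ := hT
      have hvT : v ∉ T := fun h => (hforall v h) (Set.mem_insert v _)
      have hfe : T.filter (G.Adj v) = ∅ := by
        rw [Finset.filter_eq_empty_iff]
        intro x hx hadj
        exact (hforall x hx) (Set.mem_insert_iff.mpr (Or.inr hadj))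
      refine ⟨?_, Finset.mem_insert_self _ _, ?_⟩
      · rw [edgesIn_insert G hvT, hfe, hT1]; simp
      · rw [Finset.filter_insert, if_neg (G.irrefl), hfe]
    case li =>
      intro S hS
      simp only [Finset.mem_filter, Finset.mem_univ, true_and] at hS
      exact Finset.insert_erase hS.2.1
    case ri =>
      intro T hT
      simp only [Finset.mem_filter, Finset.mem_univ, true_and] at hT
      have hvT : v ∉ T := fun h => (hT.1 v h) (Set.mem_insert v _)
      exact Finset.erase_insert hvT
  have partC :
      (Finset.univ.filter fun S : Finset V =>
          edgesIn G S = 1 ∧ v ∈ S ∧ S.filter (G.Adj v) ≠ ∅).card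
        = ∑ u ∈ (G.neighborSet v).toFinset,
            sigmaNI (deleteVerts G (G.neighborSet v ∪ G.neighborSet u)) 0 := by
    have hbi : (Finset.univ.filter fun S : Finset V =>
          edgesIn G S = 1 ∧ v ∈ S ∧ S.filter (G.Adj v) ≠ ∅)
        = (G.neighborSet v).toFinset.biUnion (fun u =>
            Finset.univ.filter fun S : Finset V =>
              edgesIn G S = 1 ∧ v ∈ S ∧ S.filter (G.Adj v) = {u}) := by
      ext S
      simp only [Finset.mem_filter, Finset.mem_biUnion, Finset.mem_univ, true_and,
        Set.mem_toFinset, SimpleGraph.mem_neighborSet]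
      constructor
      · rintro ⟨h1, hvS, hne⟩
        have hkey := edgesIn_erase G hvS
        rw [h1] at hkey
        have hpos : 0 < (S.filter (G.Adj v)).card :=
          Finset.card_pos.mpr (Finset.nonempty_iff_ne_empty.mpr hne)
        have hcard : (S.filter (G.Adj v)).card = 1 := by omega
        obtain ⟨u, hu⟩ := Finset.card_eq_one.mp hcard
        have huadj : G.Adj v u :=
          (Finset.mem_filter.mp (hu ▸ Finset.mem_singleton_self u)).2
        exact ⟨u, huadj, h1, hvS, hu⟩
      · rintro ⟨u, hadj, h1, hvS, hu⟩
        refine ⟨h1, hvS, ?_⟩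
        rw [hu]
        simp
    rw [hbi, Finset.card_biUnion]
    · apply Finset.sum_congr rfl
      intro u humem
      rw [Set.mem_toFinset, SimpleGraph.mem_neighborSet] at humem
      rw [sigmaNI_deleteVerts]
      have hvu : v ≠ u := humem.ne
      refine Finset.card_bij' (fun S _ => (S.erase v).erase u)
        (fun R _ => insert v (insert u R)) ?hi ?hj ?li ?ri
      case hi =>
        intro S hS
        simp only [Finset.mem_filter, Finset.mem_univ, true_and] at hS ⊢
        obtain ⟨h1, hvS, hfil⟩ := hS
        have huS : u ∈ S :=
          (Finset.mem_filter.mp (hfil ▸ Finset.mem_singleton_self u)).1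
        have huT : u ∈ S.erase v := Finset.mem_erase.mpr ⟨hvu.symm, huS⟩
        have hTfil : (S.erase v).filter (G.Adj v) = {u} := by
          rw [Finset.filter_erase, hfil, Finset.erase_eq_of_notMem (by simp [hvu])]
        have hT0 : edgesIn G (S.erase v) = 0 := by
          have hkey := edgesIn_erase G hvS
          rw [hfil] at hkey
          simp only [Finset.card_singleton] at hkey
          omega
        have hkey2 := edgesIn_erase G huT
        rw [hT0] at hkey2
        have hR0 : edgesIn G ((S.erase v).erase u) = 0 := by omega
        have hufil : (S.erase v).filter (G.Adj u) = ∅ :=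
          Finset.card_eq_zero.mp (by omega)
        refine ⟨?_, hR0⟩
        intro x hx
        have hxT : x ∈ S.erase v := Finset.mem_of_mem_erase hx
        have hxu : x ≠ u := Finset.ne_of_mem_erase hx
        rw [Set.mem_union, SimpleGraph.mem_neighborSet, SimpleGraph.mem_neighborSet]
        push_neg
        constructor
        · intro hadj
          have : x ∈ (S.erase v).filter (G.Adj v) := Finset.mem_filter.mpr ⟨hxT, hadj⟩
          rw [hTfil] at this
          exact hxu (Finset.mem_singleton.mp this)
        · intro hadj
          have : x ∈ (S.erase v).filter (G.Adj u) := Finset.mem_filter.mpr ⟨hxT, hadj⟩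
          simp [hufil] at this
      case hj =>
        intro R hR
        simp only [Finset.mem_filter, Finset.mem_univ, true_and] at hR ⊢
        obtain ⟨hforall, hR0⟩ := hR
        have hnadj : ∀ x ∈ R, ¬G.Adj v x ∧ ¬G.Adj u x := by
          intro x hx
          have := hforall x hx
          rw [Set.mem_union, SimpleGraph.mem_neighborSet, SimpleGraph.mem_neighborSet] at this
          push_neg at this
          exact this
        have hvR : v ∉ R := fun h => (hnadj v h).2 humem.symm
        have huR : u ∉ R := fun h => (hnadj u h).1 humem
        have hvuR : v ∉ insert u R := by
          simp only [Finset.mem_insert]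
          push_neg
          exact ⟨hvu, hvR⟩
        have hRfilu : R.filter (G.Adj u) = ∅ :=
          Finset.filter_eq_empty_iff.mpr fun x hx => (hnadj x hx).2
        have hRfilv : R.filter (G.Adj v) = ∅ :=
          Finset.filter_eq_empty_iff.mpr fun x hx => (hnadj x hx).1
        have he1 : edgesIn G (insert u R) = 0 := by
          rw [edgesIn_insert G huR, hRfilu, hR0]; simp
        have hfilins : (insert u R).filter (G.Adj v) = {u} := by
          rw [Finset.filter_insert, if_pos humem, hRfilv]
          rfl
        refine ⟨?_, Finset.mem_insert_self _ _, ?_⟩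
        · rw [edgesIn_insert G hvuR, he1, hfilins]
          simp
        · rw [Finset.filter_insert, if_neg (G.irrefl), hfilins]
      case li =>
        intro S hS
        simp only [Finset.mem_filter, Finset.mem_univ, true_and] at hS
        obtain ⟨h1, hvS, hfil⟩ := hS
        have huS : u ∈ S :=
          (Finset.mem_filter.mp (hfil ▸ Finset.mem_singleton_self u)).1
        have huT : u ∈ S.erase v := Finset.mem_erase.mpr ⟨hvu.symm, huS⟩
        show insert v (insert u ((S.erase v).erase u)) = S
        rw [Finset.insert_erase huT, Finset.insert_erase hvS]
      case ri =>
        intro R hR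
        simp only [Finset.mem_filter, Finset.mem_univ, true_and] at hR
        have hnadj : ∀ x ∈ R, ¬G.Adj v x ∧ ¬G.Adj u x := by
          intro x hx
          have := hR.1 x hx
          rw [Set.mem_union, SimpleGraph.mem_neighborSet, SimpleGraph.mem_neighborSet] at this
          push_neg at this
          exact this
        have hvR : v ∉ R := fun h => (hnadj v h).2 humem.symm
        have huR : u ∉ R := fun h => (hnadj u h).1 humem
        have hvuR : v ∉ insert u R := by
          simp only [Finset.mem_insert]
          push_neg
          exact ⟨hvu, hvR⟩
        show ((insert v (insert u R)).erase v).erase u = R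
        rw [Finset.erase_insert hvuR, Finset.erase_insert huR]
    · intro u1 h1 u2 h2 hne
      rw [Function.onFun, Finset.disjoint_left]
      intro S hS1 hS2
      simp only [Finset.mem_filter, Finset.mem_univ, true_and] at hS1 hS2
      exact hne (Finset.singleton_injective (hS1.2.2.symm.trans hS2.2.2))
  rw [split1, splitB, partA, partB, partC, add_assoc]
end
end

section
/- For every finite simple graph G = (V, E) and every k ≥ 0, σ_1(G, k) = Σ_{uv ∈ E} σ_0( G − (N(v) ∪ N(u)), k − 2 ). Consequently σ_1(G) = Σ_{uv ∈ E} σ_0( G − (N(v) ∪ N(u)) ) and S_1(G) = Σ_{uv ∈ E} [ 2·σ_0( G − (N(v) ∪ N(u)) ) + S_0( G − (N(v) ∪ N(u)) ) ]. -/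
open scoped Classical
open Finset

noncomputable section

/-- The number of `l`-nearly independent vertex sets of `G` whose cardinality equals the
integer `k` (so `0` whenever `k < 0`). -/
def sigmaNIkZ {V : Type*} [Fintype V] (G : SimpleGraph V) (l : ℕ) (k : ℤ) : ℕ :=
  ((nearlyIndep G l).filter fun S => (S.card : ℤ) = k).card

lemma edgesIn_eq_zero_iff {V : Type*} [Fintype V] (H : SimpleGraph V) (T : Finset V) :
    edgesIn H T = 0 ↔ ∀ a ∈ T, ∀ b ∈ T, ¬ H.Adj a b := by
  unfold edgesIn
  rw [Finset.card_eq_zero, Finset.filter_eq_empty_iff]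
  constructor
  · intro hE a ha b hb hab
    refine hE (SimpleGraph.mem_edgeFinset.2 (H.mem_edgeSet.2 hab)) ?_
    intro x hx
    rcases Sym2.mem_iff.1 hx with rfl | rfl
    · exact ha
    · exact hb
  · intro hall e he
    induction e using Sym2.ind with
    | _ a b =>
      intro hsub
      exact hall a (hsub a (Sym2.mem_mk_left a b)) b (hsub b (Sym2.mem_mk_right a b))
        (H.mem_edgeSet.1 (SimpleGraph.mem_edgeFinset.1 he))

lemma edgesIn_eq_one_iff {V : Type*} [Fintype V] (G : SimpleGraph V) {u v : V}
    (h : G.Adj u v) {S : Finset V} (hu : u ∈ S) (hv : v ∈ S) :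
    edgesIn G S = 1 ↔ ∀ a ∈ S, ∀ b ∈ S, G.Adj a b → s(a, b) = s(u, v) := by
  unfold edgesIn
  rw [Finset.card_eq_one]
  constructor
  · rintro ⟨e0, he0⟩ a ha b hb hab
    have h1 : s(a, b) ∈ G.edgeFinset.filter fun e => ∀ x ∈ e, x ∈ S := by
      rw [Finset.mem_filter]
      refine ⟨SimpleGraph.mem_edgeFinset.2 (G.mem_edgeSet.2 hab), ?_⟩
      intro x hx; rcases Sym2.mem_iff.1 hx with rfl | rfl <;> assumption
    have h2 : s(u, v) ∈ G.edgeFinset.filter fun e => ∀ x ∈ e, x ∈ S := by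
      rw [Finset.mem_filter]
      refine ⟨SimpleGraph.mem_edgeFinset.2 (G.mem_edgeSet.2 h), ?_⟩
      intro x hx; rcases Sym2.mem_iff.1 hx with rfl | rfl <;> assumption
    rw [he0, Finset.mem_singleton] at h1 h2
    rw [h1, h2]
  · intro hall
    refine ⟨s(u, v), Finset.eq_singleton_iff_unique_mem.2 ⟨?_, ?_⟩⟩
    · rw [Finset.mem_filter]
      refine ⟨SimpleGraph.mem_edgeFinset.2 (G.mem_edgeSet.2 h), ?_⟩
      intro x hx; rcases Sym2.mem_iff.1 hx with rfl | rfl <;> assumption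
    · intro e he
      induction e using Sym2.ind with
      | _ a b =>
        rw [Finset.mem_filter] at he
        exact hall a (he.2 a (Sym2.mem_mk_left a b)) b (he.2 b (Sym2.mem_mk_right a b))
          (G.mem_edgeSet.1 (SimpleGraph.mem_edgeFinset.1 he.1))

lemma master {V : Type*} [Fintype V] (G : SimpleGraph V) (u v : V) (h : G.Adj u v) (w : ℕ → ℕ) :
    ∑ S ∈ (Finset.univ.filter fun S : Finset V => edgesIn G S = 1 ∧ u ∈ S ∧ v ∈ S), w S.card
      = ∑ T ∈ (Finset.univ.filter fun T : Finset ↥((G.neighborSet u ∪ G.neighborSet v)ᶜ) =>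
          edgesIn (G.induce ((G.neighborSet u ∪ G.neighborSet v)ᶜ)) T = 0), w (T.card + 2) := by
  have huA : u ∈ G.neighborSet u ∪ G.neighborSet v := Or.inr h.symm
  have hvA : v ∈ G.neighborSet u ∪ G.neighborSet v := Or.inl h
  let i : Finset V → Finset ↥((G.neighborSet u ∪ G.neighborSet v)ᶜ) :=
    fun S => S.subtype (· ∈ (G.neighborSet u ∪ G.neighborSet v)ᶜ)
  let j : Finset ↥((G.neighborSet u ∪ G.neighborSet v)ᶜ) → Finset V :=
    fun T => insert u (insert v (T.map (Function.Embedding.subtype _)))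
  have hmemj : ∀ (T : Finset ↥((G.neighborSet u ∪ G.neighborSet v)ᶜ)) (x : V), x ∈ j T ↔
      x = u ∨ x = v ∨ ∃ hx : x ∈ (G.neighborSet u ∪ G.neighborSet v)ᶜ, (⟨x, hx⟩ : ↥((G.neighborSet u ∪ G.neighborSet v)ᶜ)) ∈ T := by
    intro T x
    simp only [j, Finset.mem_insert, Finset.mem_map, Function.Embedding.coe_subtype]
    constructor
    · rintro (rfl | rfl | ⟨⟨a, ha⟩, haT, rfl⟩)
      · exact Or.inl rfl
      · exact Or.inr (Or.inl rfl)
      · exact Or.inr (Or.inr ⟨ha, haT⟩)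
    · rintro (rfl | rfl | ⟨hx, hxT⟩)
      · exact Or.inl rfl
      · exact Or.inr (Or.inl rfl)
      · exact Or.inr (Or.inr ⟨⟨x, hx⟩, hxT, rfl⟩)
  have hcardj : ∀ T : Finset ↥((G.neighborSet u ∪ G.neighborSet v)ᶜ), (j T).card = T.card + 2 := by
    intro T
    have h1 : v ∉ T.map (Function.Embedding.subtype _) := by
      simp only [Finset.mem_map, Function.Embedding.coe_subtype]
      rintro ⟨⟨a, ha⟩, -, hav⟩
      exact ha (hav ▸ hvA)
    have h2 : u ∉ insert v (T.map (Function.Embedding.subtype _)) := by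
      simp only [Finset.mem_insert, Finset.mem_map, Function.Embedding.coe_subtype]
      rintro (rfl | ⟨⟨a, ha⟩, -, hau⟩)
      · exact h.ne rfl
      · exact ha (hau ▸ huA)
    simp only [j, Finset.card_insert_of_notMem h2, Finset.card_insert_of_notMem h1,
      Finset.card_map]
  have hji : ∀ S : Finset V, edgesIn G S = 1 → u ∈ S → v ∈ S → j (i S) = S := by
    intro S h1 hu hv
    rw [edgesIn_eq_one_iff G h hu hv] at h1
    ext x
    rw [hmemj]
    constructor
    · rintro (rfl | rfl | ⟨hx, hxT⟩)
      · exact hu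
      · exact hv
      · simpa [i] using hxT
    · intro hxS
      by_cases hxA : x ∈ G.neighborSet u ∪ G.neighborSet v
      · rcases hxA with hxu | hxv
        · have := h1 u hu x hxS hxu
          rw [Sym2.eq_iff] at this
          rcases this with ⟨-, rfl⟩ | ⟨rfl, rfl⟩
          · exact Or.inr (Or.inl rfl)
          · exact Or.inl rfl
        · have := h1 v hv x hxS hxv
          rw [Sym2.eq_iff] at this
          rcases this with ⟨rfl, rfl⟩ | ⟨-, rfl⟩
          · exact Or.inr (Or.inl rfl)
          · exact Or.inl rfl
      · exact Or.inr (Or.inr ⟨hxA, by simpa [i] using hxS⟩)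
  refine Finset.sum_nbij' i j ?_ ?_ ?_ ?_ ?_
  · intro S hS
    simp only [Finset.mem_filter, Finset.mem_univ, true_and] at hS ⊢
    obtain ⟨h1, hu, hv⟩ := hS
    rw [edgesIn_eq_one_iff G h hu hv] at h1
    rw [edgesIn_eq_zero_iff]
    rintro ⟨a, ha⟩ haT ⟨b, hb⟩ hbT hadj
    simp only [i, Finset.mem_subtype] at haT hbT
    have hab : G.Adj a b := hadj
    have := h1 a haT b hbT hab
    rw [Sym2.eq_iff] at this
    rcases this with ⟨rfl, rfl⟩ | ⟨rfl, rfl⟩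
    · exact ha huA
    · exact ha hvA
  · intro T hT
    simp only [Finset.mem_filter, Finset.mem_univ, true_and] at hT ⊢
    have hu' : u ∈ j T := (hmemj T u).2 (Or.inl rfl)
    have hv' : v ∈ j T := (hmemj T v).2 (Or.inr (Or.inl rfl))
    refine ⟨?_, hu', hv'⟩
    rw [edgesIn_eq_one_iff G h hu' hv']
    intro a ha b hb hab
    rw [edgesIn_eq_zero_iff] at hT
    rw [hmemj] at ha hb
    rcases ha with rfl | rfl | ⟨hxa, haT⟩
    · rcases hb with rfl | rfl | ⟨hxb, hbT⟩
      · exact absurd hab (G.irrefl)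
      · rfl
      · exact absurd (Or.inl hab) hxb
    · rcases hb with rfl | rfl | ⟨hxb, hbT⟩
      · exact Sym2.eq_swap
      · exact absurd hab (G.irrefl)
      · exact absurd (Or.inr hab) hxb
    · rcases hb with rfl | rfl | ⟨hxb, hbT⟩
      · exact absurd (Or.inl hab.symm) hxa
      · exact absurd (Or.inr hab.symm) hxa
      · exact absurd (show (G.induce ((G.neighborSet u ∪ G.neighborSet v)ᶜ)).Adj ⟨a, hxa⟩ ⟨b, hxb⟩ from hab)
          (hT ⟨a, hxa⟩ haT ⟨b, hxb⟩ hbT)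
  · intro S hS
    simp only [Finset.mem_filter, Finset.mem_univ, true_and] at hS
    exact hji S hS.1 hS.2.1 hS.2.2
  · intro T hT
    ext ⟨x, hx⟩
    simp only [i, Finset.mem_subtype]
    rw [hmemj]
    constructor
    · rintro (rfl | rfl | ⟨hx', hxT⟩)
      · exact absurd huA hx
      · exact absurd hvA hx
      · exact hxT
    · intro hxT
      exact Or.inr (Or.inr ⟨hx, hxT⟩)
  · intro S hS
    simp only [Finset.mem_filter, Finset.mem_univ, true_and] at hS
    congr 1
    calc S.card = (j (i S)).card := by rw [hji S hS.1 hS.2.1 hS.2.2]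
    _ = (i S).card + 2 := hcardj _

lemma partition {V : Type*} [Fintype V] (G : SimpleGraph V) (w : Finset V → ℕ) :
    ∑ S ∈ nearlyIndep G 1, w S =
      ∑ e ∈ G.edgeFinset, ∑ S ∈ (nearlyIndep G 1).filter (fun S => ∀ x ∈ e, x ∈ S), w S := by
  simp only [Finset.sum_filter]
  rw [Finset.sum_comm]
  refine (Finset.sum_congr rfl ?_).symm
  intro S hS
  rw [← Finset.sum_filter, Finset.sum_const]
  have h1 : (G.edgeFinset.filter fun e => ∀ x ∈ e, x ∈ S).card = 1 := by
    simp only [nearlyIndep, Finset.mem_filter, Finset.mem_univ, true_and] at hS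
    exact hS
  rw [h1, one_smul]

lemma key {V : Type*} [Fintype V] (G : SimpleGraph V) (w : ℕ → ℕ) :
    ∑ S ∈ nearlyIndep G 1, w S.card =
      ∑ e ∈ G.edgeFinset,
        ∑ T ∈ nearlyIndep (SimpleGraph.induce ((Sym2.lift ⟨fun u v => G.neighborSet u ∪ G.neighborSet v, fun u v => Set.union_comm _ _⟩ e : Set V)ᶜ) G) 0, w (T.card + 2) := by
  rw [partition]
  refine Finset.sum_congr rfl ?_
  intro e he
  revert he
  induction e using Sym2.ind with
  | _ u v =>
    intro he
    have hadj : G.Adj u v := G.mem_edgeSet.1 (SimpleGraph.mem_edgeFinset.1 he)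
    have hfilter : (nearlyIndep G 1).filter (fun S => ∀ x ∈ (s(u, v) : Sym2 V), x ∈ S)
        = Finset.univ.filter fun S : Finset V => edgesIn G S = 1 ∧ u ∈ S ∧ v ∈ S := by
      ext S
      simp only [nearlyIndep, Finset.mem_filter, Finset.mem_univ, true_and, Sym2.mem_iff,
        and_assoc]
      constructor
      · rintro ⟨h1, h2⟩
        exact ⟨h1, h2 u (Or.inl rfl), h2 v (Or.inr rfl)⟩
      · rintro ⟨h1, h2, h3⟩
        refine ⟨h1, ?_⟩
        rintro x (rfl | rfl) <;> assumption
    simp only [Sym2.lift_mk]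
    rw [hfilter, master G u v hadj w]
    simp only [nearlyIndep]
    congr!
    exact congrArg (@edgesIn _) (Subsingleton.elim _ _)

theorem stmt6 {V : Type*} [Fintype V] (G : SimpleGraph V) :
    (∀ k : ℕ, sigmaNIk G 1 k =
        ∑ e ∈ G.edgeFinset, sigmaNIkZ (deleteVerts G (nbhdUnion G e)) 0 ((k : ℤ) - 2)) ∧
    sigmaNI G 1 = ∑ e ∈ G.edgeFinset, sigmaNI (deleteVerts G (nbhdUnion G e)) 0 ∧
    sumNI G 1 = ∑ e ∈ G.edgeFinset,
        (2 * sigmaNI (deleteVerts G (nbhdUnion G e)) 0 +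
          sumNI (deleteVerts G (nbhdUnion G e)) 0) := by
  have key' : ∀ (w : ℕ → ℕ), ∑ S ∈ nearlyIndep G 1, w S.card =
      ∑ e ∈ G.edgeFinset,
        ∑ T ∈ nearlyIndep (deleteVerts G (nbhdUnion G e)) 0, w (T.card + 2) := by
    intro w
    simp only [deleteVerts, nbhdUnion]
    exact key G w
  refine ⟨?_, ?_, ?_⟩
  · intro k
    have h1 : sigmaNIk G 1 k = ∑ S ∈ nearlyIndep G 1, (fun n => if n = k then 1 else 0) S.card := by
      rw [sigmaNIk, Finset.card_filter]
    rw [h1, key' (fun n => if n = k then 1 else 0)]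
    refine Finset.sum_congr rfl ?_
    intro e he
    rw [sigmaNIkZ, Finset.card_filter]
    refine Finset.sum_congr rfl ?_
    intro T hT
    have h2 : (T.card + 2 = k) ↔ ((T.card : ℤ) = (k : ℤ) - 2) := by omega
    simp only [h2]
  · have h1 : sigmaNI G 1 = ∑ S ∈ nearlyIndep G 1, (fun _ : ℕ => 1) S.card := by
      rw [sigmaNI, Finset.card_eq_sum_ones]
    rw [h1, key' (fun _ => 1)]
    refine Finset.sum_congr rfl ?_
    intro e he
    rw [sigmaNI, Finset.card_eq_sum_ones]
  · have h1 : sumNI G 1 = ∑ S ∈ nearlyIndep G 1, (fun n : ℕ => n) S.card := rfl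
    rw [h1, key' (fun n => n)]
    refine Finset.sum_congr rfl ?_
    intro e he
    rw [Finset.sum_add_distrib, Finset.sum_const, smul_eq_mul]
    rw [show (∑ T ∈ nearlyIndep (deleteVerts G (nbhdUnion G e)) 0, T.card) = sumNI (deleteVerts G (nbhdUnion G e)) 0 from rfl,
       show (nearlyIndep (deleteVerts G (nbhdUnion G e)) 0).card = sigmaNI (deleteVerts G (nbhdUnion G e)) 0 from rfl]
    ring
end
end

section
/- Let G be a finite simple graph on n vertices with at least one edge, and set δ_1(G) = min over edges uv of |N(u) ∪ N(v)| and δ_2(G) = max over edges uv of |N(u) ∪ N(v)|. Then 2 ≤ (3n + 2 − 3δ_2(G)) / (n + 1 − δ_2(G)) ≤ av_1(G) ≤ (n + 4 − δ_1(G)) / 2 ≤ (n + 2)/2. -/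
open scoped Classical
open Finset

noncomputable section

section Aux
variable {V : Type*} [Fintype V] (G : SimpleGraph V)
def ES (S : Finset V) : Finset (Sym2 V) := G.edgeFinset.filter fun e => ∀ v ∈ e, v ∈ S
def fib (e : Sym2 V) : Finset (Finset V) := Finset.univ.filter fun S => ES G S = {e}
variable {G}
lemma mem_ES {S : Finset V} {a b : V} :
    s(a,b) ∈ ES G S ↔ G.Adj a b ∧ a ∈ S ∧ b ∈ S := by
  simp only [ES, Finset.mem_filter, SimpleGraph.mem_edgeFinset, Sym2.mem_iff]
  constructor
  · rintro ⟨h1, h2⟩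
    exact ⟨h1, h2 a (Or.inl rfl), h2 b (Or.inr rfl)⟩
  · rintro ⟨h1, h2, h3⟩
    refine ⟨h1, ?_⟩
    rintro w (rfl | rfl) <;> assumption
lemma ES_mono {S T : Finset V} (h : S ⊆ T) : ES G S ⊆ ES G T := by
  unfold ES
  apply Finset.monotone_filter_right
  intro e _ he w hw
  exact h (he w hw)
lemma ES_pair_union {u v : V} (huv : G.Adj u v) (T : Finset V)
    (hT0 : ∀ a ∈ T, ∀ b ∈ T, ¬ G.Adj a b)
    (hTu : ∀ w ∈ T, ¬ G.Adj u w) (hTv : ∀ w ∈ T, ¬ G.Adj v w) :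
    ES G (insert u (insert v T)) = {s(u,v)} := by
  ext e
  induction e using Sym2.ind with
  | _ a b =>
    simp only [Finset.mem_singleton, mem_ES, Finset.mem_insert]
    constructor
    · rintro ⟨hab, (rfl|rfl|ha), (rfl|rfl|hb)⟩
      · exact absurd hab (G.irrefl)
      · rfl
      · exact absurd hab (hTu b hb)
      · rw [Sym2.eq_swap]
      · exact absurd hab (G.irrefl)
      · exact absurd hab (hTv b hb)
      · exact absurd hab.symm (hTu a ha)
      · exact absurd hab.symm (hTv a ha)
      · exact absurd hab (hT0 a ha b hb)
    · intro h
      rw [Sym2.eq_iff] at h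
      rcases h with ⟨rfl, rfl⟩ | ⟨rfl, rfl⟩
      · exact ⟨huv, Or.inl rfl, Or.inr (Or.inl rfl)⟩
      · exact ⟨huv.symm, Or.inr (Or.inl rfl), Or.inl rfl⟩
lemma mem_fib {e : Sym2 V} {S : Finset V} : S ∈ fib G e ↔ ES G S = {e} := by
  simp [fib]

-- fiber facts
variable {u v : V} (huv : G.Adj u v)

lemma fib_mem_uv {S : Finset V} (hS : S ∈ fib G s(u,v)) : u ∈ S ∧ v ∈ S := by
  rw [mem_fib] at hS
  have : s(u,v) ∈ ES G S := by rw [hS]; exact Finset.mem_singleton_self _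
  exact (mem_ES.mp this).2

include huv in
lemma fib_no_nbr_u {S : Finset V} (hS : S ∈ fib G s(u,v)) {w : V} (hw : w ∈ S)
    (ha : G.Adj u w) : w = v := by
  have hu := (fib_mem_uv hS).1
  rw [mem_fib] at hS
  have : s(u,w) ∈ ES G S := mem_ES.mpr ⟨ha, hu, hw⟩
  rw [hS, Finset.mem_singleton, Sym2.eq_iff] at this
  rcases this with ⟨-, rfl⟩ | ⟨h1, rfl⟩
  · rfl
  · exact absurd h1 (G.ne_of_adj huv)

include huv in
lemma fib_no_nbr_v {S : Finset V} (hS : S ∈ fib G s(u,v)) {w : V} (hw : w ∈ S)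
    (ha : G.Adj v w) : w = u := by
  have hS' : S ∈ fib G s(v,u) := by rwa [Sym2.eq_swap] at hS
  exact fib_no_nbr_u huv.symm hS' hw ha

include huv in
lemma fib_erase {S : Finset V} (hS : S ∈ fib G s(u,v)) {w : V}
    (hwu : ¬ G.Adj u w) (hwv : ¬ G.Adj v w) : S.erase w ∈ fib G s(u,v) := by
  obtain ⟨hu, hv⟩ := fib_mem_uv hS
  rw [mem_fib] at hS ⊢
  have hwu' : w ≠ u := fun h => hwv (h ▸ huv.symm)
  have hwv' : w ≠ v := fun h => hwu (h ▸ huv)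
  have hmem : s(u,v) ∈ ES G (S.erase w) :=
    mem_ES.mpr ⟨huv, Finset.mem_erase.mpr ⟨hwu'.symm, hu⟩, Finset.mem_erase.mpr ⟨hwv'.symm, hv⟩⟩
  have hsub : ES G (S.erase w) ⊆ {s(u,v)} := hS ▸ ES_mono (Finset.erase_subset _ _)
  rcases Finset.subset_singleton_iff.mp hsub with h | h
  · rw [h] at hmem; exact absurd hmem (Finset.notMem_empty _)
  · exact h

include huv in
lemma fib_pair : ({u,v} : Finset V) ∈ fib G s(u,v) := by
  rw [mem_fib]
  have := ES_pair_union huv ∅ (by simp) (by simp) (by simp)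
  simpa using this

include huv in
lemma fib_triple {w : V} (hwu : ¬ G.Adj u w) (hwv : ¬ G.Adj v w) :
    ({u,v,w} : Finset V) ∈ fib G s(u,v) := by
  rw [mem_fib]
  have := ES_pair_union huv {w} (by simp) (by simpa using hwu) (by simpa using hwv)
  simpa using this


lemma sum_card_eq (F : Finset (Finset V)) :
    ∑ S ∈ F, S.card = ∑ w : V, (F.filter fun S => w ∈ S).card := by
  have h1 : ∀ S : Finset V, S.card = ∑ w : V, if w ∈ S then 1 else 0 := by
    intro S
    rw [Finset.sum_ite_mem]
    simp [Finset.univ_inter]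
  calc ∑ S ∈ F, S.card = ∑ S ∈ F, ∑ w : V, if w ∈ S then 1 else 0 := by
        exact Finset.sum_congr rfl fun S _ => h1 S
    _ = ∑ w : V, ∑ S ∈ F, if w ∈ S then 1 else 0 := Finset.sum_comm
    _ = ∑ w : V, (F.filter fun S => w ∈ S).card := by
        refine Finset.sum_congr rfl fun w _ => ?_
        rw [Finset.card_filter]

include huv in
lemma fib_upper :
    2 * ∑ S ∈ fib G s(u,v), S.card ≤
      ((Finset.univ \ (G.neighborFinset u ∪ G.neighborFinset v)).card + 4)
        * (fib G s(u,v)).card := by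
  classical
  set F := fib G s(u,v) with hF
  set W := (Finset.univ \ (G.neighborFinset u ∪ G.neighborFinset v)) with hW
  set c := F.card with hc
  -- pointwise bound
  have key : ∀ w : V, 2 * (F.filter fun S => w ∈ S).card ≤
      (if w ∈ ({u,v} : Finset V) then 2*c else 0) + (if w ∈ W then c else 0) := by
    intro w
    by_cases h1 : w ∈ ({u,v} : Finset V)
    · rw [if_pos h1]
      have : (F.filter fun S => w ∈ S).card ≤ c := Finset.card_le_card (Finset.filter_subset _ _)
      omega
    · rw [if_neg h1]
      simp only [Finset.mem_insert, Finset.mem_singleton, not_or] at h1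
      obtain ⟨hwu, hwv⟩ := h1
      by_cases h2 : w ∈ W
      · rw [if_pos h2]
        rw [hW, Finset.mem_sdiff, Finset.mem_union, SimpleGraph.mem_neighborFinset,
          SimpleGraph.mem_neighborFinset] at h2
        push_neg at h2
        obtain ⟨-, hau, hav⟩ := h2
        -- injection erase
        have hinj : (F.filter fun S => w ∈ S).card ≤ (F.filter fun S => w ∉ S).card := by
          apply Finset.card_le_card_of_injOn (fun S => S.erase w)
          · intro S hS
            rw [Finset.mem_coe, Finset.mem_filter] at hS ⊢
            exact ⟨fib_erase huv hS.1 hau hav, Finset.notMem_erase _ _⟩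
          · intro S1 h1 S2 h2 heq
            rw [Finset.mem_coe, Finset.mem_filter] at h1 h2
            have e1 := Finset.insert_erase h1.2
            have e2 := Finset.insert_erase h2.2
            rw [← e1, ← e2]
            exact congrArg (insert w) heq
        have hsplit : (F.filter fun S => w ∈ S).card + (F.filter fun S => w ∉ S).card = c :=
          Finset.card_filter_add_card_filter_not _
        omega
      · rw [if_neg h2]
        have : (F.filter fun S => w ∈ S) = ∅ := by
          rw [Finset.filter_eq_empty_iff]
          intro S hS hw
          rw [hW, Finset.mem_sdiff, Finset.mem_union, SimpleGraph.mem_neighborFinset,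
            SimpleGraph.mem_neighborFinset] at h2
          push_neg at h2
          rcases h2 (Finset.mem_univ w) with hau | hav
          · exact hwv (fib_no_nbr_u huv hS hw hau)
          · exact hwu (fib_no_nbr_v huv hS hw hav)
        rw [this]
        simp
  calc 2 * ∑ S ∈ F, S.card = ∑ w : V, 2 * (F.filter fun S => w ∈ S).card := by
        rw [sum_card_eq, Finset.mul_sum]
    _ ≤ ∑ w : V, ((if w ∈ ({u,v} : Finset V) then 2*c else 0) + (if w ∈ W then c else 0)) :=
        Finset.sum_le_sum fun w _ => key w
    _ = (W.card + 4) * c := by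
        rw [Finset.sum_add_distrib, Finset.sum_ite_mem, Finset.sum_ite_mem,
          Finset.univ_inter, Finset.univ_inter, Finset.sum_const, Finset.sum_const]
        have h2 : ({u,v} : Finset V).card = 2 := by
          rw [Finset.card_insert_of_notMem (by simpa using G.ne_of_adj huv),
            Finset.card_singleton]
        rw [h2]
        ring


include huv in
lemma fib_lower {k : ℕ}
    (hk : k ≤ (Finset.univ \ (G.neighborFinset u ∪ G.neighborFinset v)).card) :
    (3*k+2) * (fib G s(u,v)).card ≤ (k+1) * ∑ S ∈ fib G s(u,v), S.card := by
  classical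
  set F := fib G s(u,v) with hF
  set W := (Finset.univ \ (G.neighborFinset u ∪ G.neighborFinset v)) with hW
  set c := F.card with hc
  have hne : u ≠ v := G.ne_of_adj huv
  have hsubS : ∀ S ∈ F, ({u,v} : Finset V) ⊆ S := by
    intro S hS
    obtain ⟨h1, h2⟩ := fib_mem_uv hS
    intro x hx
    rcases Finset.mem_insert.mp hx with rfl | hx
    · exact h1
    · rw [Finset.mem_singleton] at hx; exact hx ▸ h2
  have hpaircard : ({u,v} : Finset V).card = 2 := by
    rw [Finset.card_insert_of_notMem (by simpa using hne), Finset.card_singleton]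
  have hcard2 : ∀ S ∈ F, 2 ≤ S.card := by
    intro S hS
    calc 2 = ({u,v} : Finset V).card := hpaircard.symm
      _ ≤ S.card := Finset.card_le_card (hsubS S hS)
  set D := ∑ S ∈ F, (S.card - 2) with hD
  have hsum : ∑ S ∈ F, S.card = D + 2 * c := by
    have : ∑ S ∈ F, S.card = ∑ S ∈ F, ((S.card - 2) + 2) :=
      Finset.sum_congr rfl fun S hS => (Nat.sub_add_cancel (hcard2 S hS)).symm
    rw [this, Finset.sum_add_distrib, Finset.sum_const, smul_eq_mul]
    omega
  set q := (F.filter fun S => 3 ≤ S.card).card with hq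
  have hDq : q ≤ D := by
    calc q = ∑ _S ∈ F.filter fun S => 3 ≤ S.card, 1 := by rw [Finset.sum_const, smul_eq_mul, mul_one]
      _ ≤ ∑ S ∈ F.filter fun S => 3 ≤ S.card, (S.card - 2) := by
          refine Finset.sum_le_sum fun S hS => ?_
          have := (Finset.mem_filter.mp hS).2
          omega
      _ ≤ D := Finset.sum_le_sum_of_subset (Finset.filter_subset _ _)
  have hmq : W.card ≤ q := by
    apply Finset.card_le_card_of_injOn (fun w => ({u,v,w} : Finset V))
    · intro w hw
      rw [Finset.mem_coe, hW, Finset.mem_sdiff, Finset.mem_union, SimpleGraph.mem_neighborFinset,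
        SimpleGraph.mem_neighborFinset] at hw
      push_neg at hw
      obtain ⟨-, hau, hav⟩ := hw
      have hwu : w ≠ u := fun h => hav (h ▸ huv.symm)
      have hwv : w ≠ v := fun h => hau (h ▸ huv)
      rw [Finset.mem_coe, Finset.mem_filter]
      refine ⟨fib_triple huv hau hav, ?_⟩
      rw [Finset.card_insert_of_notMem (by simp [hne, hwu.symm]),
        Finset.card_insert_of_notMem (by simp [hwv.symm]), Finset.card_singleton]
    · intro w1 h1 w2 h2 heq
      simp only at heq
      have hw1 : w1 ∈ ({u,v,w2} : Finset V) := by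
        rw [← heq]; simp
      rw [Finset.mem_coe, hW, Finset.mem_sdiff, Finset.mem_union,
        SimpleGraph.mem_neighborFinset, SimpleGraph.mem_neighborFinset] at h1
      push_neg at h1
      obtain ⟨-, hau, hav⟩ := h1
      have hwu : w1 ≠ u := fun h => hav (h ▸ huv.symm)
      have hwv : w1 ≠ v := fun h => hau (h ▸ huv)
      simp only [Finset.mem_insert, Finset.mem_singleton] at hw1
      rcases hw1 with h | h | h
      · exact absurd h hwu
      · exact absurd h hwv
      · exact h
  have hcq : c ≤ q + 1 := by
    have hsplit : q + (F.filter fun S => ¬ 3 ≤ S.card).card = c :=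
      Finset.card_filter_add_card_filter_not _
    have hone : (F.filter fun S => ¬ 3 ≤ S.card).card ≤ 1 := by
      rw [Finset.card_le_one]
      have heq : ∀ S ∈ F.filter fun S => ¬ 3 ≤ S.card, S = ({u,v} : Finset V) := by
        intro S hS
        rw [Finset.mem_filter] at hS
        obtain ⟨hSF, hS3⟩ := hS
        have := hcard2 S hSF
        exact (Finset.eq_of_subset_of_card_le (hsubS S hSF) (by omega)).symm
      intro a ha b hb
      rw [heq a ha, heq b hb]
    omega
  have hkq : k ≤ q := hk.trans hmq
  rw [hsum]
  nlinarith [hDq, hcq, hkq, Nat.mul_le_mul_left k hcq, Nat.mul_le_mul_left (k+1) hDq]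

end Aux


section Global
variable {V : Type*} [Fintype V] {G : SimpleGraph V}

lemma edgesIn_eq' (G : SimpleGraph V) (S : Finset V) : edgesIn G S = (ES G S).card := rfl

lemma fib_pairwise_disjoint :
    ∀ e1 ∈ G.edgeFinset, ∀ e2 ∈ G.edgeFinset, e1 ≠ e2 → Disjoint (fib G e1) (fib G e2) := by
  intro e1 _ e2 _ hne
  rw [Finset.disjoint_left]
  intro S h1 h2
  rw [mem_fib] at h1 h2
  apply hne
  have : e1 ∈ ({e2} : Finset (Sym2 V)) := by rw [← h2, h1]; exact Finset.mem_singleton_self _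
  exact Finset.mem_singleton.mp this

lemma nearlyIndep_one_eq : nearlyIndep G 1 = G.edgeFinset.biUnion (fib G) := by
  ext S
  simp only [nearlyIndep, Finset.mem_filter, Finset.mem_univ, true_and, Finset.mem_biUnion]
  rw [edgesIn_eq', Finset.card_eq_one]
  constructor
  · rintro ⟨e, he⟩
    have hmem : e ∈ ES G S := by rw [he]; exact Finset.mem_singleton_self _
    exact ⟨e, Finset.filter_subset _ _ hmem, mem_fib.mpr he⟩
  · rintro ⟨e, -, he⟩
    exact ⟨e, mem_fib.mp he⟩

lemma sigma_eq : sigmaNI G 1 = ∑ e ∈ G.edgeFinset, (fib G e).card := by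
  rw [sigmaNI, nearlyIndep_one_eq, Finset.card_biUnion fib_pairwise_disjoint]

lemma sumNI_eq : sumNI G 1 = ∑ e ∈ G.edgeFinset, ∑ S ∈ fib G e, S.card := by
  rw [sumNI, nearlyIndep_one_eq, Finset.sum_biUnion]
  intro e1 h1 e2 h2 hne
  exact fib_pairwise_disjoint e1 h1 e2 h2 hne

lemma ncard_nbhd (u v : V) :
    (nbhdUnion G s(u,v)).ncard = (G.neighborFinset u ∪ G.neighborFinset v).card := by
  have h : nbhdUnion G s(u,v) = ↑(G.neighborFinset u ∪ G.neighborFinset v) := by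
    ext w
    simp [nbhdUnion, SimpleGraph.mem_neighborFinset]
  rw [h, Set.ncard_coe_finset]

lemma NI_one_nonempty (hE : G.edgeFinset.Nonempty) : (nearlyIndep G 1).Nonempty := by
  obtain ⟨e, he⟩ := hE
  revert he
  induction e using Sym2.ind with
  | _ u v =>
    intro he
    have huv : G.Adj u v := by rwa [SimpleGraph.mem_edgeFinset, SimpleGraph.mem_edgeSet] at he
    refine ⟨{u,v}, ?_⟩
    rw [nearlyIndep_one_eq]
    exact Finset.mem_biUnion.mpr ⟨_, he, fib_pair huv⟩

lemma ncard_le_n (s : Set V) : s.ncard ≤ Fintype.card V := by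
  simpa [Set.ncard_univ, Nat.card_eq_fintype_card] using
    Set.ncard_le_ncard (Set.subset_univ s) Set.finite_univ

end Global

theorem stmt10 {V : Type*} [Fintype V] (G : SimpleGraph V) (hE : G.edgeFinset.Nonempty)
    (d₁ d₂ : ℕ)
    (hd₁ : d₁ = G.edgeFinset.inf' hE fun e => (nbhdUnion G e).ncard)
    (hd₂ : d₂ = G.edgeFinset.sup' hE fun e => (nbhdUnion G e).ncard) :
    2 ≤ (3 * (Fintype.card V : ℚ) + 2 - 3 * d₂) / ((Fintype.card V : ℚ) + 1 - d₂) ∧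
    (3 * (Fintype.card V : ℚ) + 2 - 3 * d₂) / ((Fintype.card V : ℚ) + 1 - d₂) ≤ avNI G 1 ∧
    avNI G 1 ≤ ((Fintype.card V : ℚ) + 4 - d₁) / 2 ∧
    ((Fintype.card V : ℚ) + 4 - d₁) / 2 ≤ ((Fintype.card V : ℚ) + 2) / 2 := by
  classical
  set n := Fintype.card V with hn
  -- basic bounds on d₁, d₂
  have hval2 : ∀ e ∈ G.edgeFinset, 2 ≤ (nbhdUnion G e).ncard := by
    intro e
    induction e using Sym2.ind with
    | _ u v =>
      intro he
      have huv : G.Adj u v := by rwa [SimpleGraph.mem_edgeFinset, SimpleGraph.mem_edgeSet] at he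
      rw [ncard_nbhd]
      have hsub : ({u,v} : Finset V) ⊆ G.neighborFinset u ∪ G.neighborFinset v := by
        intro x hx
        rcases Finset.mem_insert.mp hx with rfl | hx
        · refine Finset.mem_union_right _ ?_
          rw [SimpleGraph.mem_neighborFinset]
          exact huv.symm
        · rw [Finset.mem_singleton] at hx
          subst hx
          refine Finset.mem_union_left _ ?_
          rw [SimpleGraph.mem_neighborFinset]
          exact huv
      calc 2 = ({u,v} : Finset V).card := by
            rw [Finset.card_insert_of_notMem (by simpa using G.ne_of_adj huv),
              Finset.card_singleton]
        _ ≤ _ := Finset.card_le_card hsub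
  have hd₁2 : 2 ≤ d₁ := by
    rw [hd₁]
    exact Finset.le_inf' hE _ hval2
  have hd₁n : d₁ ≤ n := by
    rw [hd₁]
    obtain ⟨e, he⟩ := hE
    exact le_trans (Finset.inf'_le _ he) (ncard_le_n _)
  have hd₂n : d₂ ≤ n := by
    rw [hd₂]
    exact Finset.sup'_le hE _ fun e _ => ncard_le_n _
  -- positivity of σ₁
  have hNIne : (nearlyIndep G 1).Nonempty := NI_one_nonempty hE
  have hσpos : 0 < sigmaNI G 1 := Finset.card_pos.mpr hNIne
  -- per-edge bounds
  have hub : ∀ e ∈ G.edgeFinset,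
      2 * ∑ S ∈ fib G e, S.card ≤ (n - d₁ + 4) * (fib G e).card := by
    intro e
    induction e using Sym2.ind with
    | _ u v =>
      intro he
      have huv : G.Adj u v := by rwa [SimpleGraph.mem_edgeFinset, SimpleGraph.mem_edgeSet] at he
      have hNd : d₁ ≤ (G.neighborFinset u ∪ G.neighborFinset v).card := by
        rw [hd₁]
        exact le_trans (Finset.inf'_le _ he) (le_of_eq (ncard_nbhd u v))
      have hWc : (Finset.univ \ (G.neighborFinset u ∪ G.neighborFinset v)).card =
          n - (G.neighborFinset u ∪ G.neighborFinset v).card := by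
        rw [Finset.card_sdiff_of_subset (Finset.subset_univ _), Finset.card_univ]
      calc 2 * ∑ S ∈ fib G s(u,v), S.card
          ≤ ((Finset.univ \ (G.neighborFinset u ∪ G.neighborFinset v)).card + 4)
              * (fib G s(u,v)).card := fib_upper huv
        _ ≤ (n - d₁ + 4) * (fib G s(u,v)).card := by
            apply Nat.mul_le_mul_right
            rw [hWc]
            have := Nat.sub_le_sub_left hNd n
            omega
  have hlb : ∀ e ∈ G.edgeFinset,
      (3 * (n - d₂) + 2) * (fib G e).card ≤ (n - d₂ + 1) * ∑ S ∈ fib G e, S.card := by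
    intro e
    induction e using Sym2.ind with
    | _ u v =>
      intro he
      have huv : G.Adj u v := by rwa [SimpleGraph.mem_edgeFinset, SimpleGraph.mem_edgeSet] at he
      have hNd : (G.neighborFinset u ∪ G.neighborFinset v).card ≤ d₂ := by
        have h1 : (nbhdUnion G s(u,v)).ncard ≤ d₂ := by
          rw [hd₂]
          exact Finset.le_sup' (fun e => (nbhdUnion G e).ncard) he
        rwa [ncard_nbhd] at h1
      have hNn : (G.neighborFinset u ∪ G.neighborFinset v).card ≤ n :=
        le_trans (Finset.card_le_card (Finset.subset_univ _)) (le_of_eq Finset.card_univ)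
      apply fib_lower huv
      rw [Finset.card_sdiff_of_subset (Finset.subset_univ _), Finset.card_univ]
      omega
  -- global ℕ inequalities
  have hubG : 2 * sumNI G 1 ≤ (n - d₁ + 4) * sigmaNI G 1 := by
    rw [sumNI_eq, sigma_eq, Finset.mul_sum, Finset.mul_sum]
    exact Finset.sum_le_sum hub
  have hlbG : (3 * (n - d₂) + 2) * sigmaNI G 1 ≤ (n - d₂ + 1) * sumNI G 1 := by
    rw [sumNI_eq, sigma_eq, Finset.mul_sum, Finset.mul_sum]
    exact Finset.sum_le_sum hlb
  -- cast to ℚ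
  have hcast2 : ((n - d₂ : ℕ) : ℚ) = (n : ℚ) - d₂ := by
    rw [Nat.cast_sub hd₂n]
  have hcast1 : ((n - d₁ : ℕ) : ℚ) = (n : ℚ) - d₁ := by
    rw [Nat.cast_sub hd₁n]
  have hσQ : (0 : ℚ) < (sigmaNI G 1 : ℚ) := by exact_mod_cast hσpos
  have hd₂Q : (d₂ : ℚ) ≤ n := by exact_mod_cast hd₂n
  have hd₁Q2 : (2 : ℚ) ≤ d₁ := by exact_mod_cast hd₁2
  have hdenpos : (0 : ℚ) < (n : ℚ) + 1 - d₂ := by linarith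
  have hubQ : 2 * (sumNI G 1 : ℚ) ≤ ((n : ℚ) - d₁ + 4) * sigmaNI G 1 := by
    have h : ((2 * sumNI G 1 : ℕ) : ℚ) ≤ (((n - d₁ + 4) * sigmaNI G 1 : ℕ) : ℚ) := by
      exact_mod_cast hubG
    push_cast [hcast1] at h
    linarith
  have hlbQ : (3 * ((n : ℚ) - d₂) + 2) * sigmaNI G 1 ≤ ((n : ℚ) - d₂ + 1) * sumNI G 1 := by
    have h : (((3 * (n - d₂) + 2) * sigmaNI G 1 : ℕ) : ℚ) ≤ (((n - d₂ + 1) * sumNI G 1 : ℕ) : ℚ) := by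
      exact_mod_cast hlbG
    push_cast [hcast2] at h
    linarith
  have havg : avNI G 1 = (sumNI G 1 : ℚ) / (sigmaNI G 1 : ℚ) := by
    rw [avNI, if_neg (Nat.pos_iff_ne_zero.mp hσpos)]
  refine ⟨?_, ?_, ?_, ?_⟩
  · rw [le_div_iff₀ hdenpos]
    linarith
  · rw [havg, div_le_div_iff₀ hdenpos hσQ]
    nlinarith [hlbQ]
  · rw [havg, div_le_div_iff₀ hσQ (by norm_num : (0:ℚ) < 2)]
    nlinarith [hubQ]
  · have : (n : ℚ) + 4 - d₁ ≤ (n : ℚ) + 2 := by linarith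
    linarith
end
end

section
/- For every finite simple graph G on n vertices that has at least one edge, av_0(G) < n/2. -/
open scoped Classical
open Finset

noncomputable section

theorem stmt11 {V : Type*} [Fintype V] (G : SimpleGraph V) (hE : G.edgeSet.Nonempty) :
    avNI G 0 < (Fintype.card V : ℚ) / 2 := by
  classical
  set I := nearlyIndep G 0 with hI
  have hmem : ∀ S : Finset V, S ∈ I ↔ edgesIn G S = 0 := by
    intro S; simp [hI, nearlyIndep]
  have hmono : ∀ S T : Finset V, T ⊆ S → S ∈ I → T ∈ I := by
    intro S T hTS hS
    rw [hmem] at *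
    have h : edgesIn G T ≤ edgesIn G S := by
      exact Finset.card_le_card (Finset.monotone_filter_right _ (fun e _ he v hv => hTS (he v hv)))
    omega
  obtain ⟨e, he⟩ := hE
  induction e using Sym2.ind with
  | _ u v =>
  rw [SimpleGraph.mem_edgeSet] at he
  have huv : u ≠ v := he.ne
  set A : V → Finset (Finset V) := fun w => I.filter (fun S => w ∈ S) with hA
  set B : V → Finset (Finset V) := fun w => I.filter (fun S => w ∉ S) with hB
  have hAB : ∀ w, (A w).card + (B w).card = I.card := fun w =>
    Finset.card_filter_add_card_filter_not _
  have hmaps : ∀ w, ∀ S ∈ A w, S.erase w ∈ B w := by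
    intro w S hS
    rw [hA, Finset.mem_filter] at hS
    rw [hB, Finset.mem_filter]
    exact ⟨hmono S _ (Finset.erase_subset _ _) hS.1, Finset.notMem_erase _ _⟩
  have hinj : ∀ w, Set.InjOn (fun S : Finset V => S.erase w) (A w) := by
    intro w S hS T hT hST
    rw [hA, Finset.coe_filter, Set.mem_setOf_eq] at hS hT
    have := congrArg (insert w) hST
    simpa [Finset.insert_erase hS.2, Finset.insert_erase hT.2] using this
  have hle : ∀ w, (A w).card ≤ (B w).card := fun w =>
    Finset.card_le_card_of_injOn _ (hmaps w) (hinj w)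
  -- strict inequality at u
  have hvI : ({v} : Finset V) ∈ I := by
    rw [hmem, edgesIn, Finset.card_eq_zero, Finset.filter_eq_empty_iff]
    intro e he'
    induction e using Sym2.ind with
    | _ a b =>
    rw [SimpleGraph.mem_edgeFinset, SimpleGraph.mem_edgeSet] at he'
    intro h
    have ha := h a (Sym2.mem_mk_left a b)
    have hb := h b (Sym2.mem_mk_right a b)
    rw [Finset.mem_singleton] at ha hb
    subst ha; subst hb
    exact (G.irrefl he')
  have hvB : ({v} : Finset V) ∈ B u := by
    rw [hB, Finset.mem_filter]
    exact ⟨hvI, by simp [huv]⟩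
  have hnotim : ∀ S ∈ A u, S.erase u ≠ {v} := by
    intro S hS hcontra
    rw [hA, Finset.mem_filter] at hS
    have hSeq : S = insert u {v} := by
      rw [← hcontra, Finset.insert_erase hS.2]
    have h0 : edgesIn G S = 0 := (hmem S).1 hS.1
    have : s(u, v) ∈ G.edgeFinset.filter fun e => ∀ w ∈ e, w ∈ S := by
      rw [Finset.mem_filter, SimpleGraph.mem_edgeFinset, SimpleGraph.mem_edgeSet]
      refine ⟨he, ?_⟩
      intro w hw
      rw [Sym2.mem_iff] at hw
      rcases hw with h1 | h1 <;> subst h1 <;> simp [hSeq]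
    rw [edgesIn, Finset.card_eq_zero] at h0
    rw [h0] at this
    exact absurd this (Finset.notMem_empty _)
  have hltu : (A u).card < (B u).card := by
    have h1 : (A u).card ≤ ((B u).erase {v}).card := by
      apply Finset.card_le_card_of_injOn _ _ (hinj u)
      intro S hS
      exact Finset.mem_erase.2 ⟨hnotim S hS, hmaps u S hS⟩
    have h2 : ((B u).erase {v}).card < (B u).card :=
      Finset.card_erase_lt_of_mem hvB
    omega
  -- sum identity
  have hsum : sumNI G 0 = ∑ w : V, (A w).card := by
    rw [sumNI, ← hI]
    have : ∀ S : Finset V, S.card = ∑ w : V, if w ∈ S then 1 else 0 := by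
      intro S
      rw [Finset.sum_ite_mem, Finset.univ_inter, Finset.card_eq_sum_ones]
    calc ∑ S ∈ I, S.card = ∑ S ∈ I, ∑ w : V, (if w ∈ S then 1 else 0) := by
          exact Finset.sum_congr rfl fun S _ => this S
      _ = ∑ w : V, ∑ S ∈ I, (if w ∈ S then 1 else 0) := Finset.sum_comm
      _ = ∑ w : V, (A w).card := by
          refine Finset.sum_congr rfl fun w _ => ?_
          rw [hA, Finset.card_eq_sum_ones, Finset.sum_filter]
  have hnat : 2 * sumNI G 0 < Fintype.card V * sigmaNI G 0 := by
    have hcard : ∑ w : V, sigmaNI G 0 = Fintype.card V * sigmaNI G 0 := by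
      rw [Finset.sum_const, smul_eq_mul, Finset.card_univ]
    rw [hsum, Finset.mul_sum, ← hcard]
    apply Finset.sum_lt_sum
    · intro w _
      have := hle w
      have := hAB w
      rw [sigmaNI, ← hI]
      omega
    · refine ⟨u, Finset.mem_univ u, ?_⟩
      have := hAB u
      rw [sigmaNI, ← hI]
      omega
  have hσ : sigmaNI G 0 ≠ 0 := by
    have : (∅ : Finset V) ∈ I := by
      rw [hmem, edgesIn, Finset.card_eq_zero, Finset.filter_eq_empty_iff]
      intro e he'
      induction e using Sym2.ind with
      | _ a b =>
      intro h
      exact absurd (h a (Sym2.mem_mk_left a b)) (Finset.notMem_empty a)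
    rw [sigmaNI, ← hI]
    exact Finset.card_ne_zero_of_mem this
  rw [avNI, if_neg hσ, div_lt_div_iff₀ (by positivity) (by norm_num)]
  have h2 : ((2:ℚ) * sumNI G 0) < (Fintype.card V : ℚ) * sigmaNI G 0 := by
    exact_mod_cast hnat
  have hσpos : (0:ℚ) < sigmaNI G 0 := by positivity
  nlinarith [h2]
end
end

section
/- Let n ≥ 6 and let G_n denote the n-vertex graph that is the disjoint union of one edge K_2 and n − 2 isolated vertices. Then for every finite simple graph G on n vertices, av_1(G) ≤ n/2 + 1, and equality holds if and only if G is isomorphic to G_n. -/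
open scoped Classical
open Finset

noncomputable section

/-- The `n`-vertex graph consisting of a single edge (between `0` and `1`) together with
`n - 2` isolated vertices. -/
def singleEdgeGraph (n : ℕ) : SimpleGraph (Fin n) :=
  SimpleGraph.fromRel fun a b => a.val = 0 ∧ b.val = 1

namespace NIaux

variable {V : Type*} [Fintype V]

lemma mem_nearlyIndep {G : SimpleGraph V} {S : Finset V} {l : ℕ} :
    S ∈ nearlyIndep G l ↔ edgesIn G S = l := by
  simp [nearlyIndep]

lemma edgesIn_erase (G : SimpleGraph V) (S : Finset V) (v : V) :
    edgesIn G (S.erase v)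
      = ((G.edgeFinset.filter fun e => ∀ x ∈ e, x ∈ S).filter fun e => v ∉ e).card := by
  rw [edgesIn, Finset.filter_filter]
  congr 1
  apply Finset.filter_congr
  intro e _
  constructor
  · intro h
    exact ⟨fun x hx => (Finset.mem_erase.mp (h x hx)).2,
      fun hv => (Finset.mem_erase.mp (h v hv)).1 rfl⟩
  · intro h x hx
    exact Finset.mem_erase.mpr ⟨fun hxv => h.2 (hxv ▸ hx), h.1 x hx⟩

lemma structure1 {G : SimpleGraph V} {S : Finset V} (h : edgesIn G S = 1) :
    ∃ u w, G.Adj u w ∧ u ∈ S ∧ w ∈ S ∧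
      G.edgeFinset.filter (fun e => ∀ x ∈ e, x ∈ S) = {s(u, w)} := by
  obtain ⟨e0, he0⟩ := Finset.card_eq_one.mp h
  obtain ⟨u, w, rfl⟩ : ∃ u w, e0 = s(u, w) := by
    induction e0 using Sym2.ind with
    | _ x y => exact ⟨x, y, rfl⟩
  have hmem : s(u, w) ∈ G.edgeFinset.filter (fun e => ∀ x ∈ e, x ∈ S) := by
    rw [he0]; exact Finset.mem_singleton_self _
  rw [Finset.mem_filter] at hmem
  exact ⟨u, w, G.mem_edgeSet.mp (SimpleGraph.mem_edgeFinset.mp hmem.1),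
    hmem.2 u (Sym2.mem_mk_left u w), hmem.2 w (Sym2.mem_mk_right u w), he0⟩

lemma edgesIn_erase_eq {G : SimpleGraph V} {S : Finset V} {u w : V}
    (hfil : G.edgeFinset.filter (fun e => ∀ x ∈ e, x ∈ S) = {s(u, w)}) (v : V) :
    edgesIn G (S.erase v) = if v = u ∨ v = w then 0 else 1 := by
  rw [edgesIn_erase, hfil, Finset.filter_singleton]
  by_cases hv : v = u ∨ v = w
  · rw [if_pos hv, if_neg]
    · rfl
    · simp only [Sym2.mem_iff, not_not]
      exact hv
  · rw [if_neg hv, if_pos]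
    · exact Finset.card_singleton _
    · simp only [Sym2.mem_iff]
      exact hv

lemma card_filter_eq {G : SimpleGraph V} {S : Finset V} (h : edgesIn G S = 1) :
    (S.filter fun v => edgesIn G (S.erase v) = 1).card + 2 = S.card := by
  obtain ⟨u, w, hadj, hu, hw, hfil⟩ := structure1 h
  have hne := hadj.ne
  have hsub : ({u, w} : Finset V) ⊆ S := by
    intro x hx
    rcases Finset.mem_insert.mp hx with rfl | hx
    · exact hu
    · rw [Finset.mem_singleton] at hx; exact hx ▸ hw
  have h2 : ({u, w} : Finset V).card = 2 := by
    rw [Finset.card_insert_of_notMem (by simp [hne]), Finset.card_singleton]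
  have heq : (S.filter fun v => edgesIn G (S.erase v) = 1) = S \ {u, w} := by
    ext v
    simp only [Finset.mem_filter, Finset.mem_sdiff, Finset.mem_insert, Finset.mem_singleton]
    constructor
    · rintro ⟨hv, h1⟩
      refine ⟨hv, fun hc => ?_⟩
      rw [edgesIn_erase_eq hfil, if_pos hc] at h1
      exact absurd h1 (by norm_num)
    · rintro ⟨hv, hvc⟩
      exact ⟨hv, by rw [edgesIn_erase_eq hfil, if_neg hvc]⟩
  have hcard2 : 2 ≤ S.card := h2 ▸ Finset.card_le_card hsub
  rw [heq, Finset.card_sdiff_of_subset hsub, h2]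
  omega

def Af (G : SimpleGraph V) (v : V) : Finset (Finset V) :=
  (nearlyIndep G 1).filter fun S => v ∈ S ∧ edgesIn G (S.erase v) = 1

def Bf (G : SimpleGraph V) (v : V) : Finset (Finset V) :=
  (nearlyIndep G 1).filter fun S => v ∉ S

lemma sum_Af (G : SimpleGraph V) :
    (∑ v : V, (Af G v).card) + 2 * sigmaNI G 1 = sumNI G 1 := by
  have key : (∑ v : V, (Af G v).card)
      = ∑ S ∈ nearlyIndep G 1, (S.filter fun v => edgesIn G (S.erase v) = 1).card := by
    simp only [Af, Finset.card_filter]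
    rw [Finset.sum_comm]
    apply Finset.sum_congr rfl
    intro S _
    have hsplit : ∀ x : V, (if x ∈ S ∧ edgesIn G (S.erase x) = 1 then 1 else 0)
        = if x ∈ S then (if edgesIn G (S.erase x) = 1 then 1 else 0) else 0 := by
      intro x
      by_cases hx : x ∈ S <;> by_cases hq : edgesIn G (S.erase x) = 1 <;> simp [hx, hq]
    simp only [hsplit]
    rw [Finset.sum_ite_mem, Finset.univ_inter]
  rw [key, sumNI, sigmaNI]
  have h2 : 2 * (nearlyIndep G 1).card = ∑ _S ∈ nearlyIndep G 1, 2 := by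
    rw [Finset.sum_const, smul_eq_mul, mul_comm]
  rw [h2, ← Finset.sum_add_distrib]
  exact Finset.sum_congr rfl fun S hS => card_filter_eq (mem_nearlyIndep.mp hS)

lemma sum_Bf (G : SimpleGraph V) :
    (∑ v : V, (Bf G v).card) + sumNI G 1 = Fintype.card V * sigmaNI G 1 := by
  have key : (∑ v : V, ((nearlyIndep G 1).filter fun S => v ∈ S).card) = sumNI G 1 := by
    simp only [Finset.card_filter]
    rw [Finset.sum_comm, sumNI]
    apply Finset.sum_congr rfl
    intro S _
    rw [Finset.sum_ite_mem, Finset.univ_inter, Finset.sum_const, smul_eq_mul, mul_one]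
  have hsplit : ∀ v : V,
      (Bf G v).card + ((nearlyIndep G 1).filter fun S => v ∈ S).card
        = (nearlyIndep G 1).card := by
    intro v
    rw [add_comm]
    exact Finset.card_filter_add_card_filter_not (fun S => v ∈ S)
  calc (∑ v : V, (Bf G v).card) + sumNI G 1
      = ∑ v : V, ((Bf G v).card + ((nearlyIndep G 1).filter fun S => v ∈ S).card) := by
        rw [Finset.sum_add_distrib, key]
    _ = ∑ _v : V, (nearlyIndep G 1).card := Finset.sum_congr rfl fun v _ => hsplit v
    _ = Fintype.card V * sigmaNI G 1 := by
        rw [Finset.sum_const, smul_eq_mul, Finset.card_univ, sigmaNI]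

lemma Af_card_le (G : SimpleGraph V) (v : V) : (Af G v).card ≤ (Bf G v).card := by
  apply Finset.card_le_card_of_injOn (fun S => S.erase v)
  · intro S hS
    rw [Finset.mem_coe, Af, Finset.mem_filter] at hS
    exact Finset.mem_filter.mpr ⟨mem_nearlyIndep.mpr hS.2.2, Finset.notMem_erase v S⟩
  · intro S hS T hT h
    simp only [Finset.coe_filter, Set.mem_setOf_eq, Af, Finset.mem_filter] at hS hT
    rw [← Finset.insert_erase hS.2.1, ← Finset.insert_erase hT.2.1]
    exact congrArg (insert v) h

lemma Af_card_lt (G : SimpleGraph V) {T : Finset V} {x t : V}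
    (hT : T ∈ nearlyIndep G 1) (hx : x ∉ T) (ht : t ∈ T) (hadj : G.Adj x t) :
    (Af G x).card < (Bf G x).card := by
  have hTB : T ∈ Bf G x := Finset.mem_filter.mpr ⟨hT, hx⟩
  have hnotN : insert x T ∉ nearlyIndep G 1 := by
    intro hc
    rw [mem_nearlyIndep] at hc
    obtain ⟨u, w, huw, hu, hw, hfil⟩ := structure1 (mem_nearlyIndep.mp hT)
    have h1 : s(u, w) ∈ G.edgeFinset.filter (fun e => ∀ y ∈ e, y ∈ insert x T) := by
      have hm : s(u, w) ∈ G.edgeFinset.filter (fun e => ∀ y ∈ e, y ∈ T) := by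
        rw [hfil]; exact Finset.mem_singleton_self _
      rw [Finset.mem_filter] at hm ⊢
      exact ⟨hm.1, fun y hy => Finset.mem_insert_of_mem (hm.2 y hy)⟩
    have h2 : s(x, t) ∈ G.edgeFinset.filter (fun e => ∀ y ∈ e, y ∈ insert x T) := by
      rw [Finset.mem_filter]
      refine ⟨SimpleGraph.mem_edgeFinset.mpr (G.mem_edgeSet.mpr hadj), ?_⟩
      intro y hy
      rcases Sym2.mem_iff.mp hy with rfl | rfl
      · exact Finset.mem_insert_self _ _
      · exact Finset.mem_insert_of_mem ht
    have hne : s(u, w) ≠ s(x, t) := by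
      intro hcon
      have hxmem : x ∈ s(u, w) := hcon ▸ Sym2.mem_mk_left x t
      rcases Sym2.mem_iff.mp hxmem with rfl | rfl
      · exact hx hu
      · exact hx hw
    have h2le : 1 < edgesIn G (insert x T) :=
      Finset.one_lt_card.mpr ⟨_, h1, _, h2, hne⟩
    omega
  have hAle : (Af G x).card ≤ ((Bf G x).erase T).card := by
    apply Finset.card_le_card_of_injOn (fun S => S.erase x)
    · intro S hS
      rw [Finset.mem_coe, Af, Finset.mem_filter] at hS
      refine Finset.mem_erase.mpr ⟨?_, Finset.mem_filter.mpr
        ⟨mem_nearlyIndep.mpr hS.2.2, Finset.notMem_erase x S⟩⟩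
      intro hcon
      apply hnotN
      rw [← hcon, Finset.insert_erase hS.2.1]
      exact hS.1
    · intro S hS T' hT' h
      simp only [Finset.coe_filter, Set.mem_setOf_eq, Af, Finset.mem_filter] at hS hT'
      rw [← Finset.insert_erase hS.2.1, ← Finset.insert_erase hT'.2.1]
      exact congrArg (insert x) h
  have hTmem := Finset.card_erase_of_mem hTB
  have hpos : 0 < (Bf G x).card := Finset.card_pos.mpr ⟨T, hTB⟩
  omega

lemma edgesIn_pair {G : SimpleGraph V} {u w : V} (h : G.Adj u w) :
    edgesIn G ({u, w} : Finset V) = 1 := by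
  have hfil : G.edgeFinset.filter (fun e => ∀ x ∈ e, x ∈ ({u, w} : Finset V)) = {s(u, w)} := by
    ext e
    induction e using Sym2.ind with
    | _ p q =>
      simp only [Finset.mem_filter, SimpleGraph.mem_edgeFinset, SimpleGraph.mem_edgeSet,
        Finset.mem_singleton, Sym2.eq_iff]
      constructor
      · rintro ⟨hpq, hsub⟩
        have hp := hsub p (Sym2.mem_mk_left p q)
        have hq := hsub q (Sym2.mem_mk_right p q)
        simp only [Finset.mem_insert, Finset.mem_singleton] at hp hq
        rcases hp with rfl | rfl <;> rcases hq with rfl | rfl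
        · exact (hpq.ne rfl).elim
        · exact Or.inl ⟨rfl, rfl⟩
        · exact Or.inr ⟨rfl, rfl⟩
        · exact (hpq.ne rfl).elim
      · rintro (⟨rfl, rfl⟩ | ⟨rfl, rfl⟩)
        · refine ⟨h, fun x hx => ?_⟩
          rcases Sym2.mem_iff.mp hx with rfl | rfl <;> simp
        · refine ⟨h.symm, fun x hx => ?_⟩
          rcases Sym2.mem_iff.mp hx with rfl | rfl <;> simp
  rw [edgesIn, hfil, Finset.card_singleton]

lemma edgesIn_triple {G : SimpleGraph V} {u w a : V} (h : G.Adj u w)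
    (hau : ¬ G.Adj a u) (haw : ¬ G.Adj a w) (hneu : a ≠ u) (hnew : a ≠ w) :
    edgesIn G ({u, w, a} : Finset V) = 1 := by
  have hfil : G.edgeFinset.filter (fun e => ∀ x ∈ e, x ∈ ({u, w, a} : Finset V))
      = {s(u, w)} := by
    ext e
    induction e using Sym2.ind with
    | _ p q =>
      simp only [Finset.mem_filter, SimpleGraph.mem_edgeFinset, SimpleGraph.mem_edgeSet,
        Finset.mem_singleton, Sym2.eq_iff]
      constructor
      · rintro ⟨hpq, hsub⟩
        have hp := hsub p (Sym2.mem_mk_left p q)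
        have hq := hsub q (Sym2.mem_mk_right p q)
        simp only [Finset.mem_insert, Finset.mem_singleton] at hp hq
        rcases hp with rfl | rfl | rfl <;> rcases hq with rfl | rfl | rfl
        · exact (hpq.ne rfl).elim
        · exact Or.inl ⟨rfl, rfl⟩
        · exact absurd hpq.symm hau
        · exact Or.inr ⟨rfl, rfl⟩
        · exact (hpq.ne rfl).elim
        · exact absurd hpq.symm haw
        · exact absurd hpq hau
        · exact absurd hpq haw
        · exact (hpq.ne rfl).elim
      · rintro (⟨rfl, rfl⟩ | ⟨rfl, rfl⟩)
        · refine ⟨h, fun x hx => ?_⟩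
          rcases Sym2.mem_iff.mp hx with rfl | rfl <;> simp
        · refine ⟨h.symm, fun x hx => ?_⟩
          rcases Sym2.mem_iff.mp hx with rfl | rfl <;> simp
  rw [edgesIn, hfil, Finset.card_singleton]

lemma no_second_edge {G : SimpleGraph V}
    (hcards : ∀ v : V, (Af G v).card = (Bf G v).card)
    {u w a b : V} (huw : G.Adj u w) (hab : G.Adj a b)
    (hbu : b ≠ u) (hbw : b ≠ w) : False := by
  have hpair : ({u, w} : Finset V) ∈ nearlyIndep G 1 :=
    mem_nearlyIndep.mpr (edgesIn_pair huw)
  have hbmem : b ∉ ({u, w} : Finset V) := by simp [hbu, hbw]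
  by_cases h1 : G.Adj b u
  · exact absurd (hcards b)
      (Nat.ne_of_lt (Af_card_lt G hpair hbmem (by simp) h1))
  by_cases h2 : G.Adj b w
  · exact absurd (hcards b)
      (Nat.ne_of_lt (Af_card_lt G hpair hbmem (by simp) h2))
  have hau : a ≠ u := fun hc => h1 ((hc ▸ hab).symm)
  have haw : a ≠ w := fun hc => h2 ((hc ▸ hab).symm)
  have hamem : a ∉ ({u, w} : Finset V) := by simp [hau, haw]
  by_cases h3 : G.Adj a u
  · exact absurd (hcards a)
      (Nat.ne_of_lt (Af_card_lt G hpair hamem (by simp) h3))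
  by_cases h4 : G.Adj a w
  · exact absurd (hcards a)
      (Nat.ne_of_lt (Af_card_lt G hpair hamem (by simp) h4))
  have htrip : ({u, w, a} : Finset V) ∈ nearlyIndep G 1 :=
    mem_nearlyIndep.mpr (edgesIn_triple huw h3 h4 hau haw)
  have hbT : b ∉ ({u, w, a} : Finset V) := by
    simp only [Finset.mem_insert, Finset.mem_singleton]
    push_neg
    exact ⟨hbu, hbw, hab.ne'⟩
  have haT : a ∈ ({u, w, a} : Finset V) := by simp
  exact absurd (hcards b) (Nat.ne_of_lt (Af_card_lt G htrip hbT haT hab.symm))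

lemma uniqueEdge {G : SimpleGraph V}
    (hcards : ∀ v : V, (Af G v).card = (Bf G v).card) (hσ : sigmaNI G 1 ≠ 0) :
    ∃ u w, G.Adj u w ∧ ∀ a b, G.Adj a b ↔ (a = u ∧ b = w) ∨ (a = w ∧ b = u) := by
  obtain ⟨S, hS⟩ := Finset.card_pos.mp (Nat.pos_of_ne_zero hσ)
  obtain ⟨u, w, huw, -, -, -⟩ := structure1 (mem_nearlyIndep.mp hS)
  refine ⟨u, w, huw, fun a b => ⟨fun hab => ?_, ?_⟩⟩
  · by_contra hcon
    by_cases hb : b = u ∨ b = w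
    · have ha : a ≠ u ∧ a ≠ w := by
        constructor <;> rintro rfl
        · rcases hb with rfl | rfl
          · exact G.loopless.irrefl _ hab
          · exact hcon (Or.inl ⟨rfl, rfl⟩)
        · rcases hb with rfl | rfl
          · exact hcon (Or.inr ⟨rfl, rfl⟩)
          · exact G.loopless.irrefl _ hab
      exact no_second_edge hcards huw hab.symm ha.1 ha.2
    · push_neg at hb
      exact no_second_edge hcards huw hab hb.1 hb.2
  · rintro (⟨rfl, rfl⟩ | ⟨rfl, rfl⟩)
    · exact huw
    · exact huw.symm

lemma edgeFinset_eq {G : SimpleGraph V} {u w : V}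
    (h : ∀ a b, G.Adj a b ↔ (a = u ∧ b = w) ∨ (a = w ∧ b = u)) :
    G.edgeFinset = {s(u, w)} := by
  ext e
  induction e using Sym2.ind with
  | _ p q =>
    simp only [SimpleGraph.mem_edgeFinset, SimpleGraph.mem_edgeSet, Finset.mem_singleton,
      Sym2.eq_iff, h p q]

lemma edgesIn_eq_ite {G : SimpleGraph V} {u w : V}
    (hE : G.edgeFinset = {s(u, w)}) (S : Finset V) :
    edgesIn G S = if u ∈ S ∧ w ∈ S then 1 else 0 := by
  have hc : (∀ x ∈ s(u, w), x ∈ S) ↔ (u ∈ S ∧ w ∈ S) := by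
    constructor
    · intro h
      exact ⟨h u (Sym2.mem_mk_left u w), h w (Sym2.mem_mk_right u w)⟩
    · rintro ⟨h1, h2⟩ x hx
      rcases Sym2.mem_iff.mp hx with rfl | rfl <;> assumption
  rw [edgesIn, hE, Finset.filter_singleton]
  by_cases h : u ∈ S ∧ w ∈ S
  · rw [if_pos (hc.mpr h), if_pos h, Finset.card_singleton]
  · rw [if_neg (fun hh => h (hc.mp hh)), if_neg h, Finset.card_empty]

lemma cards_eq_of_unique {G : SimpleGraph V} {u w : V} (huw : G.Adj u w)
    (h : ∀ a b, G.Adj a b ↔ (a = u ∧ b = w) ∨ (a = w ∧ b = u)) (v : V) :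
    (Af G v).card = (Bf G v).card := by
  have hE := edgeFinset_eq h
  have hne := huw.ne
  have hmemN : ∀ S : Finset V, S ∈ nearlyIndep G 1 ↔ (u ∈ S ∧ w ∈ S) := by
    intro S
    rw [mem_nearlyIndep, edgesIn_eq_ite hE]
    by_cases h' : u ∈ S ∧ w ∈ S
    · simp [h']
    · simp [h']
  by_cases hv : v = u ∨ v = w
  · have hA : Af G v = ∅ := by
      rw [Finset.eq_empty_iff_forall_notMem]
      intro S hS
      rw [Af, Finset.mem_filter] at hS
      have h1 := hS.2.2
      rw [edgesIn_eq_ite hE] at h1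
      by_cases h2 : u ∈ S.erase v ∧ w ∈ S.erase v
      · rcases hv with rfl | rfl
        · exact (Finset.notMem_erase v S) h2.1
        · exact (Finset.notMem_erase v S) h2.2
      · rw [if_neg h2] at h1
        exact absurd h1 (by norm_num)
    have hB : Bf G v = ∅ := by
      rw [Finset.eq_empty_iff_forall_notMem]
      intro S hS
      rw [Bf, Finset.mem_filter] at hS
      have := (hmemN S).mp hS.1
      rcases hv with rfl | rfl
      · exact hS.2 this.1
      · exact hS.2 this.2
    rw [hA, hB]
  · push_neg at hv
    refine Finset.card_bij' (fun S _ => S.erase v) (fun T _ => insert v T) ?_ ?_ ?_ ?_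
    · intro S hS
      rw [Af, Finset.mem_filter] at hS
      exact Finset.mem_filter.mpr ⟨mem_nearlyIndep.mpr hS.2.2, Finset.notMem_erase v S⟩
    · intro T hT
      rw [Bf, Finset.mem_filter] at hT
      have hTN := (hmemN T).mp hT.1
      refine Finset.mem_filter.mpr ⟨(hmemN _).mpr
        ⟨Finset.mem_insert_of_mem hTN.1, Finset.mem_insert_of_mem hTN.2⟩,
        Finset.mem_insert_self v T, ?_⟩
      rw [Finset.erase_insert hT.2]
      exact mem_nearlyIndep.mp hT.1
    · intro S hS
      rw [Af, Finset.mem_filter] at hS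
      exact Finset.insert_erase hS.2.1
    · intro T hT
      rw [Bf, Finset.mem_filter] at hT
      exact Finset.erase_insert hT.2

lemma sigma_ne_zero_of_adj {G : SimpleGraph V} {u w : V} (huw : G.Adj u w) :
    sigmaNI G 1 ≠ 0 := by
  have : ({u, w} : Finset V) ∈ nearlyIndep G 1 := mem_nearlyIndep.mpr (edgesIn_pair huw)
  exact Finset.card_ne_zero_of_mem this


lemma fin_zero_ne_one {n : ℕ} [NeZero n] (hn : 6 ≤ n) : (0 : Fin n) ≠ (1 : Fin n) := by
  intro hc
  have h := congrArg Fin.val hc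
  rw [Fin.val_zero, Fin.val_one', Nat.mod_eq_of_lt (by omega)] at h
  omega

lemma fin_val_zero_iff {n : ℕ} [NeZero n] (x : Fin n) : x.val = 0 ↔ x = 0 :=
  ⟨fun h => Fin.ext (by rw [h, Fin.val_zero]), fun h => by rw [h, Fin.val_zero]⟩

lemma fin_val_one_iff {n : ℕ} [NeZero n] (hn : 6 ≤ n) (x : Fin n) : x.val = 1 ↔ x = 1 := by
  have h1 : (1 : Fin n).val = 1 := by rw [Fin.val_one', Nat.mod_eq_of_lt (by omega)]
  exact ⟨fun h => Fin.ext (by rw [h, h1]), fun h => by rw [h, h1]⟩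

lemma iso_of_unique {n : ℕ} (hn : 6 ≤ n) (hV : Fintype.card V = n) {G : SimpleGraph V}
    {u w : V} (huw : G.Adj u w)
    (h : ∀ a b, G.Adj a b ↔ (a = u ∧ b = w) ∨ (a = w ∧ b = u)) :
    Nonempty (G ≃g singleEdgeGraph n) := by
  haveI : NeZero n := ⟨by omega⟩
  have h01 := fin_zero_ne_one hn
  set e : V ≃ Fin n := Fintype.equivFinOfCardEq hV with he
  set π : Fin n ≃ Fin n := Equiv.swap (e u) 0 with hπ
  set ρ : Fin n ≃ Fin n := Equiv.swap (π (e w)) 1 with hρ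
  set ψ : V ≃ Fin n := e.trans (π.trans ρ) with hψ
  have hπu : π (e u) = 0 := Equiv.swap_apply_left _ _
  have hπw : π (e w) ≠ 0 := by
    rw [← hπu]
    intro hc
    exact huw.ne.symm (e.injective (π.injective hc))
  have hψu : ψ u = 0 := by
    show ρ (π (e u)) = 0
    rw [hπu, hρ]
    exact Equiv.swap_apply_of_ne_of_ne (Ne.symm hπw) h01
  have hψw : ψ w = 1 := by
    show ρ (π (e w)) = 1
    rw [hρ]
    exact Equiv.swap_apply_left _ _
  have hψ0 : ∀ a : V, ψ a = 0 ↔ a = u := fun a =>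
    ⟨fun hh => ψ.injective (hh.trans hψu.symm), fun hh => hh ▸ hψu⟩
  have hψ1 : ∀ a : V, ψ a = 1 ↔ a = w := fun a =>
    ⟨fun hh => ψ.injective (hh.trans hψw.symm), fun hh => hh ▸ hψw⟩
  refine ⟨⟨ψ, ?_⟩⟩
  intro a b
  show (singleEdgeGraph n).Adj (ψ a) (ψ b) ↔ G.Adj a b
  rw [h a b]
  simp only [singleEdgeGraph, SimpleGraph.fromRel_adj, fin_val_zero_iff, fin_val_one_iff hn,
    hψ0, hψ1]
  constructor
  · rintro ⟨-, (⟨h1, h2⟩ | ⟨h1, h2⟩)⟩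
    · exact Or.inl ⟨h1, h2⟩
    · exact Or.inr ⟨h2, h1⟩
  · rintro (⟨rfl, rfl⟩ | ⟨rfl, rfl⟩)
    · exact ⟨ψ.injective.ne huw.ne, Or.inl ⟨rfl, rfl⟩⟩
    · exact ⟨ψ.injective.ne huw.ne.symm, Or.inr ⟨rfl, rfl⟩⟩

lemma unique_of_iso {n : ℕ} (hn : 6 ≤ n) {G : SimpleGraph V} (φ : G ≃g singleEdgeGraph n) :
    ∃ u w, G.Adj u w ∧ ∀ a b, G.Adj a b ↔ (a = u ∧ b = w) ∨ (a = w ∧ b = u) := by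
  haveI : NeZero n := ⟨by omega⟩
  have h01 := fin_zero_ne_one hn
  have hAdj : ∀ a b : V, G.Adj a b ↔ (singleEdgeGraph n).Adj (φ a) (φ b) :=
    fun a b => (φ.map_rel_iff).symm
  have hkey : ∀ a b : V, G.Adj a b ↔
      (a = φ.symm 0 ∧ b = φ.symm 1) ∨ (a = φ.symm 1 ∧ b = φ.symm 0) := by
    intro a b
    rw [hAdj a b]
    show (SimpleGraph.fromRel fun a b : Fin n => a.val = 0 ∧ b.val = 1).Adj (φ a) (φ b) ↔ _
    simp only [SimpleGraph.fromRel_adj, fin_val_zero_iff, fin_val_one_iff hn]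
    have e0 : ∀ c : V, φ c = 0 ↔ c = φ.symm 0 := by
      intro c
      constructor
      · intro hh; rw [← hh]; exact (φ.toEquiv.symm_apply_apply c).symm
      · intro hh; rw [hh]; exact φ.toEquiv.apply_symm_apply 0
    have e1 : ∀ c : V, φ c = 1 ↔ c = φ.symm 1 := by
      intro c
      constructor
      · intro hh; rw [← hh]; exact (φ.toEquiv.symm_apply_apply c).symm
      · intro hh; rw [hh]; exact φ.toEquiv.apply_symm_apply 1
    rw [e0 a, e1 b, e0 b, e1 a]
    constructor
    · rintro ⟨-, (⟨h1, h2⟩ | ⟨h1, h2⟩)⟩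
      · exact Or.inl ⟨h1, h2⟩
      · exact Or.inr ⟨h2, h1⟩
    · have hne : φ.symm 0 ≠ φ.symm 1 := fun hc => h01 (φ.toEquiv.symm.injective hc)
      rintro (⟨rfl, rfl⟩ | ⟨rfl, rfl⟩)
      · exact ⟨by rw [(e0 _).mpr rfl, (e1 _).mpr rfl]; exact h01, Or.inl ⟨rfl, rfl⟩⟩
      · exact ⟨by rw [(e1 _).mpr rfl, (e0 _).mpr rfl]; exact h01.symm, Or.inr ⟨rfl, rfl⟩⟩
  refine ⟨φ.symm 0, φ.symm 1, ?_, hkey⟩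
  rw [hkey]
  exact Or.inl ⟨rfl, rfl⟩

end NIaux

open NIaux

theorem stmt12 {V : Type*} [Fintype V] (n : ℕ) (hn : 6 ≤ n) (hV : Fintype.card V = n)
    (G : SimpleGraph V) :
    avNI G 1 ≤ (n : ℚ) / 2 + 1 ∧
    (avNI G 1 = (n : ℚ) / 2 + 1 ↔ Nonempty (G ≃g singleEdgeGraph n)) := by
  have hsumA := sum_Af G
  have hsumB := sum_Bf G
  rw [hV] at hsumB
  have hle : ∀ v : V, (Af G v).card ≤ (Bf G v).card := Af_card_le G
  have hsum_le : (∑ v : V, (Af G v).card) ≤ ∑ v : V, (Bf G v).card :=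
    Finset.sum_le_sum fun v _ => hle v
  have hexp : (n + 2) * sigmaNI G 1 = n * sigmaNI G 1 + 2 * sigmaNI G 1 := by ring
  have hmain : 2 * sumNI G 1 ≤ (n + 2) * sigmaNI G 1 := by
    rw [hexp]; omega
  have heqiff : (2 * sumNI G 1 = (n + 2) * sigmaNI G 1)
      ↔ ∀ v : V, (Af G v).card = (Bf G v).card := by
    rw [hexp]
    constructor
    · intro h
      have hs : (∑ v : V, (Af G v).card) = ∑ v : V, (Bf G v).card := by omega
      exact fun v => (Finset.sum_eq_sum_iff_of_le fun v _ => hle v).mp hs v (Finset.mem_univ v)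
    · intro h
      have hs : (∑ v : V, (Af G v).card) = ∑ v : V, (Bf G v).card :=
        Finset.sum_congr rfl fun v _ => h v
      omega
  have hn6 : (6 : ℚ) ≤ (n : ℚ) := by exact_mod_cast hn
  constructor
  · rw [avNI]
    split_ifs with h0
    · linarith
    · have hσpos : (0 : ℚ) < (sigmaNI G 1 : ℚ) := by
        exact_mod_cast Nat.pos_of_ne_zero h0
      rw [div_le_iff₀ hσpos]
      have hc : (2 * sumNI G 1 : ℚ) ≤ ((n : ℚ) + 2) * (sigmaNI G 1 : ℚ) := by
        exact_mod_cast hmain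
      linarith
  · constructor
    · intro heq
      have hσ : sigmaNI G 1 ≠ 0 := by
        intro h0
        rw [avNI, if_pos h0] at heq
        linarith
      have hσpos : (0 : ℚ) < (sigmaNI G 1 : ℚ) := by
        exact_mod_cast Nat.pos_of_ne_zero hσ
      rw [avNI, if_neg hσ] at heq
      have h2s : 2 * sumNI G 1 = (n + 2) * sigmaNI G 1 := by
        have h1 : (sumNI G 1 : ℚ) = ((n : ℚ) / 2 + 1) * (sigmaNI G 1 : ℚ) := by
          rw [div_eq_iff (ne_of_gt hσpos)] at heq
          exact heq
        have h2 : (2 * sumNI G 1 : ℚ) = ((n : ℚ) + 2) * (sigmaNI G 1 : ℚ) := by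
          push_cast
          push_cast at h1
          linarith
        exact_mod_cast h2
      obtain ⟨u, w, huw, hu⟩ := uniqueEdge (heqiff.mp h2s) hσ
      exact iso_of_unique hn hV huw hu
    · rintro ⟨φ⟩
      obtain ⟨u, w, huw, hu⟩ := unique_of_iso hn φ
      have h2s : 2 * sumNI G 1 = (n + 2) * sigmaNI G 1 :=
        heqiff.mpr fun v => cards_eq_of_unique huw hu v
      have hσ : sigmaNI G 1 ≠ 0 := sigma_ne_zero_of_adj huw
      have hσpos : (0 : ℚ) < (sigmaNI G 1 : ℚ) := by
        exact_mod_cast Nat.pos_of_ne_zero hσ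
      rw [avNI, if_neg hσ, div_eq_iff (ne_of_gt hσpos)]
      have h2 : (2 * sumNI G 1 : ℚ) = ((n : ℚ) + 2) * (sigmaNI G 1 : ℚ) := by
        exact_mod_cast h2s
      linarith
end
end

section
/- For every n ≥ 4, the tree R_n obtained from the star S_{n−1} by attaching a pendant edge at one of its leaves satisfies av_1(R_n) = ( 5n − 13 + (n+1)·2^{n−4} ) / ( 2n − 5 + 2^{n−3} ). Moreover av_1(R_n) < (n+1)/2 for all n ≥ 4, and av_1(R_n) > n/2 for all n ≥ 4 with n ∉ {6, 7, 8}. -/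
open scoped Classical
open Finset

noncomputable section

/-- The tree `R n` on vertex set `Fin n`: the star with centre `0` and leaves
`1, …, n - 2`, together with an extra vertex `n - 1` joined to the leaf `1`
(i.e. the star on `n - 1` vertices with one edge subdivided once). -/
def Rgraph (n : ℕ) : SimpleGraph (Fin n) :=
  SimpleGraph.fromRel fun a b =>
    (a.val = 0 ∧ b.val ≠ 0 ∧ b.val ≠ n - 1) ∨ (a.val = 1 ∧ b.val = n - 1)

namespace Aux
variable (m : ℕ)

def lastv : Fin (m+4) := ⟨m+3, by omega⟩

def middle : Finset (Fin (m+4)) := Finset.univ.filter fun v => v ≠ 0 ∧ v ≠ lastv m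

lemma mem_middle {v : Fin (m+4)} : v ∈ middle m ↔ v.val ≠ 0 ∧ v.val ≠ m + 3 := by
  simp [middle, Fin.ext_iff, lastv, -Fin.val_eq_zero_iff]

lemma card_middle : (middle m).card = m + 2 := by
  have h : middle m = Finset.univ \ {0, lastv m} := by
    ext v; simp [middle, Fin.ext_iff, lastv, and_comm, -Fin.val_eq_zero_iff]
  rw [h, Finset.card_sdiff_of_subset (by simp)]
  rw [Finset.card_pair (by simp [Fin.ext_iff, lastv])]
  simp

lemma adj_iff (a b : Fin (m+4)) : (Rgraph (m+4)).Adj a b ↔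
    a ≠ b ∧ ((a.val = 0 ∧ b.val ≠ 0 ∧ b.val ≠ m+3) ∨ (a.val = 1 ∧ b.val = m+3) ∨
      (b.val = 0 ∧ a.val ≠ 0 ∧ a.val ≠ m+3) ∨ (b.val = 1 ∧ a.val = m+3)) := by
  simp only [Rgraph, SimpleGraph.fromRel_adj, show m+4-1 = m+3 by omega]
  tauto

lemma edgeFinset_eq :
    (Rgraph (m+4)).edgeFinset =
      (middle m).image (fun i => s((0 : Fin (m+4)), i)) ∪ {s((1 : Fin (m+4)), lastv m)} := by
  ext e
  induction e using Sym2.ind with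
  | _ a b =>
    simp only [SimpleGraph.mem_edgeFinset, SimpleGraph.mem_edgeSet, adj_iff,
      Finset.mem_union, Finset.mem_image, Finset.mem_singleton, mem_middle, Sym2.eq_iff,
      Fin.ext_iff, lastv, ne_eq, Fin.val_zero, Fin.val_one]
    constructor
    · rintro ⟨hne, h⟩
      rcases h with ⟨h1, h2, h3⟩ | ⟨h1, h2⟩ | ⟨h1, h2, h3⟩ | ⟨h1, h2⟩
      · exact Or.inl ⟨b, ⟨h2, h3⟩, Or.inl ⟨by omega, by omega⟩⟩
      · exact Or.inr (Or.inl ⟨by omega, by omega⟩)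
      · exact Or.inl ⟨a, ⟨h2, h3⟩, Or.inr ⟨by omega, by omega⟩⟩
      · exact Or.inr (Or.inr ⟨by omega, by omega⟩)
    · rintro (⟨i, ⟨hi0, hil⟩, (⟨h1, h2⟩ | ⟨h1, h2⟩)⟩ | (⟨h1, h2⟩ | ⟨h1, h2⟩)) <;>
        exact ⟨by omega, by omega⟩
lemma zero_ne_lastv : (0 : Fin (m+4)) ≠ lastv m := by simp [Fin.ext_iff, lastv]
lemma one_ne_lastv : (1 : Fin (m+4)) ≠ lastv m := by simp [Fin.ext_iff, lastv]
lemma zero_ne_one : (0 : Fin (m+4)) ≠ 1 := by simp [Fin.ext_iff]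

lemma edgesIn_eq (S : Finset (Fin (m+4))) :
    edgesIn (Rgraph (m+4)) S =
      (if (0 : Fin (m+4)) ∈ S then (S.filter fun v => v ≠ 0 ∧ v ≠ lastv m).card else 0)
      + (if ((1 : Fin (m+4)) ∈ S ∧ lastv m ∈ S) then 1 else 0) := by
  unfold edgesIn
  rw [edgeFinset_eq, Finset.filter_union]
  rw [Finset.card_union_of_disjoint]
  · congr 1
    · -- image part
      have hinj : Function.Injective (fun i : Fin (m+4) => s((0 : Fin (m+4)), i)) := by
        intro i j h
        simp only [Sym2.eq_iff] at h
        rcases h with ⟨-, h⟩ | ⟨h1, h2⟩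
        · exact h
        · rw [← h1, h2]
      simp only [Finset.filter_image, Finset.filter_congr_decidable]
      rw [Finset.card_image_of_injective _ hinj]
      by_cases h0 : (0 : Fin (m+4)) ∈ S
      · rw [if_pos h0]
        congr 1
        ext v
        simp only [Finset.mem_filter, middle, Finset.mem_univ, true_and, Sym2.mem_iff,
          forall_eq_or_imp, forall_eq]
        tauto
      · rw [if_neg h0]
        rw [Finset.card_eq_zero]
        ext i
        simp only [Finset.mem_filter, Finset.notMem_empty, iff_false, not_and]
        intro _ hall
        exact h0 (hall 0 (Sym2.mem_iff.2 (Or.inl rfl)))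
    · rw [Finset.filter_singleton]
      by_cases h : (1 : Fin (m+4)) ∈ S ∧ lastv m ∈ S
      · rw [if_pos, if_pos h, Finset.card_singleton]
        intro u hu
        rw [Sym2.mem_iff] at hu
        rcases hu with rfl | rfl
        · exact h.1
        · exact h.2
      · rw [if_neg, if_neg h, Finset.card_empty]
        intro hall
        exact h ⟨hall 1 (Sym2.mem_iff.2 (Or.inl rfl)), hall (lastv m) (Sym2.mem_iff.2 (Or.inr rfl))⟩
  · refine Finset.disjoint_left.2 ?_
    intro e he he'
    simp only [Finset.mem_filter, Finset.mem_image, Finset.mem_singleton] at he he'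
    obtain ⟨⟨i, hi, rfl⟩, -⟩ := he
    have := he'.1
    simp only [Sym2.eq_iff] at this
    rcases this with ⟨h1, -⟩ | ⟨h1, -⟩
    · exact zero_ne_one m h1
    · exact zero_ne_lastv m h1


lemma mem_nearlyIndep (S : Finset (Fin (m+4))) :
    S ∈ nearlyIndep (Rgraph (m+4)) 1 ↔
      (((0:Fin (m+4)) ∈ S ∧ (S.filter fun v => v ≠ 0 ∧ v ≠ lastv m).card = 1 ∧
        ¬((1:Fin (m+4)) ∈ S ∧ lastv m ∈ S)) ∨
      ((0:Fin (m+4)) ∉ S ∧ (1:Fin (m+4)) ∈ S ∧ lastv m ∈ S)) := by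
  have key : (1:Fin (m+4)) ∈ S → 1 ≤ (S.filter fun v => v ≠ 0 ∧ v ≠ lastv m).card := by
    intro h1
    exact Finset.card_pos.2 ⟨1, Finset.mem_filter.2 ⟨h1, (zero_ne_one m).symm, one_ne_lastv m⟩⟩
  simp only [nearlyIndep, Finset.mem_filter, Finset.mem_univ, true_and, edgesIn_eq]
  by_cases h0 : (0:Fin (m+4)) ∈ S <;> by_cases h1 : (1:Fin (m+4)) ∈ S ∧ lastv m ∈ S
  · rw [if_pos h0, if_pos h1]
    have := key h1.1
    constructor
    · intro hc; omega
    · rintro (⟨-, -, hno⟩ | ⟨hno, -⟩)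
      · exact absurd h1 hno
      · exact absurd h0 hno
  · rw [if_pos h0, if_neg h1, add_zero]
    constructor
    · intro hc; exact Or.inl ⟨h0, hc, h1⟩
    · rintro (⟨-, hc, -⟩ | ⟨hno, -⟩)
      · exact hc
      · exact absurd h0 hno
  · rw [if_neg h0, if_pos h1]
    exact iff_of_true rfl (Or.inr ⟨h0, h1⟩)
  · rw [if_neg h0, if_neg h1]
    constructor
    · intro hc; exact absurd hc (by omega)
    · rintro (⟨hc, -⟩ | ⟨-, hc⟩)
      · exact absurd hc h0
      · exact absurd hc h1

def T1 : Finset (Finset (Fin (m+4))) :=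
  (nearlyIndep (Rgraph (m+4)) 1).filter (fun S => (0:Fin (m+4)) ∈ S)

def T2 : Finset (Finset (Fin (m+4))) :=
  (nearlyIndep (Rgraph (m+4)) 1).filter (fun S => (0:Fin (m+4)) ∉ S)

lemma mem_T1 (S : Finset (Fin (m+4))) :
    S ∈ T1 m ↔ ((0:Fin (m+4)) ∈ S ∧ (S.filter fun v => v ≠ 0 ∧ v ≠ lastv m).card = 1 ∧
      ¬((1:Fin (m+4)) ∈ S ∧ lastv m ∈ S)) := by
  rw [T1, Finset.mem_filter, mem_nearlyIndep]
  tauto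

lemma mem_T2 (S : Finset (Fin (m+4))) :
    S ∈ T2 m ↔ ((0:Fin (m+4)) ∉ S ∧ (1:Fin (m+4)) ∈ S ∧ lastv m ∈ S) := by
  rw [T2, Finset.mem_filter, mem_nearlyIndep]
  tauto

def fset : Fin (m+4) × Bool → Finset (Fin (m+4)) :=
  fun p => if p.2 then {0, p.1, lastv m} else {0, p.1}

lemma mem_fset (p : Fin (m+4) × Bool) (v : Fin (m+4)) :
    v ∈ fset m p ↔ v = 0 ∨ v = p.1 ∨ (p.2 = true ∧ v = lastv m) := by
  rcases p with ⟨i, b⟩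
  cases b <;> simp [fset]

def D : Finset (Fin (m+4) × Bool) :=
  ((middle m) ×ˢ (Finset.univ : Finset Bool)).erase (1, true)

lemma one_mem_middle : (1 : Fin (m+4)) ∈ middle m := by
  rw [mem_middle, Fin.val_one]; omega

lemma mem_D (p : Fin (m+4) × Bool) :
    p ∈ D m ↔ p.1 ∈ middle m ∧ ¬(p.1 = 1 ∧ p.2 = true) := by
  rw [D, Finset.mem_erase, Finset.mem_product]
  constructor
  · rintro ⟨h1, h2, -⟩
    refine ⟨h2, fun h => h1 ?_⟩
    exact Prod.ext h.1 h.2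
  · rintro ⟨h1, h2⟩
    refine ⟨fun h => h2 ⟨by rw [h], by rw [h]⟩, h1, Finset.mem_univ _⟩

lemma fset_card (p : Fin (m+4) × Bool) (hp : p.1 ∈ middle m) :
    (fset m p).card = if p.2 then 3 else 2 := by
  obtain ⟨hp0, hpl⟩ := (mem_middle m).1 hp
  rcases p with ⟨i, b⟩
  cases b
  · simpa [fset] using Finset.card_pair (fun h => hp0 (by rw [← h]; rfl))
  · simp only [fset, if_pos]
    refine Finset.card_eq_three.2 ⟨0, i, lastv m, ?_, zero_ne_lastv m, ?_, rfl⟩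
    · exact fun h => hp0 (by rw [← h]; rfl)
    · exact fun h => hpl (by rw [h]; rfl)

lemma fset_mem_T1 (p : Fin (m+4) × Bool) (hp : p ∈ D m) : fset m p ∈ T1 m := by
  rw [mem_D] at hp
  obtain ⟨hmid, hne⟩ := hp
  obtain ⟨hp0, hpl⟩ := (mem_middle m).1 hmid
  rw [mem_T1]
  refine ⟨(mem_fset m p 0).2 (Or.inl rfl), ?_, ?_⟩
  · have : (fset m p).filter (fun v => v ≠ 0 ∧ v ≠ lastv m) = {p.1} := by
      ext v
      simp only [Finset.mem_filter, mem_fset, Finset.mem_singleton]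
      constructor
      · rintro ⟨rfl | rfl | ⟨hb, rfl⟩, hv0, hvl⟩
        · exact absurd rfl hv0
        · rfl
        · exact absurd rfl hvl
      · rintro rfl
        exact ⟨Or.inr (Or.inl rfl), fun h => hp0 (by rw [h]; rfl),
          fun h => hpl (by rw [Fin.ext_iff] at h; exact h)⟩
    rw [this, Finset.card_singleton]
  · rintro ⟨h1, hl⟩
    rw [mem_fset] at h1 hl
    rcases hl with hl | hl | ⟨hb, -⟩
    · exact zero_ne_lastv m hl.symm
    · exact hpl (by rw [← hl]; rfl)
    · rcases h1 with h1 | h1 | ⟨-, h1⟩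
      · exact zero_ne_one m h1.symm
      · exact hne ⟨h1.symm, hb⟩
      · exact one_ne_lastv m h1

lemma fset_inj (p : Fin (m+4) × Bool) (hp : p ∈ D m) (q : Fin (m+4) × Bool) (hq : q ∈ D m)
    (h : fset m p = fset m q) : p = q := by
  rw [mem_D] at hp hq
  obtain ⟨hp0, hpl⟩ := (mem_middle m).1 hp.1
  obtain ⟨hq0, hql⟩ := (mem_middle m).1 hq.1
  have h1 : p.1 = q.1 := by
    have := (mem_fset m q p.1).1 (h ▸ (mem_fset m p p.1).2 (Or.inr (Or.inl rfl)))
    rcases this with h' | h' | ⟨-, h'⟩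
    · exact absurd (by rw [h']; rfl) hp0
    · exact h'
    · exact absurd (by rw [h']; rfl) hpl
  have h2 : p.2 = q.2 := by
    have hiff : lastv m ∈ fset m p ↔ lastv m ∈ fset m q := by rw [h]
    rw [mem_fset, mem_fset] at hiff
    have e1 : ∀ r : Fin (m+4) × Bool, r.1 ∈ middle m →
        ((lastv m = 0 ∨ lastv m = r.1 ∨ (r.2 = true ∧ lastv m = lastv m)) ↔ r.2 = true) := by
      intro r hr
      obtain ⟨-, hrl⟩ := (mem_middle m).1 hr
      constructor
      · rintro (h' | h' | ⟨h', -⟩)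
        · exact absurd h'.symm (zero_ne_lastv m)
        · exact absurd (by rw [← h']; rfl) hrl
        · exact h'
      · exact fun h' => Or.inr (Or.inr ⟨h', rfl⟩)
    rw [e1 p hp.1, e1 q hq.1] at hiff
    cases hpq : p.2 <;> cases hqq : q.2 <;> simp_all
  exact Prod.ext h1 h2

lemma fset_surj (S : Finset (Fin (m+4))) (hS : S ∈ T1 m) :
    ∃ p, ∃ _ : p ∈ D m, fset m p = S := by
  rw [mem_T1] at hS
  obtain ⟨h0, hcard, hno⟩ := hS
  obtain ⟨i, hi⟩ := Finset.card_eq_one.1 hcard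
  have hiS : i ∈ S ∧ i ≠ 0 ∧ i ≠ lastv m := by
    have : i ∈ S.filter (fun v => v ≠ 0 ∧ v ≠ lastv m) := by rw [hi]; exact Finset.mem_singleton_self i
    rw [Finset.mem_filter] at this
    exact ⟨this.1, this.2⟩
  have himid : i ∈ middle m := by
    rw [mem_middle]
    exact ⟨fun h => hiS.2.1 (Fin.ext h), fun h => hiS.2.2 (Fin.ext h)⟩
  set b : Bool := if lastv m ∈ S then true else false with hb
  refine ⟨(i, b), ?_, ?_⟩
  · rw [mem_D]
    refine ⟨himid, ?_⟩
    rintro ⟨rfl, hbt⟩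
    rw [hb] at hbt
    split_ifs at hbt with hls
    · exact hno ⟨hiS.1, hls⟩
  · ext v
    rw [mem_fset]
    constructor
    · rintro (rfl | rfl | ⟨hbt, rfl⟩)
      · exact h0
      · exact hiS.1
      · rw [hb] at hbt; split_ifs at hbt with hls
        · exact hls
    · intro hv
      by_cases hv0 : v = 0
      · exact Or.inl hv0
      · by_cases hvl : v = lastv m
        · subst hvl
          refine Or.inr (Or.inr ⟨?_, rfl⟩)
          rw [hb, if_pos hv]
        · have : v ∈ S.filter (fun u => u ≠ 0 ∧ u ≠ lastv m) :=
            Finset.mem_filter.2 ⟨hv, hv0, hvl⟩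
          rw [hi, Finset.mem_singleton] at this
          exact Or.inr (Or.inl this)

lemma card_T1 : (T1 m).card = 2 * m + 3 := by
  have h := Finset.card_bij (fun p (_ : p ∈ D m) => fset m p) (fset_mem_T1 m)
    (fset_inj m) (fset_surj m)
  have hmem : ((1 : Fin (m+4)), true) ∈ (middle m) ×ˢ (Finset.univ : Finset Bool) :=
    Finset.mem_product.2 ⟨one_mem_middle m, Finset.mem_univ _⟩
  have hb : (Finset.univ : Finset Bool).card = 2 := by simp
  have hD : (D m).card = 2 * m + 3 := by
    rw [D, Finset.card_erase_of_mem hmem, Finset.card_product, card_middle, hb]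
    omega
  omega

lemma sum_T1 : ∑ S ∈ T1 m, S.card = 5 * m + 7 := by
  have h : ∑ p ∈ D m, (fset m p).card = ∑ S ∈ T1 m, S.card :=
    Finset.sum_bij (fun p (_ : p ∈ D m) => fset m p) (fset_mem_T1 m)
      (fset_inj m) (fset_surj m) (fun p _ => rfl)
  have hmem : ((1 : Fin (m+4)), true) ∈ (middle m) ×ˢ (Finset.univ : Finset Bool) :=
    Finset.mem_product.2 ⟨one_mem_middle m, Finset.mem_univ _⟩
  have htot : (fset m ((1 : Fin (m+4)), true)).card +
      ∑ p ∈ ((middle m) ×ˢ (Finset.univ : Finset Bool)).erase ((1 : Fin (m+4)), true),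
        (fset m p).card =
      ∑ p ∈ (middle m) ×ˢ (Finset.univ : Finset Bool), (fset m p).card :=
    Finset.add_sum_erase _ (fun p => (fset m p).card) hmem
  have hc : (fset m ((1 : Fin (m+4)), true)).card = 3 := by
    rw [fset_card m _ (one_mem_middle m)]
    rfl
  have h3 : ∑ p ∈ (middle m) ×ˢ (Finset.univ : Finset Bool), (fset m p).card = 5 * (m + 2) := by
    rw [Finset.sum_product]
    have hrow : ∀ i ∈ middle m, ∑ b : Bool, (fset m (i, b)).card = 5 := by
      intro i hi
      rw [Fintype.sum_bool, fset_card m (i, true) hi, fset_card m (i, false) hi]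
      rfl
    rw [Finset.sum_congr rfl hrow, Finset.sum_const, card_middle, smul_eq_mul]
    ring
  have hD : ∑ p ∈ D m, (fset m p).card =
      ∑ p ∈ ((middle m) ×ˢ (Finset.univ : Finset Bool)).erase ((1 : Fin (m+4)), true),
        (fset m p).card := by rw [D]
  omega

lemma sum_powerset_card {α : Type*} [DecidableEq α] (s : Finset α) :
    ∑ A ∈ s.powerset, A.card = s.card * 2 ^ (s.card - 1) := by
  induction s using Finset.induction_on with
  | empty => simp
  | @insert a s ha ih =>
    have hdisj : Disjoint s.powerset (s.powerset.image (insert a)) := by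
      rw [Finset.disjoint_left]
      intro B hB hB'
      obtain ⟨C, hC, rfl⟩ := Finset.mem_image.1 hB'
      exact ha (Finset.mem_powerset.1 hB (Finset.mem_insert_self a C))
    rw [Finset.powerset_insert, Finset.sum_union hdisj, Finset.sum_image ?inj]
    case inj =>
      intro x hx y hy hxy
      have hax : a ∉ x := fun h => ha (Finset.mem_powerset.1 hx h)
      have hay : a ∉ y := fun h => ha (Finset.mem_powerset.1 hy h)
      rw [← Finset.erase_insert hax, ← Finset.erase_insert hay, hxy]
    have hcard : ∀ C ∈ s.powerset, (insert a C).card = C.card + 1 := by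
      intro C hC
      exact Finset.card_insert_of_notMem (fun h => ha (Finset.mem_powerset.1 hC h))
    rw [Finset.sum_congr rfl hcard, Finset.sum_add_distrib, Finset.sum_const,
      Finset.card_powerset, ih, Finset.card_insert_of_notMem ha, smul_eq_mul, mul_one]
    cases hk : s.card with
    | zero => rfl
    | succ k =>
      rw [Nat.succ_sub_one, Nat.add_sub_cancel, pow_succ]
      ring

def gset (A : Finset (Fin (m+4))) : Finset (Fin (m+4)) :=
  insert 1 (insert (lastv m) A)

def P2 : Finset (Finset (Fin (m+4))) := ((middle m).erase 1).powerset

lemma mem_P2 {A : Finset (Fin (m+4))} (hA : A ∈ P2 m) :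
    (1:Fin (m+4)) ∉ A ∧ lastv m ∉ A ∧ (0:Fin (m+4)) ∉ A := by
  rw [P2, Finset.mem_powerset] at hA
  refine ⟨fun h => ?_, fun h => ?_, fun h => ?_⟩
  · exact (Finset.mem_erase.1 (hA h)).1 rfl
  · exact ((mem_middle m).1 (Finset.mem_erase.1 (hA h)).2).2 rfl
  · exact ((mem_middle m).1 (Finset.mem_erase.1 (hA h)).2).1 rfl

lemma gset_mem_T2 (A : Finset (Fin (m+4))) (hA : A ∈ P2 m) : gset m A ∈ T2 m := by
  obtain ⟨h1, hl, h0⟩ := mem_P2 m hA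
  rw [mem_T2, gset]
  refine ⟨?_, Finset.mem_insert_self _ _, Finset.mem_insert_of_mem (Finset.mem_insert_self _ _)⟩
  intro h
  rcases Finset.mem_insert.1 h with h | h
  · exact zero_ne_one m h
  · rcases Finset.mem_insert.1 h with h | h
    · exact zero_ne_lastv m h
    · exact h0 h

lemma gset_inj (A : Finset (Fin (m+4))) (hA : A ∈ P2 m) (B : Finset (Fin (m+4)))
    (hB : B ∈ P2 m) (h : gset m A = gset m B) : A = B := by
  obtain ⟨hA1, hAl, -⟩ := mem_P2 m hA
  obtain ⟨hB1, hBl, -⟩ := mem_P2 m hB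
  ext v
  constructor
  · intro hv
    have : v ∈ gset m B := h ▸ (Finset.mem_insert_of_mem (Finset.mem_insert_of_mem hv))
    rcases Finset.mem_insert.1 this with rfl | this
    · exact absurd hv hA1
    · rcases Finset.mem_insert.1 this with rfl | this
      · exact absurd hv hAl
      · exact this
  · intro hv
    have : v ∈ gset m A := by
      rw [h]; exact Finset.mem_insert_of_mem (Finset.mem_insert_of_mem hv)
    rcases Finset.mem_insert.1 this with rfl | this
    · exact absurd hv hB1
    · rcases Finset.mem_insert.1 this with rfl | this
      · exact absurd hv hBl
      · exact this

lemma gset_surj (S : Finset (Fin (m+4))) (hS : S ∈ T2 m) :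
    ∃ A, ∃ _ : A ∈ P2 m, gset m A = S := by
  rw [mem_T2] at hS
  obtain ⟨h0, h1, hl⟩ := hS
  refine ⟨(S.erase 1).erase (lastv m), ?_, ?_⟩
  · rw [P2, Finset.mem_powerset]
    intro v hv
    obtain ⟨hvl, hv'⟩ := Finset.mem_erase.1 hv
    obtain ⟨hv1, hvS⟩ := Finset.mem_erase.1 hv'
    refine Finset.mem_erase.2 ⟨hv1, (mem_middle m).2 ⟨?_, ?_⟩⟩
    · intro h; exact h0 (by rwa [show v = 0 from Fin.ext h] at hvS)
    · intro h; exact hvl (Fin.ext (by rw [h]; rfl))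
  · ext v
    rw [gset]
    constructor
    · intro hv
      rcases Finset.mem_insert.1 hv with rfl | hv
      · exact h1
      · rcases Finset.mem_insert.1 hv with rfl | hv
        · exact hl
        · exact Finset.mem_of_mem_erase (Finset.mem_of_mem_erase hv)
    · intro hv
      by_cases hv1 : v = 1
      · exact hv1 ▸ Finset.mem_insert_self _ _
      · by_cases hvl : v = lastv m
        · exact Finset.mem_insert_of_mem (hvl ▸ Finset.mem_insert_self _ _)
        · exact Finset.mem_insert_of_mem (Finset.mem_insert_of_mem
            (Finset.mem_erase.2 ⟨hvl, Finset.mem_erase.2 ⟨hv1, hv⟩⟩))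

lemma gset_card (A : Finset (Fin (m+4))) (hA : A ∈ P2 m) : (gset m A).card = A.card + 2 := by
  obtain ⟨h1, hl, -⟩ := mem_P2 m hA
  rw [gset, Finset.card_insert_of_notMem, Finset.card_insert_of_notMem hl]
  intro h
  rcases Finset.mem_insert.1 h with h | h
  · exact one_ne_lastv m h
  · exact h1 h

lemma card_P2 : (P2 m).card = 2 ^ (m + 1) := by
  rw [P2, Finset.card_powerset, Finset.card_erase_of_mem (one_mem_middle m), card_middle]
  norm_num

lemma card_T2 : (T2 m).card = 2 ^ (m + 1) := by
  have h := Finset.card_bij (fun A (_ : A ∈ P2 m) => gset m A) (gset_mem_T2 m)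
    (gset_inj m) (gset_surj m)
  rw [← h, card_P2]

lemma sum_T2 : ∑ S ∈ T2 m, S.card = (m + 1) * 2 ^ m + 2 ^ (m + 2) := by
  have h : ∑ A ∈ P2 m, (gset m A).card = ∑ S ∈ T2 m, S.card :=
    Finset.sum_bij (fun A (_ : A ∈ P2 m) => gset m A) (gset_mem_T2 m)
      (gset_inj m) (gset_surj m) (fun A _ => rfl)
  rw [← h, Finset.sum_congr rfl (gset_card m), Finset.sum_add_distrib, Finset.sum_const,
    P2, sum_powerset_card, Finset.card_powerset,
    Finset.card_erase_of_mem (one_mem_middle m), card_middle, smul_eq_mul,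
    show m + 2 - 1 = m + 1 from rfl, show m + 1 - 1 = m from rfl, pow_succ, pow_succ]
  ring

lemma nearlyIndep_eq : nearlyIndep (Rgraph (m+4)) 1 = T1 m ∪ T2 m := by
  ext S
  rw [Finset.mem_union, mem_T1, mem_T2, mem_nearlyIndep]

lemma T1_disj_T2 : Disjoint (T1 m) (T2 m) := by
  rw [Finset.disjoint_left]
  intro S h1 h2
  exact ((mem_T2 m S).1 h2).1 ((mem_T1 m S).1 h1).1

lemma sigma_eq : sigmaNI (Rgraph (m+4)) 1 = 2 * m + 3 + 2 ^ (m + 1) := by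
  rw [sigmaNI, nearlyIndep_eq, Finset.card_union_of_disjoint (T1_disj_T2 m), card_T1, card_T2]

lemma sum_eq : sumNI (Rgraph (m+4)) 1 = 5 * m + 7 + ((m + 1) * 2 ^ m + 2 ^ (m + 2)) := by
  rw [sumNI, nearlyIndep_eq, Finset.sum_union (T1_disj_T2 m), sum_T1, sum_T2]

lemma key_ineq (hm : m = 0 ∨ m = 1 ∨ 5 ≤ m) : 2 * m ^ 2 + m < 2 ^ (m + 1) + 2 := by
  rcases hm with rfl | rfl | hm
  · norm_num
  · norm_num
  · induction m, hm using Nat.le_induction with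
    | base => norm_num
    | succ k hk ih =>
      have h2 : 2 ^ (k + 1 + 1) = 2 * 2 ^ (k + 1) := by ring
      nlinarith [ih]

lemma avNI_eq : avNI (Rgraph (m+4)) 1 =
    (5 * (m:ℚ) + 7 + ((m:ℚ) + 1) * 2 ^ m + 2 ^ (m + 2)) / (2 * (m:ℚ) + 3 + 2 ^ (m + 1)) := by
  have hσ : sigmaNI (Rgraph (m+4)) 1 ≠ 0 := by
    rw [sigma_eq]; omega
  rw [avNI, if_neg hσ, sum_eq, sigma_eq]
  push_cast
  ring_nf

end Aux

theorem stmt15 (n : ℕ) (hn : 4 ≤ n) :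
    avNI (Rgraph n) 1 =
      (5 * (n : ℚ) - 13 + ((n : ℚ) + 1) * 2 ^ (n - 4)) / (2 * (n : ℚ) - 5 + 2 ^ (n - 3)) ∧
    avNI (Rgraph n) 1 < ((n : ℚ) + 1) / 2 ∧
    (n ∉ ({6, 7, 8} : Set ℕ) → (n : ℚ) / 2 < avNI (Rgraph n) 1) := by
  obtain ⟨m, rfl⟩ : ∃ m, n = m + 4 := ⟨n - 4, by omega⟩
  have h4 : m + 4 - 4 = m := by omega
  have h3 : m + 4 - 3 = m + 1 := by omega
  rw [h4, h3, Aux.avNI_eq]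
  have hx0 : (0:ℚ) < 2 ^ m := by positivity
  have hσ : (0:ℚ) < 2 * (m:ℚ) + 3 + 2 ^ (m + 1) := by positivity
  have hm0 : (0:ℚ) ≤ (m:ℚ) := Nat.cast_nonneg m
  have hpow1 : (2:ℚ) ^ (m + 1) = 2 * 2 ^ m := by ring
  have hpow2 : (2:ℚ) ^ (m + 2) = 4 * 2 ^ m := by ring
  refine ⟨?_, ?_, ?_⟩
  · congr 1 <;> push_cast <;> ring
  · rw [div_lt_div_iff₀ hσ two_pos]
    push_cast
    nlinarith
  · intro hne
    have hm : m = 0 ∨ m = 1 ∨ 5 ≤ m := by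
      simp only [Set.mem_insert_iff, Set.mem_singleton_iff] at hne
      omega
    have hkey := Aux.key_ineq m hm
    have hkeyq : 2 * (m:ℚ) ^ 2 + (m:ℚ) < 2 ^ (m + 1) + 2 := by
      exact_mod_cast hkey
    rw [div_lt_div_iff₀ two_pos hσ]
    push_cast
    nlinarith
end
end

section
/- Let n > 8. Then the maximum value M of av_1 over all trees on n vertices satisfies n/2 < M < (n+1)/2; that is, there exists an n-vertex tree T with av_1(T) > n/2, and every n-vertex tree T satisfies av_1(T) < (n+1)/2. -/
open scoped Classical
open Finset

noncomputable section

namespace NI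

variable {V : Type*} [Fintype V]

def inEdges (G : SimpleGraph V) (S : Finset V) : Finset (Sym2 V) :=
  G.edgeFinset.filter fun e => ∀ v ∈ e, v ∈ S

lemma edgesIn_eq (G : SimpleGraph V) (S : Finset V) : edgesIn G S = (inEdges G S).card := rfl

lemma mem_inEdges {G : SimpleGraph V} {S : Finset V} {e : Sym2 V} :
    e ∈ inEdges G S ↔ e ∈ G.edgeFinset ∧ ∀ v ∈ e, v ∈ S := Finset.mem_filter

lemma mk_mem_inEdges {G : SimpleGraph V} {S : Finset V} {a b : V} :
    s(a,b) ∈ inEdges G S ↔ G.Adj a b ∧ a ∈ S ∧ b ∈ S := by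
  simp [mem_inEdges, SimpleGraph.mem_edgeFinset, Sym2.mem_iff]

lemma inEdges_mono {G : SimpleGraph V} {A B : Finset V} (h : A ⊆ B) :
    inEdges G A ⊆ inEdges G B := by
  intro e he
  rw [mem_inEdges] at he ⊢
  exact ⟨he.1, fun v hv => h (he.2 v hv)⟩

lemma edgesIn_zero_mono {G : SimpleGraph V} {A B : Finset V} (h : A ⊆ B)
    (hB : edgesIn G B = 0) : edgesIn G A = 0 := by
  rw [edgesIn_eq, Finset.card_eq_zero] at hB ⊢
  exact Finset.subset_empty.1 (hB ▸ inEdges_mono h)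

lemma not_adj_of_edgesIn_zero {G : SimpleGraph V} {S : Finset V} (h0 : edgesIn G S = 0)
    {a b : V} (ha : a ∈ S) (hb : b ∈ S) : ¬ G.Adj a b := by
  intro hab
  have : s(a,b) ∈ inEdges G S := mk_mem_inEdges.2 ⟨hab, ha, hb⟩
  rw [edgesIn_eq, Finset.card_eq_zero] at h0
  simp [h0] at this

lemma edgesIn_empty (G : SimpleGraph V) : edgesIn G (∅ : Finset V) = 0 := by
  rw [edgesIn_eq, Finset.card_eq_zero]
  ext e
  induction e using Sym2.ind with
  | _ a b => simp [mk_mem_inEdges]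

lemma edgesIn_singleton (G : SimpleGraph V) (a : V) : edgesIn G ({a} : Finset V) = 0 := by
  rw [edgesIn_eq, Finset.card_eq_zero]
  ext e
  induction e using Sym2.ind with
  | _ x y =>
    simp only [mk_mem_inEdges, Finset.mem_singleton, Finset.notMem_empty, iff_false]
    rintro ⟨hadj, rfl, rfl⟩
    exact G.loopless.irrefl _ hadj

def indepIn (G : SimpleGraph V) (R : Finset V) : Finset (Finset V) :=
  R.powerset.filter fun S => edgesIn G S = 0

lemma mem_indepIn {G : SimpleGraph V} {R S : Finset V} :
    S ∈ indepIn G R ↔ S ⊆ R ∧ edgesIn G S = 0 := by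
  simp [indepIn]

lemma empty_mem_indepIn (G : SimpleGraph V) (R : Finset V) : ∅ ∈ indepIn G R :=
  mem_indepIn.2 ⟨Finset.empty_subset _, edgesIn_empty G⟩

def Rset (G : SimpleGraph V) (u v : V) : Finset V :=
  univ.filter fun x => x ≠ u ∧ x ≠ v ∧ ¬ G.Adj u x ∧ ¬ G.Adj v x

lemma mem_Rset {G : SimpleGraph V} {u v x : V} :
    x ∈ Rset G u v ↔ x ≠ u ∧ x ≠ v ∧ ¬ G.Adj u x ∧ ¬ G.Adj v x := by
  simp [Rset]

lemma Rset_comm (G : SimpleGraph V) (u v : V) : Rset G u v = Rset G v u := by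
  ext x; simp only [mem_Rset]; tauto

def RsetE (G : SimpleGraph V) : Sym2 V → Finset V :=
  Sym2.lift ⟨fun u v => Rset G u v, fun u v => Rset_comm G u v⟩

lemma RsetE_mk (G : SimpleGraph V) (u v : V) : RsetE G s(u,v) = Rset G u v := rfl

def classE (G : SimpleGraph V) (e : Sym2 V) : Finset (Finset V) :=
  univ.filter fun S => inEdges G S = {e}

lemma NI1_eq (G : SimpleGraph V) :
    nearlyIndep G 1 = G.edgeFinset.biUnion (classE G) := by
  ext S
  simp only [nearlyIndep, classE, Finset.mem_filter, Finset.mem_univ, true_and,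
    Finset.mem_biUnion]
  rw [edgesIn_eq, Finset.card_eq_one]
  constructor
  · rintro ⟨e, he⟩
    have : e ∈ inEdges G S := he ▸ Finset.mem_singleton_self e
    exact ⟨e, (mem_inEdges.1 this).1, he⟩
  · rintro ⟨e, _, he⟩; exact ⟨e, he⟩

lemma classE_disj (G : SimpleGraph V) :
    (G.edgeFinset : Set (Sym2 V)).PairwiseDisjoint (classE G) := by
  intro e _ f _ hef
  simp only [Function.onFun, Finset.disjoint_left]
  intro S hS hS'
  simp only [classE, Finset.mem_filter] at hS hS'
  exact hef (Finset.singleton_injective (hS.2 ▸ hS'.2 : ({e} : Finset (Sym2 V)) = {f}))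
  

lemma u_notmem_Rset {G : SimpleGraph V} {u v : V} : u ∉ Rset G u v := by
  simp [mem_Rset]

lemma v_notmem_Rset {G : SimpleGraph V} {u v : V} : v ∉ Rset G u v := by
  simp [mem_Rset]

lemma classE_eq {G : SimpleGraph V} {u v : V} (h : G.Adj u v) :
    classE G s(u,v) = (indepIn G (Rset G u v)).image fun S' => insert u (insert v S') := by
  have huv : u ≠ v := h.ne
  ext S
  simp only [classE, Finset.mem_filter, Finset.mem_univ, true_and, Finset.mem_image]
  constructor
  · intro hS
    have huS : u ∈ S ∧ v ∈ S := by
      have : s(u,v) ∈ inEdges G S := hS ▸ Finset.mem_singleton_self _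
      exact (mk_mem_inEdges.1 this).2
    refine ⟨(S.erase u).erase v, ?_, ?_⟩
    · rw [mem_indepIn]
      constructor
      · intro x hx
        have hxv : x ≠ v := Finset.ne_of_mem_erase hx
        have hxu : x ≠ u := Finset.ne_of_mem_erase (Finset.mem_of_mem_erase hx)
        have hxS : x ∈ S := Finset.mem_of_mem_erase (Finset.mem_of_mem_erase hx)
        rw [mem_Rset]
        refine ⟨hxu, hxv, fun hadj => ?_, fun hadj => ?_⟩
        · have : s(u,x) ∈ inEdges G S := mk_mem_inEdges.2 ⟨hadj, huS.1, hxS⟩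
          rw [hS, Finset.mem_singleton, Sym2.eq_iff] at this
          rcases this with ⟨-, rfl⟩ | ⟨h1, -⟩
          · exact hxv rfl
          · exact huv h1
        · have : s(v,x) ∈ inEdges G S := mk_mem_inEdges.2 ⟨hadj, huS.2, hxS⟩
          rw [hS, Finset.mem_singleton, Sym2.eq_iff] at this
          rcases this with ⟨h1, -⟩ | ⟨-, h2⟩
          · exact huv h1.symm
          · exact hxu h2
      · rw [edgesIn_eq, Finset.card_eq_zero]
        ext e
        simp only [Finset.notMem_empty, iff_false]
        intro he
        have heS : e ∈ inEdges G S :=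
          inEdges_mono (fun x hx => Finset.mem_of_mem_erase (Finset.mem_of_mem_erase hx)) he
        rw [hS, Finset.mem_singleton] at heS
        subst heS
        have hu : u ∈ (S.erase u).erase v := (mem_inEdges.1 he).2 u (by simp)
        exact Finset.ne_of_mem_erase (Finset.mem_of_mem_erase hu) rfl
    · ext x
      simp only [Finset.mem_insert, Finset.mem_erase]
      constructor
      · rintro (rfl | rfl | ⟨-, -, hx⟩)
        exacts [huS.1, huS.2, hx]
      · intro hx
        by_cases h1 : x = u
        · left; exact h1
        by_cases h2 : x = v
        · right; left; exact h2
        · right; right; exact ⟨h2, h1, hx⟩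
  · rintro ⟨S', hS', rfl⟩
    rw [mem_indepIn] at hS'
    obtain ⟨hsub, hzero⟩ := hS'
    ext e
    induction e using Sym2.ind with
    | _ a b =>
      rw [mk_mem_inEdges, Finset.mem_singleton]
      constructor
      · rintro ⟨hab, ha, hb⟩
        simp only [Finset.mem_insert] at ha hb
        rcases ha with rfl | rfl | ha
        · rcases hb with rfl | rfl | hb
          · exact absurd hab (G.loopless.irrefl _)
          · rfl
          · exact absurd hab (mem_Rset.1 (hsub hb)).2.2.1
        · rcases hb with rfl | rfl | hb
          · exact Sym2.eq_swap
          · exact absurd hab (G.loopless.irrefl _)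
          · exact absurd hab (mem_Rset.1 (hsub hb)).2.2.2
        · rcases hb with rfl | rfl | hb
          · exact absurd hab.symm (mem_Rset.1 (hsub ha)).2.2.1
          · exact absurd hab.symm (mem_Rset.1 (hsub ha)).2.2.2
          · exact absurd hab (not_adj_of_edgesIn_zero hzero ha hb)
      · intro he
        rw [Sym2.eq_iff] at he
        rcases he with ⟨rfl, rfl⟩ | ⟨rfl, rfl⟩
        · exact ⟨h, by simp, by simp⟩
        · exact ⟨h.symm, by simp, by simp⟩

lemma card_insert2 {G : SimpleGraph V} {u v : V} (h : G.Adj u v) {S' : Finset V}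
    (hS' : S' ∈ indepIn G (Rset G u v)) :
    (insert u (insert v S')).card = S'.card + 2 := by
  have hsub := (mem_indepIn.1 hS').1
  have hv : v ∉ S' := fun hv => v_notmem_Rset (hsub hv)
  have hu : u ∉ insert v S' := by
    simp only [Finset.mem_insert]
    rintro (rfl | hu)
    · exact G.loopless.irrefl _ h
    · exact u_notmem_Rset (hsub hu)
  rw [Finset.card_insert_of_notMem hu, Finset.card_insert_of_notMem hv]

lemma insert2_injOn {G : SimpleGraph V} {u v : V} :
    Set.InjOn (fun S' => insert u (insert v S')) ((indepIn G (Rset G u v) : Finset (Finset V)) : Set (Finset V)) := by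
  intro S1 h1 S2 h2 he
  simp only [Finset.mem_coe] at h1 h2
  have hs1 := (mem_indepIn.1 h1).1
  have hs2 := (mem_indepIn.1 h2).1
  simp only at he
  have key : ∀ (A B : Finset V), A ⊆ Rset G u v →
      insert u (insert v A) = insert u (insert v B) → ∀ x ∈ A, x ∈ B := by
    intro A B hA hAB x hx
    have hxu : x ≠ u := fun hh => u_notmem_Rset (hh ▸ hA hx)
    have hxv : x ≠ v := fun hh => v_notmem_Rset (hh ▸ hA hx)
    have hmem : x ∈ insert u (insert v B) := hAB ▸ (by simp [hx] : x ∈ insert u (insert v A))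
    simp only [Finset.mem_insert] at hmem
    tauto
  exact Finset.Subset.antisymm (fun x hx => key S1 S2 hs1 he x hx)
    (fun x hx => key S2 S1 hs2 he.symm x hx)

lemma master (G : SimpleGraph V) (F : ℕ → ℤ) :
    ∑ S ∈ nearlyIndep G 1, F S.card
      = ∑ e ∈ G.edgeFinset, ∑ S' ∈ indepIn G (RsetE G e), F (S'.card + 2) := by
  rw [NI1_eq, Finset.sum_biUnion (classE_disj G)]
  refine Finset.sum_congr rfl ?_
  intro e he
  induction e using Sym2.ind with
  | _ u v =>
    have hadj : G.Adj u v := by rwa [SimpleGraph.mem_edgeFinset, SimpleGraph.mem_edgeSet] at he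
    rw [RsetE_mk, classE_eq hadj, Finset.sum_image insert2_injOn]
    exact Finset.sum_congr rfl fun S' hS' => by rw [card_insert2 hadj hS']

lemma card_term_eq {R S : Finset V} (hS : S ⊆ R) :
    ((R.card : ℤ) - 2 * S.card) = ∑ w ∈ R, (if w ∈ S then (-1 : ℤ) else 1) := by
  rw [Finset.sum_ite, Finset.sum_const, Finset.sum_const]
  have h1 : R.filter (fun w => w ∈ S) = S := by
    rw [Finset.filter_mem_eq_inter]
    exact Finset.inter_eq_right.2 hS
  have h2 := Finset.card_filter_add_card_filter_not (s := R) (p := fun w => w ∈ S)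
  rw [h1] at h2 ⊢
  simp only [nsmul_eq_mul, mul_one, mul_neg_one]
  have : (R.filter fun w => ¬ w ∈ S).card = R.card - S.card := by omega
  rw [this]
  have hc : S.card ≤ R.card := Finset.card_le_card hS
  push_cast [hc]
  ring

lemma sumA_eq (G : SimpleGraph V) (R : Finset V) :
    ∑ S ∈ indepIn G R, ((R.card : ℤ) - 2 * S.card)
      = ∑ w ∈ R, ((((indepIn G R).filter fun S => w ∉ S).card : ℤ)
          - (((indepIn G R).filter fun S => w ∈ S).card : ℤ)) := by
  calc ∑ S ∈ indepIn G R, ((R.card : ℤ) - 2 * S.card)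
      = ∑ S ∈ indepIn G R, ∑ w ∈ R, (if w ∈ S then (-1:ℤ) else 1) :=
        Finset.sum_congr rfl fun S hS => card_term_eq (mem_indepIn.1 hS).1
    _ = ∑ w ∈ R, ∑ S ∈ indepIn G R, (if w ∈ S then (-1:ℤ) else 1) := Finset.sum_comm
    _ = _ := Finset.sum_congr rfl fun w _ => by
        rw [Finset.sum_ite, Finset.sum_const, Finset.sum_const]
        simp only [nsmul_eq_mul, mul_one, mul_neg_one]
        ring

lemma erase_injOn' (w : V) (A : Finset (Finset V)) (hA : ∀ S ∈ A, w ∈ S) :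
    Set.InjOn (fun S => Finset.erase S w) ((A : Finset (Finset V)) : Set (Finset V)) := by
  intro S1 h1 S2 h2 he
  simp only [Finset.mem_coe] at h1 h2
  simp only at he
  rw [← Finset.insert_erase (hA S1 h1), he, Finset.insert_erase (hA S2 h2)]

lemma erase_mem_indepIn {G : SimpleGraph V} {R S : Finset V} (hS : S ∈ indepIn G R) (w : V) :
    S.erase w ∈ indepIn G R := by
  rw [mem_indepIn] at hS ⊢
  exact ⟨(Finset.erase_subset _ _).trans hS.1, edgesIn_zero_mono (Finset.erase_subset _ _) hS.2⟩

lemma card_in_le_out (G : SimpleGraph V) (R : Finset V) (w : V) :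
    ((indepIn G R).filter fun S => w ∈ S).card ≤ ((indepIn G R).filter fun S => w ∉ S).card := by
  apply Finset.card_le_card_of_injOn (fun S => S.erase w)
  · intro S hS
    simp only [Finset.mem_coe, Finset.mem_filter] at hS ⊢
    exact ⟨erase_mem_indepIn hS.1 w, Finset.notMem_erase _ _⟩
  · exact erase_injOn' w _ (fun S hS => (Finset.mem_filter.1 hS).2)

lemma card_in_lt_out (G : SimpleGraph V) {R : Finset V} {x y : V} (hx : x ∈ R) (hy : y ∈ R)
    (hxy : G.Adj x y) :
    ((indepIn G R).filter fun S => x ∈ S).card < ((indepIn G R).filter fun S => x ∉ S).card := by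
  have hxyne : x ≠ y := hxy.ne
  have hyI : ({y} : Finset V) ∈ (indepIn G R).filter (fun S => x ∉ S) := by
    simp only [Finset.mem_filter, mem_indepIn, Finset.singleton_subset_iff,
      Finset.mem_singleton]
    exact ⟨⟨hy, edgesIn_singleton G y⟩, hxyne⟩
  have h1 : ((indepIn G R).filter fun S => x ∈ S).card
      ≤ (((indepIn G R).filter fun S => x ∉ S).erase {y}).card := by
    apply Finset.card_le_card_of_injOn (fun S => S.erase x)
    · intro S hS
      simp only [Finset.mem_coe, Finset.mem_filter] at hS
      rw [Finset.mem_coe, Finset.mem_erase]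
      refine ⟨?_, Finset.mem_filter.2 ⟨erase_mem_indepIn hS.1 x, Finset.notMem_erase _ _⟩⟩
      intro (heq : S.erase x = {y})
      have hSxy : S = insert x ({y} : Finset V) := by
        rw [← Finset.insert_erase hS.2, heq]
      have hyS : y ∈ S := by rw [hSxy]; simp
      have hxS : x ∈ S := hS.2
      exact not_adj_of_edgesIn_zero (mem_indepIn.1 hS.1).2 hxS hyS hxy
    · exact erase_injOn' x _ (fun S hS => (Finset.mem_filter.1 hS).2)
  exact lt_of_le_of_lt h1 (Finset.card_erase_lt_of_mem hyI)

lemma sumA_nonneg (G : SimpleGraph V) (R : Finset V) :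
    0 ≤ ∑ S ∈ indepIn G R, ((R.card : ℤ) - 2 * S.card) := by
  rw [sumA_eq]
  apply Finset.sum_nonneg
  intro w _
  have := card_in_le_out G R w
  omega

lemma sumA_pos (G : SimpleGraph V) {R : Finset V} {x y : V} (hx : x ∈ R) (hy : y ∈ R)
    (hxy : G.Adj x y) :
    0 < ∑ S ∈ indepIn G R, ((R.card : ℤ) - 2 * S.card) := by
  rw [sumA_eq]
  apply Finset.sum_pos'
  · intro w _
    have := card_in_le_out G R w
    omega
  · refine ⟨x, hx, ?_⟩
    have := card_in_lt_out G hx hy hxy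
    omega

lemma walk_exit {G : SimpleGraph V} {P : V → Prop} :
    ∀ {a b : V}, G.Walk a b → P a → ¬ P b → ∃ x y, P x ∧ ¬ P y ∧ G.Adj x y := by
  intro a b p
  induction p with
  | nil => intro h h'; exact absurd h h'
  | @cons m c d h q ih =>
    intro ha hb
    by_cases hc : P c
    · exact ih hc hb
    · exact ⟨m, c, ha, hc, h⟩

lemma exists_adj_of_connected {G : SimpleGraph V} (hc : G.Connected)
    (h2 : 2 ≤ Fintype.card V) : ∃ u v : V, G.Adj u v := by
  obtain ⟨u, v, huv⟩ := Fintype.exists_pair_of_one_lt_card (α := V) (by omega)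
  obtain ⟨p⟩ := hc.preconnected u v
  obtain ⟨x, y, hx, hy, hadj⟩ := walk_exit (P := fun t => t = u) p rfl huv.symm
  exact ⟨x, y, hadj⟩

lemma exists_third {G : SimpleGraph V} (hc : G.Connected) {u v : V} (h : G.Adj u v)
    (h3 : 3 ≤ Fintype.card V) :
    ∃ w, w ≠ u ∧ w ≠ v ∧ (G.Adj u w ∨ G.Adj v w) := by
  have : ∃ z : V, z ≠ u ∧ z ≠ v := by
    by_contra hcon
    push_neg at hcon
    have : (univ : Finset V) ⊆ {u, v} := by
      intro z _
      simp only [Finset.mem_insert, Finset.mem_singleton]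
      by_cases hz : z = u
      · exact Or.inl hz
      · exact Or.inr (hcon z hz)
    have := Finset.card_le_card this
    have h2 : ({u, v} : Finset V).card ≤ 2 := Finset.card_insert_le _ _ |>.trans (by simp)
    rw [Finset.card_univ] at this
    omega
  obtain ⟨z, hzu, hzv⟩ := this
  obtain ⟨p⟩ := hc.preconnected u z
  obtain ⟨x, y, hx, hy, hadj⟩ :=
    walk_exit (P := fun t => t = u ∨ t = v) p (Or.inl rfl) (by simp [hzu, hzv])
  push_neg at hy
  rcases hx with rfl | rfl
  · exact ⟨y, hy.1, hy.2, Or.inl hadj⟩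
  · exact ⟨y, hy.1, hy.2, Or.inr hadj⟩

def Cset (G : SimpleGraph V) (u v : V) : Finset V :=
  univ.filter fun x => ¬(x ≠ u ∧ x ≠ v ∧ ¬ G.Adj u x ∧ ¬ G.Adj v x)

lemma Rset_card_add_Cset_card (G : SimpleGraph V) (u v : V) :
    (Rset G u v).card + (Cset G u v).card = Fintype.card V := by
  rw [← Finset.card_univ]
  exact Finset.card_filter_add_card_filter_not _

lemma mem_Cset {G : SimpleGraph V} {u v x : V} :
    x ∈ Cset G u v ↔ x = u ∨ x = v ∨ G.Adj u x ∨ G.Adj v x := by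
  simp only [Cset, Finset.mem_filter, Finset.mem_univ, true_and]
  tauto

lemma Rset_card_le (G : SimpleGraph V) (hc : G.Connected) {u v : V} (h : G.Adj u v)
    (h3 : 3 ≤ Fintype.card V) :
    (Rset G u v).card + 3 ≤ Fintype.card V := by
  obtain ⟨w, hwu, hwv, hadj⟩ := exists_third hc h h3
  have hsub : ({u, v, w} : Finset V) ⊆ Cset G u v := by
    intro x hx
    simp only [Finset.mem_insert, Finset.mem_singleton] at hx
    rcases hx with rfl | rfl | rfl
    · exact mem_Cset.2 (Or.inl rfl)
    · exact mem_Cset.2 (Or.inr (Or.inl rfl))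
    · exact mem_Cset.2 (Or.inr (Or.inr hadj))
  have hcard : ({u, v, w} : Finset V).card = 3 := by
    rw [Finset.card_insert_of_notMem (by simp [h.ne, hwu.symm]),
      Finset.card_insert_of_notMem (by simp [hwv.symm]), Finset.card_singleton]
  have := Finset.card_le_card hsub
  have := Rset_card_add_Cset_card G u v
  omega

lemma exists_strict_edge {G : SimpleGraph V} (hc : G.Connected) (h5 : 5 ≤ Fintype.card V) :
    ∃ u v : V, G.Adj u v ∧
      ((Rset G u v).card + 4 ≤ Fintype.card V ∨
        ∃ x ∈ Rset G u v, ∃ y ∈ Rset G u v, G.Adj x y) := by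
  obtain ⟨u, v, huv⟩ := exists_adj_of_connected hc (by omega)
  by_cases hcard : (Rset G u v).card + 4 ≤ Fintype.card V
  · exact ⟨u, v, huv, Or.inl hcard⟩
  by_cases hedge : ∃ x ∈ Rset G u v, ∃ y ∈ Rset G u v, G.Adj x y
  · exact ⟨u, v, huv, Or.inr hedge⟩
  push_neg at hedge
  -- now: Rset has cardinality exactly n - 3, Cset = {u, v, w}
  obtain ⟨w, hwu, hwv, hwadj⟩ := exists_third hc huv (by omega)
  have hle := Rset_card_le G hc huv (by omega)
  have hRC := Rset_card_add_Cset_card G u v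
  have hCcard : (Cset G u v).card = 3 := by omega
  have hsub : ({u, v, w} : Finset V) ⊆ Cset G u v := by
    intro x hx
    simp only [Finset.mem_insert, Finset.mem_singleton] at hx
    rcases hx with rfl | rfl | rfl
    · exact mem_Cset.2 (Or.inl rfl)
    · exact mem_Cset.2 (Or.inr (Or.inl rfl))
    · exact mem_Cset.2 (Or.inr (Or.inr hwadj))
  have huvwcard : ({u, v, w} : Finset V).card = 3 := by
    rw [Finset.card_insert_of_notMem (by simp [huv.ne, hwu.symm]),
      Finset.card_insert_of_notMem (by simp [hwv.symm]), Finset.card_singleton]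
  have hCeq : Cset G u v = {u, v, w} :=
    (Finset.eq_of_subset_of_card_le hsub (by omega)).symm
  -- every vertex of Rset is adjacent to w
  have hadjw : ∀ x ∈ Rset G u v, G.Adj x w := by
    intro x hxR
    have hxu : x ≠ u := (mem_Rset.1 hxR).1
    obtain ⟨p⟩ := hc.preconnected x u
    obtain ⟨x', y, hx', hy, hadj⟩ := walk_exit (P := fun t => t = x) p rfl (fun hh => hxu hh.symm)
    rw [hx'] at hadj
    have hyR : y ∉ Rset G u v := fun hyR => hedge x hxR y hyR hadj
    have hyC : y ∈ Cset G u v := by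
      rw [mem_Cset]
      have h' := hyR
      rw [mem_Rset] at h'
      push_neg at h'
      by_cases h1 : y = u
      · exact Or.inl h1
      by_cases h2 : y = v
      · exact Or.inr (Or.inl h2)
      by_cases h3 : G.Adj u y
      · exact Or.inr (Or.inr (Or.inl h3))
      · exact Or.inr (Or.inr (Or.inr (h' h1 h2 h3)))
    rw [hCeq] at hyC
    simp only [Finset.mem_insert, Finset.mem_singleton] at hyC
    rcases hyC with rfl | rfl | rfl
    · exact absurd hadj.symm (mem_Rset.1 hxR).2.2.1
    · exact absurd hadj.symm (mem_Rset.1 hxR).2.2.2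
    · exact hadj
  have hRpos : 0 < (Rset G u v).card := by omega
  obtain ⟨x0, hx0⟩ := Finset.card_pos.1 hRpos
  have hwR : w ∉ Rset G u v := by
    rw [mem_Rset]
    rintro ⟨-, -, h1, h2⟩
    rcases hwadj with h | h
    · exact h1 h
    · exact h2 h
  refine ⟨w, x0, (hadjw x0 hx0).symm, Or.inl ?_⟩
  obtain ⟨t, htuv, htadj⟩ : ∃ t, (t = u ∨ t = v) ∧ G.Adj w t := by
    rcases hwadj with h | h
    · exact ⟨u, Or.inl rfl, h.symm⟩
    · exact ⟨v, Or.inr rfl, h.symm⟩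
  have htR : t ∉ Rset G u v := by
    rcases htuv with rfl | rfl
    · exact u_notmem_Rset
    · exact v_notmem_Rset
  set D : Finset V := insert t (insert w (insert x0 ((Rset G u v).erase x0))) with hD
  have hDsub : D ⊆ Cset G w x0 := by
    intro z hz
    simp only [hD, Finset.mem_insert] at hz
    rcases hz with rfl | rfl | rfl | hz
    · exact mem_Cset.2 (Or.inr (Or.inr (Or.inl htadj)))
    · exact mem_Cset.2 (Or.inl rfl)
    · exact mem_Cset.2 (Or.inr (Or.inl rfl))
    · exact mem_Cset.2 (Or.inr (Or.inr (Or.inl ((hadjw z (Finset.mem_of_mem_erase hz)).symm))))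
  have hwx0 : w ≠ x0 := fun hh => hwR (hh ▸ hx0)
  have hDcard : D.card = (Rset G u v).card + 2 := by
    rw [hD, Finset.card_insert_of_notMem, Finset.card_insert_of_notMem,
      Finset.card_insert_of_notMem (Finset.notMem_erase _ _),
      Finset.card_erase_of_mem hx0]
    · omega
    · simp only [Finset.mem_insert]
      rintro (rfl | hw)
      · exact hwx0 rfl
      · exact hwR (Finset.mem_of_mem_erase hw)
    · simp only [Finset.mem_insert]
      rintro (rfl | rfl | ht)
      · rcases htuv with rfl | rfl
        · exact hwu rfl
        · exact hwv rfl
      · exact htR hx0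
      · exact htR (Finset.mem_of_mem_erase ht)
  have := Finset.card_le_card hDsub
  have := Rset_card_add_Cset_card G w x0
  omega

lemma upper_main {G : SimpleGraph V} (hc : G.Connected) (h9 : 9 ≤ Fintype.card V) :
    0 < ∑ S ∈ nearlyIndep G 1, ((Fintype.card V : ℤ) + 1 - 2 * S.card) := by
  set n := Fintype.card V with hn
  rw [master G (fun c => (n : ℤ) + 1 - 2 * c)]
  have hT : ∀ e ∈ G.edgeFinset,
      0 ≤ ∑ S' ∈ indepIn G (RsetE G e), ((n:ℤ) + 1 - 2 * ((S'.card : ℤ) + 2)) := by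
    intro e he
    induction e using Sym2.ind with
    | _ u v =>
      have hadj : G.Adj u v := by rwa [SimpleGraph.mem_edgeFinset, SimpleGraph.mem_edgeSet] at he
      rw [RsetE_mk]
      have hr := Rset_card_le G hc hadj (by omega)
      calc (0:ℤ) ≤ ∑ S' ∈ indepIn G (Rset G u v), (((Rset G u v).card:ℤ) - 2 * S'.card) :=
            sumA_nonneg G _
        _ ≤ _ := Finset.sum_le_sum fun S' _ => by push_cast; omega
  obtain ⟨u, v, hadj, hcase⟩ := exists_strict_edge hc (by omega)
  have he : s(u,v) ∈ G.edgeFinset := SimpleGraph.mem_edgeFinset.2 hadj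
  have hstrict : 0 < ∑ S' ∈ indepIn G (RsetE G s(u,v)), ((n:ℤ) + 1 - 2 * ((S'.card : ℤ) + 2)) := by
    rw [RsetE_mk]
    rcases hcase with hcard | ⟨x, hx, y, hy, hxy⟩
    · have hpos : 0 < (indepIn G (Rset G u v)).card :=
        Finset.card_pos.2 ⟨∅, empty_mem_indepIn G _⟩
      have h2 := sumA_nonneg G (Rset G u v)
      have h1 : ∑ S' ∈ indepIn G (Rset G u v), ((1:ℤ) + (((Rset G u v).card:ℤ) - 2 * S'.card))
          ≤ ∑ S' ∈ indepIn G (Rset G u v), ((n:ℤ) + 1 - 2 * ((S'.card : ℤ) + 2)) :=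
        Finset.sum_le_sum fun S' _ => by push_cast; omega
      rw [Finset.sum_add_distrib, Finset.sum_const, nsmul_eq_mul, mul_one] at h1
      have hc0 : (0:ℤ) < ((indepIn G (Rset G u v)).card : ℤ) := by exact_mod_cast hpos
      linarith
    · have h0 := sumA_pos G hx hy hxy
      have hr := Rset_card_le G hc hadj (by omega)
      have h1 : ∑ S' ∈ indepIn G (Rset G u v), (((Rset G u v).card:ℤ) - 2 * S'.card)
          ≤ ∑ S' ∈ indepIn G (Rset G u v), ((n:ℤ) + 1 - 2 * ((S'.card : ℤ) + 2)) :=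
        Finset.sum_le_sum fun S' _ => by push_cast; omega
      linarith
  calc (0:ℤ) < _ := hstrict
    _ ≤ _ := Finset.single_le_sum hT he

lemma sum_linear (G : SimpleGraph V) (A B : ℤ) :
    ∑ S ∈ nearlyIndep G 1, (A - B * S.card)
      = A * (sigmaNI G 1 : ℤ) - B * (sumNI G 1 : ℤ) := by
  rw [Finset.sum_sub_distrib, Finset.sum_const, nsmul_eq_mul, ← Finset.mul_sum]
  have h1 : ∑ S ∈ nearlyIndep G 1, (S.card : ℤ) = (sumNI G 1 : ℤ) := by
    rw [sumNI]
    push_cast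
    rfl
  rw [h1, sigmaNI, mul_comm A]

lemma upper_av {G : SimpleGraph V} (hc : G.Connected) (h9 : 9 ≤ Fintype.card V) :
    avNI G 1 < ((Fintype.card V : ℚ) + 1) / 2 := by
  have hmain := upper_main hc h9
  set n := Fintype.card V with hn
  rw [avNI]
  by_cases h0 : sigmaNI G 1 = 0
  · rw [if_pos h0]
    positivity
  · rw [if_neg h0]
    have hkey : 2 * (sumNI G 1 : ℤ) < ((n:ℤ) + 1) * (sigmaNI G 1 : ℤ) := by
      have heq : ∑ S ∈ nearlyIndep G 1, ((n:ℤ) + 1 - 2 * S.card)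
          = ((n:ℤ) + 1) * (sigmaNI G 1 : ℤ) - 2 * (sumNI G 1 : ℤ) := sum_linear G _ _
      rw [heq] at hmain
      linarith
    have hσ : (0:ℚ) < (sigmaNI G 1 : ℚ) := by
      have : 0 < sigmaNI G 1 := Nat.pos_of_ne_zero h0
      exact_mod_cast this
    rw [div_lt_div_iff₀ hσ (by norm_num : (0:ℚ) < 2)]
    push_cast
    have : (2:ℚ) * (sumNI G 1 : ℚ) < ((n:ℚ) + 1) * (sigmaNI G 1 : ℚ) := by exact_mod_cast hkey
    linarith

lemma walk_stay {W : Type*} {G : SimpleGraph W} {P : W → Prop}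
    (hP : ∀ x y, P x → G.Adj x y → P y) : ∀ {a b : W}, G.Walk a b → P a → P b := by
  intro a b p
  induction p with
  | nil => exact id
  | cons h q ih => intro ha; exact ih (hP _ _ ha h)

section Broom

variable {n : ℕ}

def bw (hn : 9 ≤ n) : Fin n := ⟨0, by omega⟩
def bv (hn : 9 ≤ n) : Fin n := ⟨1, by omega⟩
def bu (hn : 9 ≤ n) : Fin n := ⟨2, by omega⟩

variable (hn : 9 ≤ n)

lemma bw_ne_bv : bw hn ≠ bv hn := by simp [bw, bv, Fin.ext_iff]
lemma bw_ne_bu : bw hn ≠ bu hn := by simp [bw, bu, Fin.ext_iff]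
lemma bv_ne_bu : bv hn ≠ bu hn := by simp [bv, bu, Fin.ext_iff]

def broom (hn : 9 ≤ n) : SimpleGraph (Fin n) where
  Adj a b := (a = bw hn ∧ b ≠ bw hn ∧ b ≠ bu hn) ∨ (b = bw hn ∧ a ≠ bw hn ∧ a ≠ bu hn)
    ∨ (a = bv hn ∧ b = bu hn) ∨ (a = bu hn ∧ b = bv hn)
  symm := ⟨by intro a b h; tauto⟩
  loopless := by
    constructor
    intro a h
    rcases h with ⟨rfl, h, -⟩ | ⟨rfl, h, -⟩ | ⟨h1, h2⟩ | ⟨h1, h2⟩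
    · exact h rfl
    · exact h rfl
    · exact bv_ne_bu hn (h1 ▸ h2)
    · exact bv_ne_bu hn (h2 ▸ h1)

lemma broom_adj {a b : Fin n} : (broom hn).Adj a b ↔
    (a = bw hn ∧ b ≠ bw hn ∧ b ≠ bu hn) ∨ (b = bw hn ∧ a ≠ bw hn ∧ a ≠ bu hn)
    ∨ (a = bv hn ∧ b = bu hn) ∨ (a = bu hn ∧ b = bv hn) := Iff.rfl

lemma broom_adj_bv {x : Fin n} : (broom hn).Adj (bv hn) x ↔ x = bw hn ∨ x = bu hn := by
  rw [broom_adj]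
  constructor
  · rintro (⟨h, -, -⟩ | ⟨h, -, -⟩ | ⟨-, h⟩ | ⟨h, -⟩)
    · exact absurd h (bw_ne_bv hn).symm
    · exact Or.inl h
    · exact Or.inr h
    · exact absurd h (bv_ne_bu hn)
  · rintro (rfl | rfl)
    · exact Or.inr (Or.inl ⟨rfl, (bw_ne_bv hn).symm, (bv_ne_bu hn)⟩)
    · exact Or.inr (Or.inr (Or.inl ⟨rfl, rfl⟩))

lemma broom_adj_bu {x : Fin n} : (broom hn).Adj (bu hn) x ↔ x = bv hn := by
  rw [broom_adj]
  constructor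
  · rintro (⟨h, -, -⟩ | ⟨-, -, h⟩ | ⟨h, -⟩ | ⟨-, h⟩)
    · exact absurd h (bw_ne_bu hn).symm
    · exact absurd rfl h
    · exact absurd h (bv_ne_bu hn).symm
    · exact h
  · rintro rfl
    exact Or.inr (Or.inr (Or.inr ⟨rfl, rfl⟩))

lemma broom_adj_bw {x : Fin n} : (broom hn).Adj (bw hn) x ↔ x ≠ bw hn ∧ x ≠ bu hn := by
  rw [broom_adj]
  constructor
  · rintro (⟨-, h⟩ | ⟨h, h', -⟩ | ⟨h, -⟩ | ⟨h, -⟩)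
    · exact h
    · exact absurd rfl h'
    · exact absurd h (bw_ne_bv hn)
    · exact absurd h (bw_ne_bu hn)
  · intro h
    exact Or.inl ⟨rfl, h⟩

lemma broom_adj_leaf {b x : Fin n} (h1 : b ≠ bw hn) (h2 : b ≠ bv hn) (h3 : b ≠ bu hn) :
    (broom hn).Adj b x ↔ x = bw hn := by
  rw [broom_adj]
  constructor
  · rintro (⟨h, -, -⟩ | ⟨h, -, -⟩ | ⟨h, -⟩ | ⟨h, -⟩)
    · exact absurd h h1
    · exact h
    · exact absurd h h2
    · exact absurd h h3
  · rintro rfl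
    exact Or.inr (Or.inl ⟨rfl, h1, h3⟩)

lemma broom_connected : (broom hn).Connected := by
  rw [SimpleGraph.connected_iff]
  refine ⟨?_, ⟨bw hn⟩⟩
  have reach : ∀ a, (broom hn).Reachable a (bw hn) := by
    intro a
    by_cases h1 : a = bw hn
    · exact h1 ▸ SimpleGraph.Reachable.refl _
    by_cases h2 : a = bu hn
    · subst h2
      have ha1 : (broom hn).Adj (bu hn) (bv hn) := (broom_adj_bu hn).2 rfl
      have ha2 : (broom hn).Adj (bv hn) (bw hn) := (broom_adj_bv hn).2 (Or.inl rfl)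
      exact ha1.reachable.trans ha2.reachable
    · exact ((broom_adj hn).2 (Or.inr (Or.inl ⟨rfl, h1, h2⟩))).symm.reachable.symm
  intro a b
  exact (reach a).trans (reach b).symm


lemma broom_no_reach_w (b : Fin n) (h1 : b ≠ bw hn) (h2 : b ≠ bu hn) :
    ¬((broom hn) \ SimpleGraph.fromEdgeSet {s(bw hn, b)}).Reachable (bw hn) b := by
  intro hreach
  obtain ⟨p⟩ := hreach.symm
  by_cases hb : b = bv hn
  · subst hb
    have hstay := walk_stay (G := (broom hn) \ SimpleGraph.fromEdgeSet {s(bw hn, bv hn)})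
      (P := fun x => x = bv hn ∨ x = bu hn) ?_ p (Or.inl rfl)
    · rcases hstay with h | h
      · exact bw_ne_bv hn h
      · exact bw_ne_bu hn h
    · intro x y hx hxy
      rw [SimpleGraph.sdiff_adj, SimpleGraph.fromEdgeSet_adj] at hxy
      obtain ⟨hadj, hne⟩ := hxy
      rcases hx with rfl | rfl
      · rcases (broom_adj_bv hn).1 hadj with rfl | rfl
        · exact absurd ⟨Set.mem_singleton_iff.2 Sym2.eq_swap, (bw_ne_bv hn).symm⟩ hne
        · exact Or.inr rfl
      · exact Or.inl ((broom_adj_bu hn).1 hadj)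
  · have hstay := walk_stay (G := (broom hn) \ SimpleGraph.fromEdgeSet {s(bw hn, b)})
      (P := fun x => x = b) ?_ p rfl
    · exact h1 hstay.symm
    · intro x y hx hxy
      subst hx
      rw [SimpleGraph.sdiff_adj, SimpleGraph.fromEdgeSet_adj] at hxy
      obtain ⟨hadj, hne⟩ := hxy
      have hy : y = bw hn := (broom_adj_leaf hn h1 hb h2).1 hadj
      subst hy
      exact absurd ⟨Set.mem_singleton_iff.2 Sym2.eq_swap, h1⟩ hne

lemma broom_no_reach_vu :
    ¬((broom hn) \ SimpleGraph.fromEdgeSet {s(bv hn, bu hn)}).Reachable (bv hn) (bu hn) := by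
  intro hreach
  obtain ⟨p⟩ := hreach.symm
  have hstay := walk_stay (G := (broom hn) \ SimpleGraph.fromEdgeSet {s(bv hn, bu hn)})
    (P := fun x => x = bu hn) ?_ p rfl
  · exact bv_ne_bu hn hstay
  · intro x y hx hxy
    subst hx
    rw [SimpleGraph.sdiff_adj, SimpleGraph.fromEdgeSet_adj] at hxy
    obtain ⟨hadj, hne⟩ := hxy
    have hy : y = bv hn := (broom_adj_bu hn).1 hadj
    subst hy
    exact absurd ⟨Set.mem_singleton_iff.2 Sym2.eq_swap, (bv_ne_bu hn).symm⟩ hne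

lemma broom_isTree : (broom hn).IsTree := by
  refine ⟨broom_connected hn, ?_⟩
  rw [SimpleGraph.isAcyclic_iff_forall_adj_isBridge]
  intro a b hab
  rw [SimpleGraph.isBridge_iff]
  rcases (broom_adj hn).1 hab with ⟨rfl, h1, h2⟩ | ⟨rfl, h1, h2⟩ | ⟨rfl, rfl⟩ | ⟨rfl, rfl⟩
  · exact broom_no_reach_w hn b h1 h2
  · intro hreach
    have heq : s(a, bw hn) = s(bw hn, a) := Sym2.eq_swap
    rw [heq] at hreach
    exact broom_no_reach_w hn a h1 h2 hreach.symm
  · exact broom_no_reach_vu hn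
  · intro hreach
    have heq : s(bu hn, bv hn) = s(bv hn, bu hn) := Sym2.eq_swap
    rw [heq] at hreach
    exact broom_no_reach_vu hn hreach.symm


def leaves (hn : 9 ≤ n) : Finset (Fin n) :=
  univ.filter fun x => x ≠ bw hn ∧ x ≠ bv hn ∧ x ≠ bu hn

lemma mem_leaves {x : Fin n} : x ∈ leaves hn ↔ x ≠ bw hn ∧ x ≠ bv hn ∧ x ≠ bu hn := by
  simp [leaves]

lemma leaves_card : (leaves hn).card = n - 3 := by
  have h := Finset.card_filter_add_card_filter_not
    (s := (univ : Finset (Fin n))) (p := fun x => x ≠ bw hn ∧ x ≠ bv hn ∧ x ≠ bu hn)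
  have h2 : ((univ : Finset (Fin n)).filter fun x => ¬(x ≠ bw hn ∧ x ≠ bv hn ∧ x ≠ bu hn))
      = {bw hn, bv hn, bu hn} := by
    ext x
    simp only [Finset.mem_filter, Finset.mem_univ, true_and, Finset.mem_insert,
      Finset.mem_singleton]
    tauto
  rw [h2] at h
  have h3 : ({bw hn, bv hn, bu hn} : Finset (Fin n)).card = 3 := by
    rw [Finset.card_insert_of_notMem (by simp [bw_ne_bv hn, bw_ne_bu hn]),
      Finset.card_insert_of_notMem (by simp [bv_ne_bu hn]), Finset.card_singleton]
  rw [h3, Finset.card_univ, Fintype.card_fin] at h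
  have : (leaves hn).card = ((univ : Finset (Fin n)).filter
      fun x => x ≠ bw hn ∧ x ≠ bv hn ∧ x ≠ bu hn).card := rfl
  omega

lemma broom_edgeFinset :
    (broom hn).edgeFinset =
      ((univ.filter fun b : Fin n => b ≠ bw hn ∧ b ≠ bu hn).image fun b => s(bw hn, b))
        ∪ {s(bv hn, bu hn)} := by
  ext e
  induction e using Sym2.ind with
  | _ x y =>
    simp only [SimpleGraph.mem_edgeFinset, SimpleGraph.mem_edgeSet, Finset.mem_union,
      Finset.mem_image, Finset.mem_filter, Finset.mem_univ, true_and, Finset.mem_singleton]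
    constructor
    · intro h
      rcases (broom_adj hn).1 h with ⟨rfl, h1⟩ | ⟨rfl, h1, h2⟩ | ⟨rfl, rfl⟩ | ⟨rfl, rfl⟩
      · exact Or.inl ⟨y, h1, rfl⟩
      · exact Or.inl ⟨x, ⟨h1, h2⟩, Sym2.eq_swap⟩
      · exact Or.inr rfl
      · exact Or.inr Sym2.eq_swap
    · rintro (⟨b, ⟨hb1, hb2⟩, hb⟩ | h)
      · rw [Sym2.eq_iff] at hb
        rcases hb with ⟨rfl, rfl⟩ | ⟨rfl, rfl⟩
        · exact (broom_adj hn).2 (Or.inl ⟨rfl, hb1, hb2⟩)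
        · exact (broom_adj hn).2 (Or.inr (Or.inl ⟨rfl, hb1, hb2⟩))
      · rw [Sym2.eq_iff] at h
        rcases h with ⟨rfl, rfl⟩ | ⟨rfl, rfl⟩
        · exact (broom_adj hn).2 (Or.inr (Or.inr (Or.inl ⟨rfl, rfl⟩)))
        · exact (broom_adj hn).2 (Or.inr (Or.inr (Or.inr ⟨rfl, rfl⟩)))

lemma Rset_bv_bu : Rset (broom hn) (bv hn) (bu hn) = leaves hn := by
  ext x
  rw [mem_Rset, mem_leaves]
  constructor
  · rintro ⟨h1, h2, h3, h4⟩
    refine ⟨?_, h1, h2⟩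
    intro hx
    exact h3 ((broom_adj_bv hn).2 (Or.inl hx))
  · rintro ⟨h1, h2, h3⟩
    refine ⟨h2, h3, ?_, ?_⟩
    · intro hadj
      rcases (broom_adj_bv hn).1 hadj with rfl | rfl
      · exact h1 rfl
      · exact h3 rfl
    · intro hadj
      exact h2 ((broom_adj_bu hn).1 hadj)

lemma Rset_bw_bv : Rset (broom hn) (bw hn) (bv hn) = ∅ := by
  ext x
  rw [mem_Rset]
  simp only [Finset.notMem_empty, iff_false]
  rintro ⟨h1, h2, h3, h4⟩
  by_cases hx : x = bu hn
  · exact h4 ((broom_adj_bv hn).2 (Or.inr hx))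
  · exact h3 ((broom_adj_bw hn).2 ⟨h1, hx⟩)

lemma Rset_bw_leaf {b : Fin n} (hb : b ∈ leaves hn) :
    Rset (broom hn) (bw hn) b = {bu hn} := by
  obtain ⟨hb1, hb2, hb3⟩ := mem_leaves hn |>.1 hb
  ext x
  rw [mem_Rset, Finset.mem_singleton]
  constructor
  · rintro ⟨h1, h2, h3, h4⟩
    by_contra hx
    exact h3 ((broom_adj_bw hn).2 ⟨h1, hx⟩)
  · rintro rfl
    refine ⟨(bw_ne_bu hn).symm, fun hh => hb3 hh.symm, ?_, ?_⟩
    · intro hadj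
      exact ((broom_adj_bw hn).1 hadj).2 rfl
    · intro hadj
      exact bw_ne_bu hn (((broom_adj_leaf hn hb1 hb2 hb3).1 hadj)).symm

lemma indepIn_leaves : indepIn (broom hn) (leaves hn) = (leaves hn).powerset := by
  ext S
  rw [mem_indepIn, Finset.mem_powerset]
  constructor
  · exact fun h => h.1
  · intro hS
    refine ⟨hS, ?_⟩
    rw [edgesIn_eq, Finset.card_eq_zero]
    ext e
    induction e using Sym2.ind with
    | _ x y =>
      simp only [Finset.notMem_empty, iff_false]
      intro he
      obtain ⟨hadj, hx, hy⟩ := mk_mem_inEdges.1 he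
      have hxl := (mem_leaves hn).1 (hS hx)
      have hyl := (mem_leaves hn).1 (hS hy)
      rcases (broom_adj hn).1 hadj with ⟨h, -⟩ | ⟨h, -⟩ | ⟨h, -⟩ | ⟨h, -⟩
      · exact hxl.1 h
      · exact hyl.1 h
      · exact hxl.2.1 h
      · exact hxl.2.2 h

lemma indepIn_empty (G : SimpleGraph V) : indepIn G (∅ : Finset V) = {∅} := by
  ext S
  rw [mem_indepIn]
  simp only [Finset.subset_empty, Finset.mem_singleton]
  constructor
  · exact fun h => h.1
  · rintro rfl
    exact ⟨rfl, edgesIn_empty G⟩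

lemma indepIn_singleton (G : SimpleGraph V) (a : V) :
    indepIn G ({a} : Finset V) = {∅, {a}} := by
  ext S
  rw [mem_indepIn]
  simp only [Finset.subset_singleton_iff, Finset.mem_insert, Finset.mem_singleton]
  constructor
  · exact fun h => h.1
  · rintro (rfl | rfl)
    · exact ⟨Or.inl rfl, edgesIn_empty G⟩
    · exact ⟨Or.inr rfl, edgesIn_singleton G a⟩


lemma sum_indepIn_singleton (G : SimpleGraph V) (a : V) (f : Finset V → ℤ) :
    ∑ S ∈ indepIn G ({a} : Finset V), f S = f ∅ + f {a} := by
  rw [indepIn_singleton]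
  rw [Finset.sum_insert (by
    simp only [Finset.mem_singleton]
    exact fun h => (Finset.singleton_ne_empty a) h.symm), Finset.sum_singleton]

lemma sum_powerset_pair (L : Finset V) (c : ℤ) :
    ∑ S ∈ L.powerset, (2 * (S.card:ℤ) + c) = ((L.card : ℤ) + c) * 2 ^ L.card := by
  have h1 : ∑ S ∈ L.powerset, ((S.card : ℤ)) = ∑ S ∈ L.powerset, (((L \ S).card : ℤ)) := by
    apply Finset.sum_nbij' (i := fun S => L \ S) (j := fun S => L \ S)
    · intro S hS
      exact Finset.mem_powerset.2 (Finset.sdiff_subset)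
    · intro S hS
      exact Finset.mem_powerset.2 (Finset.sdiff_subset)
    · intro S hS
      exact Finset.sdiff_sdiff_eq_self (Finset.mem_powerset.1 hS)
    · intro S hS
      exact Finset.sdiff_sdiff_eq_self (Finset.mem_powerset.1 hS)
    · intro S hS
      rw [Finset.sdiff_sdiff_eq_self (Finset.mem_powerset.1 hS)]
  have key : ∑ S ∈ L.powerset, (2 * (S.card:ℤ)) = (L.card:ℤ) * 2 ^ L.card := by
    calc ∑ S ∈ L.powerset, (2 * (S.card:ℤ))
        = ∑ S ∈ L.powerset, ((S.card:ℤ) + ((L \ S).card : ℤ)) := by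
          rw [Finset.sum_add_distrib, ← h1, ← two_mul, Finset.mul_sum]
      _ = ∑ S ∈ L.powerset, ((L.card : ℤ)) := by
          apply Finset.sum_congr rfl
          intro S hS
          have hsub := Finset.mem_powerset.1 hS
          have := Finset.card_sdiff_add_card_eq_card hsub
          push_cast [← this]
          ring
      _ = (L.card:ℤ) * 2 ^ L.card := by
          rw [Finset.sum_const, Finset.card_powerset, nsmul_eq_mul]
          push_cast
          ring
  rw [Finset.sum_add_distrib, key, Finset.sum_const, Finset.card_powerset, nsmul_eq_mul]
  push_cast
  ring

lemma pow_bound (m : ℕ) : 2 * (m:ℤ)^2 + 21 * m + 53 < 64 * 2 ^ m := by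
  induction m with
  | zero => norm_num
  | succ k ih =>
    have h2 : (64:ℤ) * 2 ^ (k+1) = 2 * (64 * 2 ^ k) := by ring
    push_cast
    rw [h2]
    push_cast at ih
    nlinarith [ih, sq_nonneg ((k:ℤ))]


lemma lower_main : 0 < ∑ S ∈ nearlyIndep (broom hn) 1, (2 * (S.card:ℤ) - (n:ℤ)) := by
  rw [master (broom hn) (fun c => 2 * (c:ℤ) - (n:ℤ))]
  rw [broom_edgeFinset hn]
  have hdisj : Disjoint
      ((univ.filter fun b : Fin n => b ≠ bw hn ∧ b ≠ bu hn).image fun b => s(bw hn, b))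
      ({s(bv hn, bu hn)} : Finset (Sym2 (Fin n))) := by
    simp only [Finset.disjoint_singleton_right, Finset.mem_image, Finset.mem_filter,
      Finset.mem_univ, true_and, not_exists]
    rintro b ⟨⟨h1, h2⟩, hb⟩
    rw [Sym2.eq_iff] at hb
    rcases hb with ⟨h3, -⟩ | ⟨h3, -⟩
    · exact bw_ne_bv hn h3
    · exact bw_ne_bu hn h3
  rw [Finset.sum_union hdisj, Finset.sum_singleton]
  have hinj : Set.InjOn (fun b => s(bw hn, b))
      ((univ.filter fun b : Fin n => b ≠ bw hn ∧ b ≠ bu hn : Finset (Fin n)) :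
        Set (Fin n)) := by
    intro a ha b hb hab
    simp only at hab
    rw [Sym2.eq_iff] at hab
    rcases hab with ⟨-, h⟩ | ⟨h1, h2⟩
    · exact h
    · exact h2.trans h1
  rw [Finset.sum_image hinj]
  have hsplit : (univ.filter fun b : Fin n => b ≠ bw hn ∧ b ≠ bu hn)
      = insert (bv hn) (leaves hn) := by
    ext x
    simp only [Finset.mem_filter, Finset.mem_univ, true_and, Finset.mem_insert, mem_leaves]
    constructor
    · rintro ⟨h1, h2⟩
      by_cases hx : x = bv hn
      · exact Or.inl hx
      · exact Or.inr ⟨h1, hx, h2⟩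
    · rintro (rfl | ⟨h1, h2, h3⟩)
      · exact ⟨(bw_ne_bv hn).symm, bv_ne_bu hn⟩
      · exact ⟨h1, h3⟩
  have hbvleaf : bv hn ∉ leaves hn := by simp [mem_leaves]
  rw [hsplit, Finset.sum_insert hbvleaf]
  -- piece 1 : edge (bw, bv)
  have h1 : ∑ S' ∈ indepIn (broom hn) (RsetE (broom hn) s(bw hn, bv hn)),
      (2 * ((S'.card + 2 : ℕ) : ℤ) - (n:ℤ)) = 4 - (n:ℤ) := by
    rw [RsetE_mk, Rset_bw_bv hn, indepIn_empty, Finset.sum_singleton]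
    simp
  -- piece 2 : leaf edges
  have h2 : ∑ b ∈ leaves hn, (∑ S' ∈ indepIn (broom hn) (RsetE (broom hn) s(bw hn, b)),
      (2 * ((S'.card + 2 : ℕ) : ℤ) - (n:ℤ))) = ((n:ℤ) - 3) * (10 - 2 * n) := by
    have hconst : ∀ b ∈ leaves hn,
        ∑ S' ∈ indepIn (broom hn) (RsetE (broom hn) s(bw hn, b)),
          (2 * ((S'.card + 2 : ℕ) : ℤ) - (n:ℤ)) = 10 - 2 * (n:ℤ) := by
      intro b hb
      rw [RsetE_mk, Rset_bw_leaf hn hb,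
        sum_indepIn_singleton (broom hn) (bu hn) (fun S' => 2 * ((S'.card + 2 : ℕ) : ℤ) - (n:ℤ))]
      simp only [Finset.card_empty, Finset.card_singleton]
      push_cast
      ring
    rw [Finset.sum_congr rfl hconst, Finset.sum_const, leaves_card hn, nsmul_eq_mul]
    have hcast : ((n - 3 : ℕ) : ℤ) = (n:ℤ) - 3 := by
      have : 3 ≤ n := by omega
      push_cast [this]
      ring
    rw [hcast]
  -- piece 3 : edge (bv, bu)
  have h3 : ∑ S' ∈ indepIn (broom hn) (RsetE (broom hn) s(bv hn, bu hn)),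
      (2 * ((S'.card + 2 : ℕ) : ℤ) - (n:ℤ)) = 2 ^ (n - 3) := by
    rw [RsetE_mk, Rset_bv_bu hn, indepIn_leaves hn]
    have hc : ∑ S' ∈ (leaves hn).powerset, (2 * ((S'.card + 2 : ℕ) : ℤ) - (n:ℤ))
        = ∑ S' ∈ (leaves hn).powerset, (2 * ((S'.card : ℕ) : ℤ) + (4 - (n:ℤ))) :=
      Finset.sum_congr rfl fun S' _ => by push_cast; ring
    rw [hc, sum_powerset_pair, leaves_card hn]
    have hcast : ((n - 3 : ℕ) : ℤ) = (n:ℤ) - 3 := by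
      have : 3 ≤ n := by omega
      push_cast [this]
      ring
    rw [hcast]
    ring
  rw [h1, h2, h3]
  -- final arithmetic
  obtain ⟨m, rfl⟩ : ∃ m, n = m + 9 := ⟨n - 9, by omega⟩
  have hpow : (2:ℤ) ^ (m + 9 - 3) = 64 * 2 ^ m := by
    have : m + 9 - 3 = m + 6 := by omega
    rw [this, pow_add]
    ring
  rw [hpow]
  have hb := pow_bound m
  push_cast
  nlinarith [hb]


lemma lower_av : (n:ℚ)/2 < avNI (broom hn) 1 := by
  have hmain := lower_main hn
  have heq : ∑ S ∈ nearlyIndep (broom hn) 1, (2 * (S.card:ℤ) - (n:ℤ))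
      = 2 * (sumNI (broom hn) 1 : ℤ) - (n:ℤ) * (sigmaNI (broom hn) 1 : ℤ) := by
    have h1 := sum_linear (broom hn) ((n:ℤ)) 2
    have h2 : ∑ S ∈ nearlyIndep (broom hn) 1, (2 * (S.card:ℤ) - (n:ℤ))
        + ∑ S ∈ nearlyIndep (broom hn) 1, ((n:ℤ) - 2 * S.card) = 0 := by
      rw [← Finset.sum_add_distrib]
      exact Finset.sum_eq_zero fun _ _ => by ring
    linarith
  rw [heq] at hmain
  have hσ : sigmaNI (broom hn) 1 ≠ 0 := by
    intro h0
    have hNI : nearlyIndep (broom hn) 1 = ∅ := by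
      rwa [sigmaNI, Finset.card_eq_zero] at h0
    have hsum : sumNI (broom hn) 1 = 0 := by rw [sumNI, hNI, Finset.sum_empty]
    rw [h0, hsum] at hmain
    simp at hmain
  rw [avNI, if_neg hσ]
  have hσQ : (0:ℚ) < (sigmaNI (broom hn) 1 : ℚ) := by
    exact_mod_cast Nat.pos_of_ne_zero hσ
  rw [div_lt_div_iff₀ (by norm_num : (0:ℚ) < 2) hσQ]
  have hZ : (n:ℤ) * (sigmaNI (broom hn) 1 : ℤ) < (sumNI (broom hn) 1 : ℤ) * 2 := by linarith
  exact_mod_cast hZ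

end Broom

end NI

theorem stmt16 (n : ℕ) (hn : 8 < n) :
    (∃ T : SimpleGraph (Fin n), T.IsTree ∧ (n : ℚ) / 2 < avNI T 1) ∧
    (∀ (V : Type) (_ : Fintype V), Fintype.card V = n →
      ∀ T : SimpleGraph V, T.IsTree → avNI T 1 < ((n : ℚ) + 1) / 2) := by
  have h9 : 9 ≤ n := hn
  constructor
  · exact ⟨NI.broom h9, NI.broom_isTree h9, NI.lower_av h9⟩
  · intro V instV hcard T hT
    have h := @NI.upper_av V instV T hT.isConnected (by rw [hcard]; omega)
    rwa [hcard] at h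
end
end

section
/- Let G = (V, E) be a finite simple graph with at least one edge, and let uv ∈ E. Set l = |N(u) ∪ N(v)|, m_u = |N[u]| and m_v = |N[v]|. Then 1 / ( 2^{l−2} + 2^{l−m_u} + 2^{l−m_v} + 1 ) ≤ σ_0( G − (N[v] ∪ N[u]) ) / σ_0(G) ≤ 1 − σ_0(G − v)/σ_0(G). In particular, σ_0( G − (N[v] ∪ N[u]) ) / σ_0(G) ≥ 1 / ( 3·2^{l−2} + 1 ). -/
open scoped Classical
open Finset

noncomputable section

/-- For an edge `e = uv`, the set `N(u) ∪ N(v)`. -/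
lemma mem_NI0 {V : Type*} [Fintype V] (G : SimpleGraph V) (S : Finset V) :
    S ∈ nearlyIndep G 0 ↔ ∀ a ∈ S, ∀ b ∈ S, ¬ G.Adj a b := by
  simp only [nearlyIndep, mem_filter, mem_univ, true_and, edgesIn, card_eq_zero,
    filter_eq_empty_iff, SimpleGraph.mem_edgeFinset]
  constructor
  · intro h a ha b hb hab
    exact h ((G.mem_edgeSet).mpr hab)
      (fun w hw => by rcases Sym2.mem_iff.mp hw with rfl | rfl <;> assumption)
  · intro h e he hmem
    induction e using Sym2.ind with
    | _ a b =>
      exact h a (hmem a (Sym2.mem_mk_left a b)) b (hmem b (Sym2.mem_mk_right a b))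
        ((G.mem_edgeSet).mp he)

lemma NI0_subset {V : Type*} [Fintype V] (G : SimpleGraph V) {S T : Finset V}
    (hS : S ∈ nearlyIndep G 0) (hT : T ⊆ S) : T ∈ nearlyIndep G 0 := by
  rw [mem_NI0] at *
  exact fun a ha b hb => hS a (hT ha) b (hT hb)

lemma sigma_congr' {W : Type*} (i1 i2 : Fintype W) (G : SimpleGraph W) :
    @sigmaNI W i1 G 0 = @sigmaNI W i2 G 0 := by
  congr!

lemma sigma_del_congr {V : Type*} [Fintype V] (G : SimpleGraph V) {A B : Set V} (h : A = B)
    {i1 : Fintype ↥(Aᶜ)} {i2 : Fintype ↥(Bᶜ)} :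
    @sigmaNI _ i1 (deleteVerts G A) 0 = @sigmaNI _ i2 (deleteVerts G B) 0 := by
  subst h
  exact sigma_congr' i1 i2 _

lemma sigma_pos {V : Type*} [Fintype V] (G : SimpleGraph V) : 0 < sigmaNI G 0 :=
  Finset.card_pos.mpr ⟨∅, by simp [mem_NI0]⟩

lemma key_upper {V : Type*} [Fintype V] (G : SimpleGraph V) (v : V) (A : Set V)
    (hv : v ∈ A) (hN : G.neighborSet v ⊆ A) {i1 : Fintype ↥(Aᶜ)}
    {i2 : Fintype ↥(({v} : Set V)ᶜ)} :
    @sigmaNI _ i1 (deleteVerts G A) 0 + @sigmaNI _ i2 (deleteVerts G ({v} : Set V)) 0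
      ≤ sigmaNI G 0 := by
  classical
  have h1 : sigmaNI (deleteVerts G A) 0 ≤ ((nearlyIndep G 0).filter fun S => v ∈ S).card := by
    apply Finset.card_le_card_of_injOn
      (fun S => insert v (S.map (Function.Embedding.subtype (· ∈ Aᶜ))))
    · intro S hS
      rw [mem_coe, mem_NI0] at hS
      rw [mem_coe, mem_filter]
      refine ⟨?_, mem_insert_self _ _⟩
      rw [mem_NI0]
      intro a ha b hb hab
      rcases mem_insert.mp ha with rfl | ha'
      · rcases mem_insert.mp hb with rfl | hb'
        · exact G.irrefl hab
        · obtain ⟨b₀, hb₀, rfl⟩ := Finset.mem_map.mp hb'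
          exact b₀.2 (hN hab)
      · obtain ⟨a₀, ha₀, rfl⟩ := Finset.mem_map.mp ha'
        rcases mem_insert.mp hb with rfl | hb'
        · exact a₀.2 (hN hab.symm)
        · obtain ⟨b₀, hb₀, rfl⟩ := Finset.mem_map.mp hb'
          exact hS a₀ ha₀ b₀ hb₀ (by simpa [deleteVerts] using hab)
    · intro S hS S' hS' h
      simp only at h
      have hv1 : ∀ T : Finset ↥(Aᶜ), v ∉ T.map (Function.Embedding.subtype (· ∈ Aᶜ)) := by
        intro T hmem
        obtain ⟨a₀, _, ha⟩ := Finset.mem_map.mp hmem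
        exact a₀.2 (by rw [show (a₀ : V) = v from ha]; exact hv)
      apply Finset.map_injective (Function.Embedding.subtype (· ∈ Aᶜ))
      calc S.map _ = (insert v (S.map (Function.Embedding.subtype (· ∈ Aᶜ)))).erase v :=
            (Finset.erase_insert (hv1 S)).symm
        _ = (insert v (S'.map (Function.Embedding.subtype (· ∈ Aᶜ)))).erase v := by rw [h]
        _ = S'.map _ := Finset.erase_insert (hv1 S')
  have h2 : sigmaNI (deleteVerts G ({v} : Set V)) 0 ≤
      ((nearlyIndep G 0).filter fun S => ¬ v ∈ S).card := by
    apply Finset.card_le_card_of_injOn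
      (fun S => S.map (Function.Embedding.subtype (· ∈ ({v} : Set V)ᶜ)))
    · intro S hS
      rw [mem_coe, mem_NI0] at hS
      rw [mem_coe, mem_filter]
      constructor
      · rw [mem_NI0]
        intro a ha b hb hab
        obtain ⟨a₀, ha₀, rfl⟩ := Finset.mem_map.mp ha
        obtain ⟨b₀, hb₀, rfl⟩ := Finset.mem_map.mp hb
        exact hS a₀ ha₀ b₀ hb₀ (by simpa [deleteVerts] using hab)
      · intro hmem
        obtain ⟨a₀, _, ha⟩ := Finset.mem_map.mp hmem
        exact a₀.2 (by rw [show (a₀ : V) = v from ha]; exact Set.mem_singleton v)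
    · intro S hS S' hS' h
      exact Finset.map_injective _ h
  calc sigmaNI (deleteVerts G A) 0 + sigmaNI (deleteVerts G ({v} : Set V)) 0
      ≤ ((nearlyIndep G 0).filter fun S => v ∈ S).card +
        ((nearlyIndep G 0).filter fun S => ¬ v ∈ S).card := Nat.add_le_add h1 h2
    _ = sigmaNI G 0 := Finset.card_filter_add_card_filter_not _

/-- Count of independent subsets of `A'` containing `u`. -/
lemma count_contain {V : Type*} [Fintype V] (G : SimpleGraph V) (u : V) (A' : Finset V)
    (hN : ∀ x ∈ insert u (G.neighborSet u), x ∈ A') :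
    (((A'.powerset.filter (· ∈ nearlyIndep G 0))).filter fun T => u ∈ T).card
      ≤ 2 ^ (A'.card - (insert u (G.neighborSet u)).toFinset.card) := by
  classical
  set Nu' := (insert u (G.neighborSet u)).toFinset with hNu'
  have hsub : Nu' ⊆ A' := fun x hx => hN x (Set.mem_toFinset.mp hx)
  have hcard : (A' \ Nu').card = A'.card - Nu'.card := Finset.card_sdiff_of_subset hsub
  calc (((A'.powerset.filter (· ∈ nearlyIndep G 0))).filter fun T => u ∈ T).card
      ≤ ((A' \ Nu').powerset).card := by
        apply Finset.card_le_card_of_injOn (fun T => T.erase u)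
        · intro T hT
          simp only [mem_coe, mem_filter, mem_powerset] at hT
          obtain ⟨⟨hTA, hTind⟩, huT⟩ := hT
          rw [mem_coe, mem_powerset]
          intro x hx
          obtain ⟨hxu, hxT⟩ := Finset.mem_erase.mp hx
          rw [Finset.mem_sdiff]
          refine ⟨hTA hxT, fun hxNu => ?_⟩
          have := Set.mem_toFinset.mp hxNu
          rcases Set.mem_insert_iff.mp this with rfl | hadj
          · exact hxu rfl
          · exact (mem_NI0 G T).mp hTind u huT x hxT hadj
        · intro T hT T' hT' h
          simp only [coe_filter, Set.mem_setOf_eq] at hT hT'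
          simp only at h
          rw [← Finset.insert_erase hT.2, ← Finset.insert_erase hT'.2, h]
    _ = 2 ^ (A'.card - Nu'.card) := by rw [Finset.card_powerset, hcard]

set_option maxHeartbeats 1000000 in
lemma key_lower {V : Type*} [Fintype V] (G : SimpleGraph V) {u v : V} (huv : G.Adj u v)
    {i : Fintype ↥((G.neighborSet u ∪ G.neighborSet v)ᶜ)} :
    sigmaNI G 0 ≤
      (2 ^ ((G.neighborSet u ∪ G.neighborSet v).toFinset.card - 2)
        + 2 ^ ((G.neighborSet u ∪ G.neighborSet v).toFinset.card
            - (insert u (G.neighborSet u)).toFinset.card)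
        + 2 ^ ((G.neighborSet u ∪ G.neighborSet v).toFinset.card
            - (insert v (G.neighborSet v)).toFinset.card))
      * @sigmaNI _ i (deleteVerts G (G.neighborSet u ∪ G.neighborSet v)) 0 := by
  classical
  set A : Set V := G.neighborSet u ∪ G.neighborSet v with hA
  set A' : Finset V := A.toFinset with hA'
  have hne : u ≠ v := G.ne_of_adj huv
  have huA : u ∈ A := Or.inr huv.symm
  have hvA : v ∈ A := Or.inl huv
  have huA' : u ∈ A' := Set.mem_toFinset.mpr huA
  have hvA' : v ∈ A' := Set.mem_toFinset.mpr hvA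
  set P : Finset (Finset V) := A'.powerset.filter (· ∈ nearlyIndep G 0) with hP
  -- Step A : sigmaNI G 0 ≤ P.card * sigmaNI (deleteVerts G A) 0
  have stepA : sigmaNI G 0 ≤ P.card * sigmaNI (deleteVerts G A) 0 := by
    show (nearlyIndep G 0).card ≤ P.card * (nearlyIndep (deleteVerts G A) 0).card
    rw [← Finset.card_product]
    apply Finset.card_le_card_of_injOn
      (fun S => (S ∩ A', (S \ A').subtype (· ∈ Aᶜ)))
    · intro S hS
      rw [Finset.mem_coe, Finset.mem_product]
      constructor
      · rw [hP, mem_filter, mem_powerset]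
        exact ⟨inter_subset_right, NI0_subset G hS inter_subset_left⟩
      · rw [mem_NI0]
        intro a ha b hb hab
        rw [Finset.mem_subtype] at ha hb
        have haS : (a : V) ∈ S := (Finset.mem_sdiff.mp ha).1
        have hbS : (b : V) ∈ S := (Finset.mem_sdiff.mp hb).1
        exact (mem_NI0 G S).mp hS a haS b hbS (by simpa [deleteVerts] using hab)
    · intro S hS S' hS' h
      simp only [Prod.mk.injEq] at h
      obtain ⟨h1, h2⟩ := h
      have h2' : S \ A' = S' \ A' := by
        have := congrArg (Finset.map (Function.Embedding.subtype (· ∈ Aᶜ))) h2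
        rw [Finset.subtype_map, Finset.subtype_map] at this
        have e1 : (S \ A').filter (· ∈ Aᶜ) = S \ A' :=
          Finset.filter_true_of_mem fun x hx =>
            fun hxA => (Finset.mem_sdiff.mp hx).2 (Set.mem_toFinset.mpr hxA)
        have e2 : (S' \ A').filter (· ∈ Aᶜ) = S' \ A' :=
          Finset.filter_true_of_mem fun x hx =>
            fun hxA => (Finset.mem_sdiff.mp hx).2 (Set.mem_toFinset.mpr hxA)
        rwa [e1, e2] at this
      have : S ∩ A' ∪ S \ A' = S' ∩ A' ∪ S' \ A' := by rw [h1, h2']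
      have eS : ∀ T : Finset V, T ∩ A' ∪ T \ A' = T := by
        intro T; ext x; simp only [mem_union, mem_inter, mem_sdiff]; tauto
      rwa [eS, eS] at this
  -- Step B : P.card bound
  have stepB : P.card ≤ 2 ^ (A'.card - 2)
      + 2 ^ (A'.card - (insert u (G.neighborSet u)).toFinset.card)
      + 2 ^ (A'.card - (insert v (G.neighborSet v)).toFinset.card) := by
    have hcover : P ⊆ (P.filter fun T => u ∉ T ∧ v ∉ T) ∪ ((P.filter fun T => u ∈ T)
        ∪ (P.filter fun T => v ∈ T)) := by
      intro T hT
      simp only [mem_union, mem_filter]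
      rcases Classical.em (u ∈ T) with hu | hu
      · exact Or.inr (Or.inl ⟨hT, hu⟩)
      · rcases Classical.em (v ∈ T) with hv | hv
        · exact Or.inr (Or.inr ⟨hT, hv⟩)
        · exact Or.inl ⟨hT, hu, hv⟩
    have h0 : (P.filter fun T => u ∉ T ∧ v ∉ T).card ≤ 2 ^ (A'.card - 2) := by
      calc (P.filter fun T => u ∉ T ∧ v ∉ T).card ≤ ((A' \ {u, v}).powerset).card := by
            apply Finset.card_le_card
            intro T hT
            simp only [mem_filter, hP, mem_powerset] at hT ⊢
            obtain ⟨⟨hTA, _⟩, hu, hv⟩ := hT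
            intro x hx
            rw [Finset.mem_sdiff]
            exact ⟨hTA hx, fun hxy => by
              rcases Finset.mem_insert.mp hxy with rfl | hxy
              · exact hu hx
              · rw [Finset.mem_singleton] at hxy; subst hxy; exact hv hx⟩
        _ = 2 ^ (A'.card - 2) := by
            rw [Finset.card_powerset, Finset.card_sdiff_of_subset (by
              intro x hx
              rcases Finset.mem_insert.mp hx with rfl | hx
              · exact huA'
              · rw [Finset.mem_singleton] at hx; subst hx; exact hvA')]
            congr 1
            rw [Finset.card_insert_of_notMem (by simpa using hne), Finset.card_singleton]
    have hu2 : (P.filter fun T => u ∈ T).card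
        ≤ 2 ^ (A'.card - (insert u (G.neighborSet u)).toFinset.card) :=
      count_contain G u A' (fun x hx => Set.mem_toFinset.mpr (by
        rcases Set.mem_insert_iff.mp hx with rfl | hx
        · exact huA
        · exact Or.inl hx))
    have hv2 : (P.filter fun T => v ∈ T).card
        ≤ 2 ^ (A'.card - (insert v (G.neighborSet v)).toFinset.card) :=
      count_contain G v A' (fun x hx => Set.mem_toFinset.mpr (by
        rcases Set.mem_insert_iff.mp hx with rfl | hx
        · exact hvA
        · exact Or.inr hx))
    calc P.card ≤ _ := Finset.card_le_card hcover
      _ ≤ (P.filter fun T => u ∉ T ∧ v ∉ T).card + ((P.filter fun T => u ∈ T)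
            ∪ (P.filter fun T => v ∈ T)).card := Finset.card_union_le _ _
      _ ≤ (P.filter fun T => u ∉ T ∧ v ∉ T).card + ((P.filter fun T => u ∈ T).card
            + (P.filter fun T => v ∈ T).card) :=
          Nat.add_le_add_left (Finset.card_union_le _ _) _
      _ ≤ _ := by omega
  calc sigmaNI G 0 ≤ P.card * sigmaNI (deleteVerts G A) 0 := stepA
    _ ≤ (2 ^ (A'.card - 2) + 2 ^ (A'.card - (insert u (G.neighborSet u)).toFinset.card)
          + 2 ^ (A'.card - (insert v (G.neighborSet v)).toFinset.card))
        * sigmaNI (deleteVerts G A) 0 := Nat.mul_le_mul_right _ stepB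
    _ = _ := congrArg _ (sigma_del_congr G hA)

set_option maxHeartbeats 2000000 in
theorem stmt17 {V : Type*} [Fintype V] (G : SimpleGraph V) {u v : V} (huv : G.Adj u v)
    (l mu mv : ℕ)
    (hl : l = (G.neighborSet u ∪ G.neighborSet v).ncard)
    (hmu : mu = (insert u (G.neighborSet u)).ncard)
    (hmv : mv = (insert v (G.neighborSet v)).ncard) :
    1 / ((2 : ℚ) ^ (l - 2) + 2 ^ (l - mu) + 2 ^ (l - mv) + 1) ≤
      (sigmaNI (deleteVerts G (insert v (G.neighborSet v) ∪ insert u (G.neighborSet u))) 0 : ℚ) /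
        sigmaNI G 0 ∧
    (sigmaNI (deleteVerts G (insert v (G.neighborSet v) ∪ insert u (G.neighborSet u))) 0 : ℚ) /
        sigmaNI G 0 ≤ 1 - (sigmaNI (deleteVerts G {v}) 0 : ℚ) / sigmaNI G 0 ∧
    1 / (3 * (2 : ℚ) ^ (l - 2) + 1) ≤
      (sigmaNI (deleteVerts G (insert v (G.neighborSet v) ∪ insert u (G.neighborSet u))) 0 : ℚ) /
        sigmaNI G 0 := by
  
  classical
  have hne : u ≠ v := G.ne_of_adj huv
  have hAeq : (insert v (G.neighborSet v) ∪ insert u (G.neighborSet u) : Set V)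
      = G.neighborSet u ∪ G.neighborSet v := by
    ext x
    simp only [Set.mem_union, Set.mem_insert_iff, SimpleGraph.mem_neighborSet]
    constructor
    · rintro ((rfl | h) | (rfl | h))
      · exact Or.inl huv
      · exact Or.inr h
      · exact Or.inr huv.symm
      · exact Or.inl h
    · rintro (h | h)
      · exact Or.inr (Or.inr h)
      · exact Or.inl (Or.inr h)
  have hrw : sigmaNI (deleteVerts G (insert v (G.neighborSet v) ∪ insert u (G.neighborSet u))) 0
      = sigmaNI (deleteVerts G (G.neighborSet u ∪ G.neighborSet v)) 0 := sigma_del_congr G hAeq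
  rw [hrw]
  have hl' : (G.neighborSet u ∪ G.neighborSet v).toFinset.card = l := by
    rw [hl, Set.ncard_eq_toFinset_card']
  have hmu' : (insert u (G.neighborSet u)).toFinset.card = mu := by
    rw [hmu, Set.ncard_eq_toFinset_card']
  have hmv' : (insert v (G.neighborSet v)).toFinset.card = mv := by
    rw [hmv, Set.ncard_eq_toFinset_card']
  have key2 : sigmaNI G 0 ≤
      (2 ^ ((G.neighborSet u ∪ G.neighborSet v).toFinset.card - 2)
        + 2 ^ ((G.neighborSet u ∪ G.neighborSet v).toFinset.card
            - (insert u (G.neighborSet u)).toFinset.card)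
        + 2 ^ ((G.neighborSet u ∪ G.neighborSet v).toFinset.card
            - (insert v (G.neighborSet v)).toFinset.card))
      * sigmaNI (deleteVerts G (G.neighborSet u ∪ G.neighborSet v)) 0 := key_lower G huv
  rw [hl', hmu', hmv'] at key2
  have key1 : sigmaNI (deleteVerts G (G.neighborSet u ∪ G.neighborSet v)) 0
      + sigmaNI (deleteVerts G ({v} : Set V)) 0 ≤ sigmaNI G 0 :=
    key_upper G v (G.neighborSet u ∪ G.neighborSet v) (Or.inl huv) Set.subset_union_right
  have hmu2 : 2 ≤ mu := by
    rw [hmu]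
    have h2 : ({u, v} : Set V).ncard = 2 := Set.ncard_pair hne
    rw [← h2]
    apply Set.ncard_le_ncard _ (Set.toFinite _)
    rintro x (rfl | hx)
    · exact Set.mem_insert _ _
    · rw [Set.mem_singleton_iff] at hx
      subst hx
      exact Or.inr huv
  have hmv2 : 2 ≤ mv := by
    rw [hmv]
    have h2 : ({v, u} : Set V).ncard = 2 := Set.ncard_pair hne.symm
    rw [← h2]
    apply Set.ncard_le_ncard _ (Set.toFinite _)
    rintro x (rfl | hx)
    · exact Set.mem_insert _ _
    · rw [Set.mem_singleton_iff] at hx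
      subst hx
      exact Or.inr huv.symm
  have hs0 : 0 < (sigmaNI G 0 : ℚ) := by exact_mod_cast sigma_pos G
  have ha0 : 0 < (sigmaNI (deleteVerts G (G.neighborSet u ∪ G.neighborSet v)) 0 : ℚ) := by
    exact_mod_cast sigma_pos _
  have key2q : (sigmaNI G 0 : ℚ) ≤
      ((2 : ℚ) ^ (l - 2) + 2 ^ (l - mu) + 2 ^ (l - mv)) *
        (sigmaNI (deleteVerts G (G.neighborSet u ∪ G.neighborSet v)) 0 : ℚ) := by
    exact_mod_cast key2
  have key1q : (sigmaNI (deleteVerts G (G.neighborSet u ∪ G.neighborSet v)) 0 : ℚ)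
      + (sigmaNI (deleteVerts G ({v} : Set V)) 0 : ℚ) ≤ (sigmaNI G 0 : ℚ) := by
    exact_mod_cast key1
  have hK0 : (0 : ℚ) < (2 : ℚ) ^ (l - 2) + 2 ^ (l - mu) + 2 ^ (l - mv) + 1 := by positivity
  have first : 1 / ((2 : ℚ) ^ (l - 2) + 2 ^ (l - mu) + 2 ^ (l - mv) + 1) ≤
      (sigmaNI (deleteVerts G (G.neighborSet u ∪ G.neighborSet v)) 0 : ℚ) / sigmaNI G 0 := by
    rw [div_le_div_iff₀ hK0 hs0]
    nlinarith [key2q, ha0.le]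
  refine ⟨first, ?_, ?_⟩
  · have h3 : (sigmaNI (deleteVerts G (G.neighborSet u ∪ G.neighborSet v)) 0 : ℚ) / sigmaNI G 0
        + (sigmaNI (deleteVerts G ({v} : Set V)) 0 : ℚ) / sigmaNI G 0 ≤ 1 := by
      rw [← add_div, div_le_one hs0]
      exact key1q
    linarith
  · refine le_trans (one_div_le_one_div_of_le hK0 ?_) first
    have h1 : (2 : ℚ) ^ (l - mu) ≤ (2 : ℚ) ^ (l - 2) :=
      pow_le_pow_right₀ (by norm_num) (Nat.sub_le_sub_left hmu2 l)
    have h2 : (2 : ℚ) ^ (l - mv) ≤ (2 : ℚ) ^ (l - 2) :=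
      pow_le_pow_right₀ (by norm_num) (Nat.sub_le_sub_left hmv2 l)
    linarith
end
end
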